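/- arXiv:0805.2368 — 7 statements merged into one kernel-verified Lean document; each statement's English description precedes it below -/
import Mathlib

section
/- Let (X,d) be a compact metric space and H a universal RKHS on X with kernel k (i.e., H is dense in C(X) in the sup norm). Let F be the unit ball of H. Then for Borel probability measures p, q on X, MMD[F,p,q] := sup_{f∈F} (E_{x∼p} f(x) − E_{y∼q} f(y)) equals 0 if and only if p = q. -/
open MeasureTheory
open scoped RealInnerProductSpace BigOperators

/-- For a universal RKHS `H` (continuously included in `C(X)` with dense
range) on a compact metric space `X`, the MMD over the unit ball of `H` vanishes iff
the two Borel probability measures coincide. -/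
theorem mmd_unit_ball_eq_zero_iff
    {X : Type*} [MetricSpace X] [CompactSpace X] [MeasurableSpace X] [BorelSpace X]
    {H : Type*} [NormedAddCommGroup H] [InnerProductSpace ℝ H] [CompleteSpace H]
    (ι : H →L[ℝ] C(X, ℝ)) (hdense : DenseRange ι)
    (p q : Measure X) [IsProbabilityMeasure p] [IsProbabilityMeasure q] :
    sSup {r : ℝ | ∃ f : H, ‖f‖ ≤ 1 ∧ r = (∫ x, ι f x ∂p) - ∫ x, ι f x ∂q} = 0 ↔ p = q := by
  set S := {r : ℝ | ∃ f : H, ‖f‖ ≤ 1 ∧ r = (∫ x, ι f x ∂p) - ∫ x, ι f x ∂q} with hS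
  have hint : ∀ (g : C(X, ℝ)) (μ : Measure X) [IsProbabilityMeasure μ],
      Integrable (fun x => g x) μ := by
    intro g μ _
    exact (map_continuous g).integrable_of_hasCompactSupport
      (HasCompactSupport.of_compactSpace _)
  have hbound : ∀ (g : C(X, ℝ)) (μ : Measure X) [IsProbabilityMeasure μ],
      |∫ x, g x ∂μ| ≤ ‖g‖ := by
    intro g μ _
    rw [← Real.norm_eq_abs]
    calc ‖∫ x, g x ∂μ‖ ≤ ‖g‖ * (μ Set.univ).toReal :=
          norm_integral_le_of_norm_le_const
            (Filter.Eventually.of_forall fun x => g.norm_coe_le_norm x)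
      _ = ‖g‖ := by simp
  constructor
  · intro hsup
    -- Bounded above
    have hbdd : BddAbove S := by
      refine ⟨2 * ‖ι‖, ?_⟩
      rintro r ⟨f, hf, rfl⟩
      have h1 := hbound (ι f) p
      have h2 := hbound (ι f) q
      have hιf : ‖ι f‖ ≤ ‖ι‖ := by
        calc ‖ι f‖ ≤ ‖ι‖ * ‖f‖ := ι.le_opNorm f
          _ ≤ ‖ι‖ * 1 := by gcongr
          _ = ‖ι‖ := mul_one _
      have := abs_sub (∫ x, ι f x ∂p) (∫ x, ι f x ∂q)
      calc (∫ x, ι f x ∂p) - ∫ x, ι f x ∂q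
          ≤ |∫ x, ι f x ∂p| + |∫ x, ι f x ∂q| := by
            exact (le_abs_self _).trans (abs_sub _ _)
        _ ≤ ‖ι f‖ + ‖ι f‖ := add_le_add h1 h2
        _ ≤ ‖ι‖ + ‖ι‖ := add_le_add hιf hιf
        _ = 2 * ‖ι‖ := by ring
    have hle : ∀ r ∈ S, r ≤ 0 := fun r hr => hsup ▸ le_csSup hbdd hr
    -- All f with norm ≤ 1 give equal integrals
    have hball : ∀ f : H, ‖f‖ ≤ 1 → (∫ x, ι f x ∂p) = ∫ x, ι f x ∂q := by
      intro f hf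
      have h1 : (∫ x, ι f x ∂p) - ∫ x, ι f x ∂q ≤ 0 := hle _ ⟨f, hf, rfl⟩
      have h2 : (∫ x, ι f x ∂q) - ∫ x, ι f x ∂p ≤ 0 := by
        refine hle _ ⟨-f, ?_, ?_⟩
        · simpa using hf
        · simp only [map_neg, ContinuousMap.neg_apply, integral_neg]; ring
      linarith
    -- All f in H give equal integrals
    have hH : ∀ f : H, (∫ x, ι f x ∂p) = ∫ x, ι f x ∂q := by
      intro f
      rcases eq_or_ne f 0 with rfl | hf0
      · simp
      · have hn : (0:ℝ) < ‖f‖ := norm_pos_iff.mpr hf0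
        have key := hball (‖f‖⁻¹ • f) (by
          rw [norm_smul, norm_inv, norm_norm]
          rw [inv_mul_cancel₀ hn.ne'])
        have hsm : ∀ x, ι (‖f‖⁻¹ • f) x = ‖f‖⁻¹ * ι f x := by
          intro x
          rw [ContinuousLinearMap.map_smul]
          simp
        simp_rw [hsm] at key
        rw [integral_const_mul, integral_const_mul] at key
        exact mul_left_cancel₀ (inv_ne_zero hn.ne') key
    -- By density, all continuous functions give equal integrals
    have hC : ∀ g : C(X, ℝ), (∫ x, g x ∂p) = ∫ x, g x ∂q := by
      intro g
      have hdiff : ∀ ε : ℝ, 0 < ε → |(∫ x, g x ∂p) - ∫ x, g x ∂q| ≤ 2 * ε := by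
        intro ε hε
        obtain ⟨b, ⟨f, rfl⟩, hb⟩ := Metric.mem_closure_iff.mp (hdense g) ε hε
        have hpt : ∀ x, |g x - ι f x| ≤ ε := by
          intro x
          have := ContinuousMap.norm_coe_le_norm (g - ι f) x
          have hd : ‖g - ι f‖ ≤ ε := by
            rw [← dist_eq_norm]; exact le_of_lt hb
          simpa [Real.norm_eq_abs] using this.trans hd
        have hI : ∀ (μ : Measure X) [IsProbabilityMeasure μ],
            |(∫ x, g x ∂μ) - ∫ x, ι f x ∂μ| ≤ ε := by
          intro μ _
          rw [← integral_sub (hint g μ) (hint (ι f) μ), ← Real.norm_eq_abs]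
          calc ‖∫ x, (g x - ι f x) ∂μ‖ ≤ ε * (μ Set.univ).toReal := by
                refine norm_integral_le_of_norm_le_const ?_
                exact Filter.Eventually.of_forall fun x => by
                  simpa [Real.norm_eq_abs] using hpt x
            _ = ε := by simp
        calc |(∫ x, g x ∂p) - ∫ x, g x ∂q|
            = |((∫ x, g x ∂p) - ∫ x, ι f x ∂p) - ((∫ x, g x ∂q) - ∫ x, ι f x ∂q)| := by
              rw [hH f]; ring_nf
          _ ≤ |(∫ x, g x ∂p) - ∫ x, ι f x ∂p| + |(∫ x, g x ∂q) - ∫ x, ι f x ∂q| :=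
              abs_sub _ _
          _ ≤ ε + ε := add_le_add (hI p) (hI q)
          _ = 2 * ε := by ring
      have : |(∫ x, g x ∂p) - ∫ x, g x ∂q| ≤ 0 := by
        by_contra h
        push_neg at h
        have := hdiff (|(∫ x, g x ∂p) - ∫ x, g x ∂q| / 4) (by linarith)
        linarith
      have := abs_nonneg ((∫ x, g x ∂p) - ∫ x, g x ∂q)
      have habs : |(∫ x, g x ∂p) - ∫ x, g x ∂q| = 0 := le_antisymm ‹_› ‹_›
      have := abs_eq_zero.mp habs
      linarith
    -- conclude measures equal via bounded continuous functions
    refine ext_of_forall_lintegral_eq_of_IsFiniteMeasure ?_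
    intro f
    have hfc : Continuous fun x => ((f x : ℝ)) := by
      exact NNReal.continuous_coe.comp f.continuous
    have h := hC ⟨fun x => (f x : ℝ), hfc⟩
    have hip : Integrable (fun x => ((f x : ℝ))) p := hint ⟨_, hfc⟩ p
    have hiq : Integrable (fun x => ((f x : ℝ))) q := hint ⟨_, hfc⟩ q
    rw [lintegral_coe_eq_integral f hip, lintegral_coe_eq_integral f hiq]
    simp only [ContinuousMap.coe_mk] at h
    rw [h]
  · rintro rfl
    have : S = {0} := by
      ext r
      simp only [hS, Set.mem_setOf_eq, Set.mem_singleton_iff]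
      constructor
      · rintro ⟨f, _, rfl⟩; ring
      · rintro rfl; exact ⟨0, by simp⟩
    rw [this, csSup_singleton]
end

section
/- For i.i.d. samples Z = (z_1,…,z_m) with z_i = (x_i, y_i), x_i ∼ p, y_i ∼ q, the statistic MMD_u²[X,Y] := (1/(m(m−1))) Σ_{i≠j} h(z_i,z_j), where h(z,z') := k(x,x') + k(y,y') − k(x,y') − k(x',y), is an unbiased estimator of MMD²[F,p,q] = E k(x,x') − 2E k(x,y) + E k(y,y'). -/
open MeasureTheory
open scoped RealInnerProductSpace BigOperators

/-- The quadratic-time statistic `MMD_u²` is an unbiased estimator of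
`E k(x,x') - 2 E k(x,y) + E k(y,y')`, for i.i.d. pairs `z_i = (x_i, y_i)` with
`x_i ∼ p`, `y_i ∼ q`. -/
theorem mmd_u_sq_unbiased
    {X : Type*} [MeasurableSpace X] (k : X → X → ℝ)
    (hk : Measurable fun w : X × X => k w.1 w.2)
    (p q : Measure X) [IsProbabilityMeasure p] [IsProbabilityMeasure q]
    (μ : Measure (X × X)) [IsProbabilityMeasure μ]
    (hfst : μ.map Prod.fst = p) (hsnd : μ.map Prod.snd = q)
    (hpp : Integrable (fun w : X × X => k w.1 w.2) (p.prod p))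
    (hpq : Integrable (fun w : X × X => k w.1 w.2) (p.prod q))
    (hqq : Integrable (fun w : X × X => k w.1 w.2) (q.prod q))
    (m : ℕ) (hm : 2 ≤ m) :
    (∫ z : Fin m → X × X,
        (1 / ((m : ℝ) * ((m : ℝ) - 1))) *
          ∑ i : Fin m, ∑ j : Fin m,
            if i ≠ j then
              k (z i).1 (z j).1 + k (z i).2 (z j).2
                - k (z i).1 (z j).2 - k (z j).1 (z i).2
            else 0
        ∂(Measure.pi fun _ => μ))
      = (∫ w, k w.1 w.2 ∂p.prod p) - 2 * (∫ w, k w.1 w.2 ∂p.prod q)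
        + ∫ w, k w.1 w.2 ∂q.prod q := by
  classical
  set π : Measure (Fin m → X × X) := Measure.pi fun _ => μ with hπdef
  set h : (X × X) × (X × X) → ℝ := fun w =>
    k w.1.1 w.2.1 + k w.1.2 w.2.2 - k w.1.1 w.2.2 - k w.2.1 w.1.2 with hh
  have hmeas_h : Measurable h := by
    apply Measurable.sub
    apply Measurable.sub
    apply Measurable.add
    · exact hk.comp (measurable_fst.fst.prodMk measurable_snd.fst)
    · exact hk.comp (measurable_fst.snd.prodMk measurable_snd.snd)
    · exact hk.comp (measurable_fst.fst.prodMk measurable_snd.snd)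
    · exact hk.comp (measurable_snd.fst.prodMk measurable_fst.snd)
  -- marginal map identities
  have hmap_ff : (μ.prod μ).map (fun w : (X × X) × (X × X) => (w.1.1, w.2.1)) = p.prod p := by
    have : (fun w : (X × X) × (X × X) => (w.1.1, w.2.1))
        = Prod.map (Prod.fst : X × X → X) (Prod.fst : X × X → X) := rfl
    rw [this, ← Measure.map_prod_map _ _ measurable_fst measurable_fst, hfst]
  have hmap_ss : (μ.prod μ).map (fun w : (X × X) × (X × X) => (w.1.2, w.2.2)) = q.prod q := by
    have : (fun w : (X × X) × (X × X) => (w.1.2, w.2.2))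
        = Prod.map (Prod.snd : X × X → X) (Prod.snd : X × X → X) := rfl
    rw [this, ← Measure.map_prod_map _ _ measurable_snd measurable_snd, hsnd]
  have hmap_fs : (μ.prod μ).map (fun w : (X × X) × (X × X) => (w.1.1, w.2.2)) = p.prod q := by
    have : (fun w : (X × X) × (X × X) => (w.1.1, w.2.2))
        = Prod.map (Prod.fst : X × X → X) (Prod.snd : X × X → X) := rfl
    rw [this, ← Measure.map_prod_map _ _ measurable_fst measurable_snd, hfst, hsnd]
  -- the four integrals over μ ⊗ μ
  have Ipp : ∫ w : (X × X) × (X × X), k w.1.1 w.2.1 ∂(μ.prod μ)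
      = ∫ w, k w.1 w.2 ∂p.prod p := by
    rw [← hmap_ff, integral_map (by fun_prop) hk.aestronglyMeasurable]
  have Iqq : ∫ w : (X × X) × (X × X), k w.1.2 w.2.2 ∂(μ.prod μ)
      = ∫ w, k w.1 w.2 ∂q.prod q := by
    rw [← hmap_ss, integral_map (by fun_prop) hk.aestronglyMeasurable]
  have Ipq : ∫ w : (X × X) × (X × X), k w.1.1 w.2.2 ∂(μ.prod μ)
      = ∫ w, k w.1 w.2 ∂p.prod q := by
    rw [← hmap_fs, integral_map (by fun_prop) hk.aestronglyMeasurable]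
  have hswap : (μ.prod μ).map Prod.swap = μ.prod μ := Measure.prod_swap
  have Iqp : ∫ w : (X × X) × (X × X), k w.2.1 w.1.2 ∂(μ.prod μ)
      = ∫ w, k w.1 w.2 ∂p.prod q := by
    have h1 := integral_map (μ := μ.prod μ) (φ := Prod.swap)
      (f := fun v : (X × X) × (X × X) => k v.1.1 v.2.2) measurable_swap.aemeasurable
      ((hk.comp (measurable_fst.fst.prodMk measurable_snd.snd)).aestronglyMeasurable)
    rw [hswap] at h1
    rw [← Ipq]
    exact h1.symm
  -- integrability over μ ⊗ μ
  have ipp : Integrable (fun w : (X × X) × (X × X) => k w.1.1 w.2.1) (μ.prod μ) := by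
    have := hpp; rw [← hmap_ff] at this
    exact (integrable_map_measure hk.aestronglyMeasurable (by fun_prop)).mp this
  have iqq : Integrable (fun w : (X × X) × (X × X) => k w.1.2 w.2.2) (μ.prod μ) := by
    have := hqq; rw [← hmap_ss] at this
    exact (integrable_map_measure hk.aestronglyMeasurable (by fun_prop)).mp this
  have ipq : Integrable (fun w : (X × X) × (X × X) => k w.1.1 w.2.2) (μ.prod μ) := by
    have := hpq; rw [← hmap_fs] at this
    exact (integrable_map_measure hk.aestronglyMeasurable (by fun_prop)).mp this
  have iqp : Integrable (fun w : (X × X) × (X × X) => k w.2.1 w.1.2) (μ.prod μ) := by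
    have := ipq; rw [← hswap] at this
    exact (integrable_map_measure
      ((hk.comp (measurable_fst.fst.prodMk measurable_snd.snd)).aestronglyMeasurable)
      (by fun_prop)).mp this
  have iA : Integrable (fun w : (X × X) × (X × X) =>
      k w.1.1 w.2.1 + k w.1.2 w.2.2) (μ.prod μ) := ipp.add iqq
  have iB : Integrable (fun w : (X × X) × (X × X) =>
      k w.1.1 w.2.1 + k w.1.2 w.2.2 - k w.1.1 w.2.2) (μ.prod μ) := iA.sub ipq
  have ih : Integrable h (μ.prod μ) := iB.sub iqp
  have hI : ∫ w, h w ∂(μ.prod μ)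
      = (∫ w, k w.1 w.2 ∂p.prod p) - 2 * (∫ w, k w.1 w.2 ∂p.prod q)
        + ∫ w, k w.1 w.2 ∂q.prod q := by
    simp only [hh]
    rw [integral_sub iB iqp, integral_sub iA ipq,
      integral_add ipp iqq, Ipp, Iqq, Ipq, Iqp]
    ring
  -- pair marginal of the pi measure
  have hpair : ∀ i j : Fin m, i ≠ j →
      π.map (fun z => (z i, z j)) = μ.prod μ := by
    intro i j hij
    refine (Measure.prod_eq fun s t hs ht => ?_).symm
    rw [Measure.map_apply (by fun_prop) (hs.prod ht)]
    have hset : (fun z : Fin m → X × X => (z i, z j)) ⁻¹' (s ×ˢ t)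
        = Set.pi Set.univ (fun l => if l = i then s else if l = j then t else Set.univ) := by
      ext z
      simp only [Set.mem_preimage, Set.mem_prod, Set.mem_pi, Set.mem_univ, true_implies]
      constructor
      · rintro ⟨h1, h2⟩ l
        split_ifs with hl1 hl2
        · subst hl1; exact h1
        · subst hl2; exact h2
        · trivial
      · intro hz
        refine ⟨?_, ?_⟩
        · have := hz i; simpa using this
        · have := hz j
          rw [if_neg (Ne.symm hij), if_pos rfl] at this
          exact this
    rw [hset, hπdef, Measure.pi_pi]
    have hval : ∀ l : Fin m,
        μ (if l = i then s else if l = j then t else Set.univ)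
          = if l = i then μ s else if l = j then μ t else 1 := by
      intro l; split_ifs <;> simp
    simp_rw [hval]
    rw [← Finset.mul_prod_erase Finset.univ _ (Finset.mem_univ i), if_pos rfl]
    rw [← Finset.mul_prod_erase _ _
      (Finset.mem_erase.mpr ⟨Ne.symm hij, Finset.mem_univ j⟩),
      if_neg (Ne.symm hij), if_pos rfl]
    rw [Finset.prod_eq_one, mul_one]
    intro l hl
    rw [Finset.mem_erase, Finset.mem_erase] at hl
    rw [if_neg hl.2.1, if_neg hl.1]
  have key : ∀ i j : Fin m, i ≠ j →
      ∫ z, h (z i, z j) ∂π = ∫ w, h w ∂(μ.prod μ) := by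
    intro i j hij
    rw [← hpair i j hij, integral_map (by fun_prop) hmeas_h.aestronglyMeasurable]
  have keyInt : ∀ i j : Fin m, i ≠ j → Integrable (fun z => h (z i, z j)) π := by
    intro i j hij
    have := ih; rw [← hpair i j hij] at this
    exact (integrable_map_measure hmeas_h.aestronglyMeasurable (by fun_prop)).mp this
  -- put it together
  have hterm : ∀ (i j : Fin m), Integrable
      (fun z : Fin m → X × X => if i ≠ j then h (z i, z j) else 0) π := by
    intro i j
    by_cases hij : i = j
    · simp [hij]
    · simpa [hij] using keyInt i j hij
  have hrw : (fun z : Fin m → X × X =>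
      (1 / ((m : ℝ) * ((m : ℝ) - 1))) *
        ∑ i : Fin m, ∑ j : Fin m,
          if i ≠ j then
            k (z i).1 (z j).1 + k (z i).2 (z j).2
              - k (z i).1 (z j).2 - k (z j).1 (z i).2
          else 0)
      = fun z : Fin m → X × X =>
        (1 / ((m : ℝ) * ((m : ℝ) - 1))) *
          ∑ i : Fin m, ∑ j : Fin m, if i ≠ j then h (z i, z j) else 0 := rfl
  rw [hrw, integral_const_mul,
    integral_finset_sum _ (fun i _ => integrable_finset_sum _ (fun j _ => hterm i j))]
  have : ∀ i : Fin m,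
      (∫ z, ∑ j : Fin m, (if i ≠ j then h (z i, z j) else 0) ∂π)
        = ((m : ℝ) - 1) * ∫ w, h w ∂(μ.prod μ) := by
    intro i
    rw [integral_finset_sum _ (fun j _ => hterm i j)]
    have hsum : ∀ j : Fin m,
        (∫ z, (if i ≠ j then h (z i, z j) else 0) ∂π)
          = if i ≠ j then ∫ w, h w ∂(μ.prod μ) else 0 := by
      intro j
      by_cases hij : i = j
      · simp [hij]
      · simp only [if_pos hij, hij, ne_eq, not_false_eq_true, if_true]
        exact key i j hij
    simp_rw [hsum]
    have : ∀ j : Fin m, (if i ≠ j then ∫ w, h w ∂(μ.prod μ) else 0)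
        = (∫ w, h w ∂(μ.prod μ)) - (if j = i then ∫ w, h w ∂(μ.prod μ) else 0) := by
      intro j
      by_cases hij : i = j <;> simp [hij, eq_comm]
    simp_rw [this]
    rw [Finset.sum_sub_distrib, Finset.sum_const, Finset.sum_ite_eq' Finset.univ i,
      if_pos (Finset.mem_univ i), Finset.card_univ, Fintype.card_fin, nsmul_eq_mul]
    ring
  simp_rw [this]
  rw [Finset.sum_const, Finset.card_univ, Fintype.card_fin, nsmul_eq_mul, hI]
  have hm0 : (m : ℝ) ≠ 0 := by positivity
  have hm1 : (m : ℝ) - 1 ≠ 0 := by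
    have : (2 : ℝ) ≤ (m : ℝ) := by exact_mod_cast hm
    linarith
  field_simp
end

section
/- (McDiarmid bound for the biased MMD) Let k be a kernel with 0 ≤ k(x,y) ≤ K, F the unit ball of the associated RKHS, X an m-sample from p and Y an n-sample from q, all independent. Define Δ(p,q,X,Y) := sup_{f∈F} |E_p f − E_q f − (1/m)Σ f(x_i) + (1/n)Σ f(y_j)|. Then changing a single x_i changes Δ by at most 2√K/m, and changing a single y_j changes Δ by at most 2√K/n; consequently, by McDiarmid's inequality, Pr{Δ − E[Δ] > ε} ≤ exp(−ε² m n / (2K(m+n))). -/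
open Real MeasureTheory
open scoped RealInnerProductSpace BigOperators


lemma keyF_aux {p : ℝ} (hp0 : 0 ≤ p) (hp1 : p ≤ 1) :
    ∀ u : ℝ, 0 ≤ u ^ 2 / 8 + p * u - Real.log (1 - p + p * Real.exp u) := by
  have hg : ∀ u : ℝ, 0 < 1 - p + p * exp u := by
    intro u
    rcases lt_or_eq_of_le hp1 with h | h
    · have : 0 ≤ p * exp u := mul_nonneg hp0 (exp_pos u).le
      linarith
    · subst h; simpa using exp_pos u
  set g : ℝ → ℝ := fun u => 1 - p + p * exp u with hgdef
  set F : ℝ → ℝ := fun u => u ^ 2 / 8 + p * u - Real.log (g u) with hFdef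
  set F' : ℝ → ℝ := fun u => u / 4 + p - p * exp u / g u with hF'def
  have hgd : ∀ u, HasDerivAt g (p * exp u) u := by
    intro u
    exact ((Real.hasDerivAt_exp u).const_mul p).const_add (1 - p)
  have hFd : ∀ u, HasDerivAt F (F' u) u := by
    intro u
    have h1 : HasDerivAt (fun u : ℝ => u ^ 2 / 8) (u / 4) u := by
      simpa [mul_comm] using (hasDerivAt_pow 2 u).div_const 8 |>.congr_deriv (by ring)
    have h2 : HasDerivAt (fun u : ℝ => p * u) p u := by
      simpa using (hasDerivAt_id u).const_mul p
    have h3 : HasDerivAt (fun u => Real.log (g u)) (p * exp u / g u) u :=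
      (hgd u).log (hg u).ne'
    exact (h1.add h2).sub h3
  have hF'd : ∀ u, HasDerivAt F' (1 / 4 - (p * exp u * g u - p * exp u * (p * exp u)) / (g u) ^ 2) u := by
    intro u
    have h1 : HasDerivAt (fun u : ℝ => u / 4 + p) (1 / 4) u := by
      simpa using (hasDerivAt_id u).div_const 4 |>.add_const p
    have h2 : HasDerivAt (fun u => p * exp u / g u)
        ((p * exp u * g u - p * exp u * (p * exp u)) / (g u) ^ 2) u := by
      have := ((Real.hasDerivAt_exp u).const_mul p).div (hgd u) (hg u).ne'
      exact this
    exact h1.sub h2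
  have hF'mono : Monotone F' := by
    apply monotone_of_deriv_nonneg
    · exact fun u => (hF'd u).differentiableAt
    · intro u
      rw [(hF'd u).deriv]
      have hgu := hg u
      have hABpos : 0 ≤ p * exp u := mul_nonneg hp0 (exp_pos u).le
      have hgeq : g u - p * exp u = 1 - p := by simp [hgdef]
      have key : (p * exp u * g u - p * exp u * (p * exp u)) / (g u) ^ 2 ≤ 1 / 4 := by
        rw [div_le_iff₀ (by positivity)]
        nlinarith [sq_nonneg (g u - 2 * (p * exp u)), hgu]
      linarith
  have hF'0 : F' 0 = 0 := by
    simp [hF'def, hgdef]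
  have hF0 : F 0 = 0 := by
    simp [hFdef, hgdef]
  intro u
  rcases le_total 0 u with h | h
  · have hmono : MonotoneOn F (Set.Ici 0) := by
      apply monotoneOn_of_deriv_nonneg (convex_Ici 0)
      · exact (fun x _ => (hFd x).differentiableAt.continuousAt.continuousWithinAt)
      · exact fun x _ => (hFd x).differentiableAt.differentiableWithinAt
      · intro x hx
        rw [interior_Ici] at hx
        rw [(hFd x).deriv]
        have := hF'mono (le_of_lt hx)
        rw [hF'0] at this; exact this
    have := hmono (Set.self_mem_Ici) (Set.mem_Ici.mpr h) h
    rw [hF0] at this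
    simpa [hFdef] using this
  · have hanti : AntitoneOn F (Set.Iic 0) := by
      apply antitoneOn_of_deriv_nonpos (convex_Iic 0)
      · exact (fun x _ => (hFd x).differentiableAt.continuousAt.continuousWithinAt)
      · exact fun x _ => (hFd x).differentiableAt.differentiableWithinAt
      · intro x hx
        rw [interior_Iic] at hx
        rw [(hFd x).deriv]
        have := hF'mono (le_of_lt hx)
        rw [hF'0] at this; exact this
    have := hanti (Set.mem_Iic.mpr h) (Set.self_mem_Iic) h
    rw [hF0] at this
    simpa [hFdef] using this

lemma core_ineq {p : ℝ} (hp0 : 0 ≤ p) (hp1 : p ≤ 1) (s : ℝ) :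
    (1 - p) * Real.exp (-p * s) + p * Real.exp ((1 - p) * s) ≤ Real.exp (s ^ 2 / 8) := by
  have hg : ∀ u : ℝ, 0 < 1 - p + p * exp u := by
    intro u
    rcases lt_or_eq_of_le hp1 with h | h
    · have : 0 ≤ p * exp u := mul_nonneg hp0 (exp_pos u).le
      linarith
    · subst h; simpa using exp_pos u
  have keyF := keyF_aux hp0 hp1
  have hlhs : (1 - p) * exp (-p * s) + p * exp ((1 - p) * s)
      = exp (-(p*s)) * (1 - p + p * exp s) := by
    have h1 : exp (-p*s) * exp s = exp ((1-p)*s) := by rw [← exp_add]; ring_nf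
    have h2 : (-(p*s)) = -p*s := by ring
    rw [mul_add, h2, ← h1]; ring
  rw [hlhs]
  have hlog : Real.log (1 - p + p * exp s) ≤ s ^ 2 / 8 + p * s := by
    have := keyF s; linarith
  have := Real.log_le_iff_le_exp (hg s) |>.mp hlog
  calc exp (-(p*s)) * (1 - p + p * exp s) ≤ exp (-(p*s)) * exp (s^2/8 + p*s) := by
        exact mul_le_mul_of_nonneg_left this (exp_pos _).le
    _ = exp (s^2/8) := by rw [← exp_add]; ring_nf

lemma bounded_integrable {Y : Type*} [MeasurableSpace Y] (ν : Measure Y) [IsProbabilityMeasure ν]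
    (h : Y → ℝ) (hm : AEStronglyMeasurable h ν) (B : ℝ) (hB : ∀ y, |h y| ≤ B) :
    Integrable h ν :=
  ⟨hm, HasFiniteIntegral.of_bounded (C := B) (Filter.Eventually.of_forall hB)⟩

lemma hoeffding_step {Y : Type*} [MeasurableSpace Y] (ν : Measure Y) [IsProbabilityMeasure ν]
    (h : Y → ℝ) (hmeas : AEStronglyMeasurable h ν) (c : ℝ)
    (hc : ∀ y y', h y - h y' ≤ c) (t : ℝ) :
    ∫ y, exp (t * h y) ∂ν ≤ exp (t * (∫ y, h y ∂ν) + t ^ 2 * c ^ 2 / 8) := by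
  have hY : Nonempty Y := by
    by_contra hne
    rw [not_nonempty_iff] at hne
    have : (ν Set.univ) = 1 := measure_univ
    simp [Set.univ_eq_empty_iff.mpr hne] at this
  obtain ⟨y₀⟩ := id hY
  have hc0 : 0 ≤ c := by simpa using hc y₀ y₀
  -- integrability of h
  have hbd : ∀ y, ‖h y‖ ≤ |h y₀| + c := by
    intro y
    have h1 := hc y y₀
    have h2 := hc y₀ y
    rw [Real.norm_eq_abs, abs_le]
    cases abs_le.mp (le_refl |h y₀|) with
    | intro l r => constructor <;> linarith [neg_abs_le (h y₀), le_abs_self (h y₀)]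
  have hint : Integrable h ν :=
    ⟨hmeas, HasFiniteIntegral.of_bounded (C := |h y₀| + c) (Filter.Eventually.of_forall hbd)⟩
  set M : ℝ := ∫ y, h y ∂ν with hM
  -- bounds via infimum
  have hbdd : BddBelow (Set.range h) := ⟨h y₀ - c, by rintro _ ⟨y, rfl⟩; linarith [hc y₀ y]⟩
  set a : ℝ := ⨅ y, h y with ha
  have h_ge : ∀ y, a ≤ h y := fun y => ciInf_le hbdd y
  have h_le : ∀ y, h y ≤ a + c := by
    intro y
    have : h y - c ≤ a := le_ciInf (fun y' => by linarith [hc y y'])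
    linarith
  have hMa : a ≤ M := by
    have : ∫ _, a ∂ν ≤ ∫ y, h y ∂ν := integral_mono (integrable_const a) hint h_ge
    simpa using this
  have hMb : M ≤ a + c := by
    have : ∫ y, h y ∂ν ≤ ∫ _, a + c ∂ν := integral_mono hint (integrable_const _) h_le
    simpa using this
  rcases eq_or_lt_of_le hc0 with hceq | hcpos
  · -- c = 0 : h is constant
    have hconst : ∀ y, h y = h y₀ := by
      intro y; have := hc y y₀; have := hc y₀ y; linarith [hceq]
    have h1 : ∫ y, exp (t * h y) ∂ν = exp (t * h y₀) := by
      rw [show (fun y => exp (t * h y)) = fun _ => exp (t * h y₀) by funext y; rw [hconst y]]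
      simp
    have h2 : M = h y₀ := by
      rw [hM, show h = fun _ => h y₀ from funext hconst]; simp
    rw [h1, h2, ← hceq]
    simp
  -- main case c > 0
  set α : ℝ := (exp (t * (a + c)) - exp (t * a)) / c with hα
  set β : ℝ := ((a + c) * exp (t * a) - a * exp (t * (a + c))) / c with hβ
  have hptwise : ∀ y, exp (t * h y) ≤ α * h y + β := by
    intro y
    have hw1 : 0 ≤ (a + c - h y) / c := div_nonneg (by linarith [h_le y]) hc0
    have hw2 : 0 ≤ (h y - a) / c := div_nonneg (by linarith [h_ge y]) hc0
    have hsum : (a + c - h y) / c + (h y - a) / c = 1 := by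
      rw [← add_div, div_eq_one_iff_eq hcpos.ne']; ring
    have hconv := convexOn_exp.2 (Set.mem_univ (t * a)) (Set.mem_univ (t * (a + c)))
      hw1 hw2 hsum
    have harg : ((a + c - h y) / c) • (t * a) + ((h y - a) / c) • (t * (a + c)) = t * h y := by
      simp only [smul_eq_mul]; field_simp; ring
    rw [harg] at hconv
    calc exp (t * h y) ≤ (a + c - h y) / c * exp (t * a) + (h y - a) / c * exp (t * (a + c)) :=
          hconv
      _ = α * h y + β := by rw [hα, hβ]; field_simp; ring
  have hintexp : Integrable (fun y => exp (t * h y)) ν := by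
    refine ⟨?_, ?_⟩
    · exact (Real.continuous_exp.comp_aestronglyMeasurable (hmeas.const_mul t))
    · apply HasFiniteIntegral.of_bounded (C := exp (|t| * (|a| + c)))
      apply Filter.Eventually.of_forall
      intro y
      rw [Real.norm_eq_abs, abs_of_pos (exp_pos _)]
      apply exp_le_exp.mpr
      have h1 : |h y| ≤ |a| + c := by
        rw [abs_le]; constructor
        · linarith [h_ge y, neg_abs_le a]
        · linarith [h_le y, le_abs_self a]
      calc t * h y ≤ |t * h y| := le_abs_self _
        _ = |t| * |h y| := abs_mul t (h y)
        _ ≤ |t| * (|a| + c) := by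
            exact mul_le_mul_of_nonneg_left h1 (abs_nonneg t)
  have hintline : Integrable (fun y => α * h y + β) ν :=
    (hint.const_mul α).add (integrable_const β)
  have hI : ∫ y, exp (t * h y) ∂ν ≤ α * M + β := by
    calc ∫ y, exp (t * h y) ∂ν ≤ ∫ y, α * h y + β ∂ν :=
          integral_mono hintexp hintline hptwise
      _ = α * M + β := by
          rw [integral_add (hint.const_mul α) (integrable_const β), integral_const_mul]
          simp [hM]
  refine hI.trans ?_
  -- now the algebraic step with core_ineq
  set p' : ℝ := (M - a) / c with hp'
  have hp'0 : 0 ≤ p' := div_nonneg (by linarith) hc0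
  have hp'1 : p' ≤ 1 := by
    rw [hp', div_le_one hcpos]; linarith
  have hcore := core_ineq hp'0 hp'1 (t * c)
  have hrw : α * M + β = exp (t * M) * ((1 - p') * exp (-p' * (t * c)) + p' * exp ((1 - p') * (t * c))) := by
    have e1 : exp (t * M) * exp (-p' * (t * c)) = exp (t * a) := by
      rw [← exp_add]; congr 1; rw [hp']; field_simp; ring
    have e2 : exp (t * M) * exp ((1 - p') * (t * c)) = exp (t * (a + c)) := by
      rw [← exp_add]; congr 1; rw [hp']; field_simp; ring
    have h1p : 1 - p' = (a + c - M) / c := by rw [hp']; field_simp; ring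
    rw [mul_add,
      show exp (t*M) * ((1-p') * exp (-p'*(t*c))) = (1-p')*(exp (t*M) * exp (-p'*(t*c))) from by ring,
      show exp (t*M) * (p' * exp ((1-p')*(t*c))) = p'*(exp (t*M) * exp ((1-p')*(t*c))) from by ring,
      e1, e2, h1p, hα, hβ, hp']
    field_simp
    ring
  rw [hrw]
  calc exp (t * M) * ((1 - p') * exp (-p' * (t * c)) + p' * exp ((1 - p') * (t * c)))
      ≤ exp (t * M) * exp ((t * c) ^ 2 / 8) :=
        mul_le_mul_of_nonneg_left hcore (exp_pos _).le
    _ = exp (t * M + t ^ 2 * c ^ 2 / 8) := by rw [← exp_add]; ring_nf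

lemma pi_mgf {X : Type*} [MeasurableSpace X] (μ : Measure X) [IsProbabilityMeasure μ] :
    ∀ (N : ℕ) (f : (Fin N → X) → ℝ), StronglyMeasurable f → ∀ (B : ℝ),
      (∀ xs, |f xs| ≤ B) → ∀ (c : ℝ),
      (∀ (xs xs' : Fin N → X) (i : Fin N), (∀ j, j ≠ i → xs j = xs' j) → f xs - f xs' ≤ c) →
      ∀ (t : ℝ),
      ∫ xs, exp (t * f xs) ∂(Measure.pi fun _ : Fin N => μ)
        ≤ exp (t * (∫ xs, f xs ∂(Measure.pi fun _ : Fin N => μ)) + N * (t ^ 2 * c ^ 2 / 8)) := by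
  intro N
  induction N with
  | zero =>
    intro f hf B hB c hc t
    have hconst : ∀ xs : Fin 0 → X, f xs = f (fun i => i.elim0) := by
      intro xs; congr 1; funext i; exact i.elim0
    have h1 : ∫ xs, exp (t * f xs) ∂(Measure.pi fun _ : Fin 0 => μ)
        = exp (t * f (fun i => i.elim0)) := by
      rw [show (fun xs => exp (t * f xs)) = fun _ => exp (t * f (fun i => i.elim0)) by
        funext xs; rw [hconst xs]]
      simp
    have h2 : ∫ xs, f xs ∂(Measure.pi fun _ : Fin 0 => μ) = f (fun i => i.elim0) := by
      rw [show (fun xs => f xs) = fun _ => f (fun i => i.elim0) from funext hconst]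
      simp
    rw [h1, h2]
    simp
  | succ N ih =>
    intro f hf B hB c hc t
    haveI hX : Nonempty X := by
      by_contra hne
      rw [not_nonempty_iff] at hne
      have : (μ Set.univ) = 1 := measure_univ
      simp [Set.univ_eq_empty_iff.mpr hne] at this
    set T := MeasurableEquiv.piFinSuccAbove (fun _ : Fin (N+1) => X) 0 with hT
    have hmp : MeasurePreserving T (Measure.pi fun _ : Fin (N+1) => μ)
        (μ.prod (Measure.pi fun _ : Fin N => μ)) :=
      measurePreserving_piFinSuccAbove (fun _ : Fin (N+1) => μ) 0
    set F : X × (Fin N → X) → ℝ := fun z => f (T.symm z) with hFdef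
    have hFsm : StronglyMeasurable F := hf.comp_measurable T.symm.measurable
    have hFB : ∀ z, |F z| ≤ B := fun z => hB _
    have hc0 : 0 ≤ c := by
      simpa using hc (fun _ => Classical.arbitrary X) (fun _ => Classical.arbitrary X) 0
        (fun j _ => rfl)
    have hTs : ∀ (x : X) (xs : Fin N → X), T.symm (x, xs) = Fin.insertNth 0 x xs := by
      intro x xs; rfl
    have hdiff0 : ∀ (x x' : X) (xs : Fin N → X), F (x, xs) - F (x', xs) ≤ c := by
      intro x x' xs
      apply hc _ _ 0
      intro j hj
      obtain ⟨k, rfl⟩ := Fin.exists_succAbove_eq hj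
      rw [hTs, hTs, Fin.insertNth_apply_succAbove, Fin.insertNth_apply_succAbove]
    set g : (Fin N → X) → ℝ := fun xs => ∫ x, F (x, xs) ∂μ with hgdef
    have hgsm : StronglyMeasurable g := hFsm.integral_prod_left'
    have hgB : ∀ xs, |g xs| ≤ B := by
      intro xs
      have := norm_integral_le_of_norm_le_const (μ := μ) (C := B) (f := fun x => F (x, xs))
        (Filter.Eventually.of_forall fun x => by rw [Real.norm_eq_abs]; exact hFB _)
      simpa using this
    have hFint : ∀ xs, Integrable (fun x => F (x, xs)) μ := fun xs =>
      bounded_integrable μ _ ((hFsm.comp_measurable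
        (measurable_id.prodMk measurable_const)).aestronglyMeasurable) B (fun x => hFB _)
    have hgc : ∀ (xs xs' : Fin N → X) (i : Fin N), (∀ j, j ≠ i → xs j = xs' j) →
        g xs - g xs' ≤ c := by
      intro xs xs' i hij
      have hpt : ∀ x, F (x, xs) - F (x, xs') ≤ c := by
        intro x
        apply hc _ _ ((0 : Fin (N+1)).succAbove i)
        intro j hj
        rw [hTs, hTs]
        rcases eq_or_ne j 0 with rfl | hj0
        · rw [Fin.insertNth_apply_same, Fin.insertNth_apply_same]
        · obtain ⟨k, rfl⟩ := Fin.exists_succAbove_eq hj0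
          rw [Fin.insertNth_apply_succAbove, Fin.insertNth_apply_succAbove]
          apply hij
          intro hk; apply hj; rw [hk]
      rw [hgdef]
      simp only
      rw [← integral_sub (hFint xs) (hFint xs')]
      calc ∫ x, (F (x, xs) - F (x, xs')) ∂μ ≤ ∫ _, c ∂μ :=
            integral_mono ((hFint xs).sub (hFint xs')) (integrable_const c) hpt
        _ = c := by simp
    have habs : ∀ (s : ℝ) (z : X × (Fin N → X)), t * F z ≤ |t| * B := by
      intro s z
      calc t * F z ≤ |t * F z| := le_abs_self _
        _ = |t| * |F z| := abs_mul _ _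
        _ ≤ |t| * B := mul_le_mul_of_nonneg_left (hFB z) (abs_nonneg t)
    have hexpint : Integrable (fun z => exp (t * F z)) (μ.prod (Measure.pi fun _ : Fin N => μ)) :=
      bounded_integrable _ _ (Real.continuous_exp.comp_aestronglyMeasurable
        ((hFsm.aestronglyMeasurable).const_mul t)) (exp (|t| * B))
        (fun z => by rw [abs_of_pos (exp_pos _), exp_le_exp]; exact habs 0 z)
    have hFintprod : Integrable F (μ.prod (Measure.pi fun _ : Fin N => μ)) :=
      bounded_integrable _ _ hFsm.aestronglyMeasurable B hFB
    have step1 : ∫ xs, exp (t * f xs) ∂(Measure.pi fun _ : Fin (N+1) => μ)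
        = ∫ z, exp (t * F z) ∂(μ.prod (Measure.pi fun _ : Fin N => μ)) := by
      rw [← hmp.integral_comp']
      congr 1; funext xs
      rw [hFdef]; simp
    have step1' : ∫ xs, f xs ∂(Measure.pi fun _ : Fin (N+1) => μ)
        = ∫ z, F z ∂(μ.prod (Measure.pi fun _ : Fin N => μ)) := by
      rw [← hmp.integral_comp']
      congr 1; funext xs
      rw [hFdef]; simp
    have step2 : ∫ z, exp (t * F z) ∂(μ.prod (Measure.pi fun _ : Fin N => μ))
        = ∫ xs, (∫ x, exp (t * F (x, xs)) ∂μ) ∂(Measure.pi fun _ : Fin N => μ) :=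
      integral_prod_symm _ hexpint
    have step2' : ∫ z, F z ∂(μ.prod (Measure.pi fun _ : Fin N => μ))
        = ∫ xs, g xs ∂(Measure.pi fun _ : Fin N => μ) :=
      integral_prod_symm _ hFintprod
    have inner_bd : ∀ xs, ∫ x, exp (t * F (x, xs)) ∂μ ≤ exp (t * g xs + t ^ 2 * c ^ 2 / 8) :=
      fun xs => hoeffding_step μ (fun x => F (x, xs)) (hFint xs).1 c
        (fun y y' => hdiff0 y y' xs) t
    have lhs_int : Integrable (fun xs => ∫ x, exp (t * F (x, xs)) ∂μ)
        (Measure.pi fun _ : Fin N => μ) := by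
      apply bounded_integrable _ _ (StronglyMeasurable.aestronglyMeasurable <|
        (Real.continuous_exp.comp_stronglyMeasurable (hFsm.const_mul t)).integral_prod_left')
        (exp (|t| * B))
      intro xs
      rw [abs_of_nonneg (integral_nonneg (fun x => (exp_pos _).le))]
      calc ∫ x, exp (t * F (x, xs)) ∂μ ≤ ∫ _, exp (|t| * B) ∂μ := by
            apply integral_mono ?_ (integrable_const _) ?_
            · exact bounded_integrable _ _ (Real.continuous_exp.comp_aestronglyMeasurable
                (((hFint xs).1).const_mul t)) (exp (|t| * B))
                (fun x => by rw [abs_of_pos (exp_pos _), exp_le_exp]; exact habs 0 (x, xs))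
            · intro x; rw [exp_le_exp]; exact habs 0 (x, xs)
        _ = exp (|t| * B) := by simp
    have rhs_int : Integrable (fun xs => exp (t * g xs + t ^ 2 * c ^ 2 / 8))
        (Measure.pi fun _ : Fin N => μ) := by
      apply bounded_integrable _ _ (StronglyMeasurable.aestronglyMeasurable <|
        Real.continuous_exp.comp_stronglyMeasurable ((hgsm.const_mul t).add_const _))
        (exp (|t| * B + t ^ 2 * c ^ 2 / 8))
      intro xs
      rw [abs_of_pos (exp_pos _), exp_le_exp]
      have : t * g xs ≤ |t| * B := by
        calc t * g xs ≤ |t * g xs| := le_abs_self _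
          _ = |t| * |g xs| := abs_mul _ _
          _ ≤ |t| * B := mul_le_mul_of_nonneg_left (hgB xs) (abs_nonneg t)
      linarith
    have expg_int : Integrable (fun xs => exp (t * g xs))
        (Measure.pi fun _ : Fin N => μ) := by
      apply bounded_integrable _ _ (StronglyMeasurable.aestronglyMeasurable <|
        Real.continuous_exp.comp_stronglyMeasurable (hgsm.const_mul t)) (exp (|t| * B))
      intro xs
      rw [abs_of_pos (exp_pos _), exp_le_exp]
      calc t * g xs ≤ |t * g xs| := le_abs_self _
        _ = |t| * |g xs| := abs_mul _ _
        _ ≤ |t| * B := mul_le_mul_of_nonneg_left (hgB xs) (abs_nonneg t)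
    have ihg := ih g hgsm B hgB c hgc t
    calc ∫ xs, exp (t * f xs) ∂(Measure.pi fun _ : Fin (N+1) => μ)
        = ∫ xs, (∫ x, exp (t * F (x, xs)) ∂μ) ∂(Measure.pi fun _ : Fin N => μ) := by
          rw [step1, step2]
      _ ≤ ∫ xs, exp (t * g xs + t ^ 2 * c ^ 2 / 8) ∂(Measure.pi fun _ : Fin N => μ) :=
          integral_mono lhs_int rhs_int inner_bd
      _ = (∫ xs, exp (t * g xs) ∂(Measure.pi fun _ : Fin N => μ)) * exp (t ^ 2 * c ^ 2 / 8) := by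
          rw [show (fun xs => exp (t * g xs + t ^ 2 * c ^ 2 / 8))
              = fun xs => exp (t * g xs) * exp (t ^ 2 * c ^ 2 / 8) by
            funext xs; rw [← exp_add]]
          rw [integral_mul_const]
      _ ≤ exp (t * (∫ xs, g xs ∂(Measure.pi fun _ : Fin N => μ)) + N * (t ^ 2 * c ^ 2 / 8))
            * exp (t ^ 2 * c ^ 2 / 8) :=
          mul_le_mul_of_nonneg_right ihg (exp_pos _).le
      _ = exp (t * (∫ xs, f xs ∂(Measure.pi fun _ : Fin (N+1) => μ))
            + (N + 1 : ℕ) * (t ^ 2 * c ^ 2 / 8)) := by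
          rw [step1', step2', ← exp_add]
          congr 1
          push_cast
          ring

lemma prod_mgf {X : Type*} [MeasurableSpace X] (p q : Measure X)
    [IsProbabilityMeasure p] [IsProbabilityMeasure q] (m n : ℕ)
    (f : (Fin m → X) × (Fin n → X) → ℝ) (hf : StronglyMeasurable f) (B : ℝ)
    (hB : ∀ z, |f z| ≤ B) (c d : ℝ)
    (hcx : ∀ (xs xs' : Fin m → X) (ys : Fin n → X) (i : Fin m),
      (∀ j, j ≠ i → xs j = xs' j) → f (xs, ys) - f (xs', ys) ≤ c)
    (hcy : ∀ (xs : Fin m → X) (ys ys' : Fin n → X) (j : Fin n),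
      (∀ i, i ≠ j → ys i = ys' i) → f (xs, ys) - f (xs, ys') ≤ d)
    (t : ℝ) :
    ∫ z, exp (t * f z) ∂((Measure.pi fun _ : Fin m => p).prod (Measure.pi fun _ : Fin n => q))
      ≤ exp (t * (∫ z, f z ∂((Measure.pi fun _ : Fin m => p).prod
            (Measure.pi fun _ : Fin n => q)))
          + m * (t ^ 2 * c ^ 2 / 8) + n * (t ^ 2 * d ^ 2 / 8)) := by
  set P := Measure.pi fun _ : Fin m => p with hP
  set Q := Measure.pi fun _ : Fin n => q with hQ
  have hexpint : Integrable (fun z => exp (t * f z)) (P.prod Q) :=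
    bounded_integrable _ _ (Real.continuous_exp.comp_aestronglyMeasurable
      ((hf.aestronglyMeasurable).const_mul t)) (exp (|t| * B))
      (fun z => by
        rw [abs_of_pos (exp_pos _), exp_le_exp]
        calc t * f z ≤ |t * f z| := le_abs_self _
          _ = |t| * |f z| := abs_mul _ _
          _ ≤ |t| * B := mul_le_mul_of_nonneg_left (hB z) (abs_nonneg t))
  have hfint : Integrable f (P.prod Q) := bounded_integrable _ _ hf.aestronglyMeasurable B hB
  set G : (Fin m → X) → ℝ := fun xs => ∫ ys, f (xs, ys) ∂Q with hGdef
  have hGsm : StronglyMeasurable G := hf.integral_prod_right'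
  have hGB : ∀ xs, |G xs| ≤ B := by
    intro xs
    have := norm_integral_le_of_norm_le_const (μ := Q) (C := B) (f := fun ys => f (xs, ys))
      (Filter.Eventually.of_forall fun ys => by rw [Real.norm_eq_abs]; exact hB _)
    simpa using this
  have hfys_int : ∀ xs, Integrable (fun ys => f (xs, ys)) Q := fun xs =>
    bounded_integrable _ _ ((hf.comp_measurable
      (measurable_const.prodMk measurable_id)).aestronglyMeasurable) B (fun ys => hB _)
  have hGc : ∀ (xs xs' : Fin m → X) (i : Fin m), (∀ j, j ≠ i → xs j = xs' j) →
      G xs - G xs' ≤ c := by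
    intro xs xs' i hij
    rw [hGdef]; simp only
    rw [← integral_sub (hfys_int xs) (hfys_int xs')]
    calc ∫ ys, (f (xs, ys) - f (xs', ys)) ∂Q ≤ ∫ _, c ∂Q :=
          integral_mono ((hfys_int xs).sub (hfys_int xs')) (integrable_const c)
            (fun ys => hcx xs xs' ys i hij)
      _ = c := by simp
  have inner_bd : ∀ xs, ∫ ys, exp (t * f (xs, ys)) ∂Q
      ≤ exp (t * G xs + n * (t ^ 2 * d ^ 2 / 8)) := by
    intro xs
    exact pi_mgf q n (fun ys => f (xs, ys))
      (hf.comp_measurable (measurable_const.prodMk measurable_id)) B (fun ys => hB _) d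
      (fun ys ys' j hj => hcy xs ys ys' j hj) t
  have step1 : ∫ z, exp (t * f z) ∂(P.prod Q)
      = ∫ xs, (∫ ys, exp (t * f (xs, ys)) ∂Q) ∂P := integral_prod _ hexpint
  have step1' : ∫ z, f z ∂(P.prod Q) = ∫ xs, G xs ∂P := integral_prod _ hfint
  have lhs_int : Integrable (fun xs => ∫ ys, exp (t * f (xs, ys)) ∂Q) P := by
    apply bounded_integrable _ _ (StronglyMeasurable.aestronglyMeasurable <|
      (Real.continuous_exp.comp_stronglyMeasurable (hf.const_mul t)).integral_prod_right')
      (exp (|t| * B))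
    intro xs
    rw [abs_of_nonneg (integral_nonneg (fun ys => (exp_pos _).le))]
    calc ∫ ys, exp (t * f (xs, ys)) ∂Q ≤ ∫ _, exp (|t| * B) ∂Q := by
          apply integral_mono ?_ (integrable_const _) ?_
          · exact bounded_integrable _ _ (Real.continuous_exp.comp_aestronglyMeasurable
              (((hfys_int xs).1).const_mul t)) (exp (|t| * B))
              (fun ys => by
                rw [abs_of_pos (exp_pos _), exp_le_exp]
                calc t * f (xs, ys) ≤ |t * f (xs, ys)| := le_abs_self _
                  _ = |t| * |f (xs, ys)| := abs_mul _ _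
                  _ ≤ |t| * B := mul_le_mul_of_nonneg_left (hB _) (abs_nonneg t))
          · intro ys
            rw [exp_le_exp]
            calc t * f (xs, ys) ≤ |t * f (xs, ys)| := le_abs_self _
              _ = |t| * |f (xs, ys)| := abs_mul _ _
              _ ≤ |t| * B := mul_le_mul_of_nonneg_left (hB _) (abs_nonneg t)
      _ = exp (|t| * B) := by simp
  have rhs_int : Integrable (fun xs => exp (t * G xs + n * (t ^ 2 * d ^ 2 / 8))) P := by
    apply bounded_integrable _ _ (StronglyMeasurable.aestronglyMeasurable <|
      Real.continuous_exp.comp_stronglyMeasurable ((hGsm.const_mul t).add_const _))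
      (exp (|t| * B + n * (t ^ 2 * d ^ 2 / 8)))
    intro xs
    rw [abs_of_pos (exp_pos _), exp_le_exp]
    have : t * G xs ≤ |t| * B := by
      calc t * G xs ≤ |t * G xs| := le_abs_self _
        _ = |t| * |G xs| := abs_mul _ _
        _ ≤ |t| * B := mul_le_mul_of_nonneg_left (hGB xs) (abs_nonneg t)
    linarith
  have ihG := pi_mgf p m G hGsm B hGB c hGc t
  calc ∫ z, exp (t * f z) ∂(P.prod Q)
      = ∫ xs, (∫ ys, exp (t * f (xs, ys)) ∂Q) ∂P := step1
    _ ≤ ∫ xs, exp (t * G xs + n * (t ^ 2 * d ^ 2 / 8)) ∂P :=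
        integral_mono lhs_int rhs_int inner_bd
    _ = (∫ xs, exp (t * G xs) ∂P) * exp (n * (t ^ 2 * d ^ 2 / 8)) := by
        rw [show (fun xs => exp (t * G xs + n * (t ^ 2 * d ^ 2 / 8)))
            = fun xs => exp (t * G xs) * exp (n * (t ^ 2 * d ^ 2 / 8)) by
          funext xs; rw [← exp_add]]
        rw [integral_mul_const]
    _ ≤ exp (t * (∫ xs, G xs ∂P) + m * (t ^ 2 * c ^ 2 / 8)) * exp (n * (t ^ 2 * d ^ 2 / 8)) :=
        mul_le_mul_of_nonneg_right ihG (exp_pos _).le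
    _ = exp (t * (∫ z, f z ∂(P.prod Q)) + m * (t ^ 2 * c ^ 2 / 8) + n * (t ^ 2 * d ^ 2 / 8)) := by
        rw [step1', ← exp_add]

lemma chernoff_of_mgf {Ω : Type*} [MeasurableSpace Ω] (P : Measure Ω) [IsProbabilityMeasure P]
    (f : Ω → ℝ) (hf : StronglyMeasurable f) (B : ℝ) (hB : ∀ ω, |f ω| ≤ B) (σ : ℝ) (hσ : 0 < σ)
    (hmgf : ∀ t : ℝ, ∫ ω, exp (t * f ω) ∂P ≤ exp (t * (∫ ω, f ω ∂P) + t ^ 2 * σ)) (ε : ℝ)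
    (hε : 0 < ε) :
    P {ω | (∫ ω', f ω' ∂P) + ε < f ω} ≤ ENNReal.ofReal (exp (-(ε ^ 2) / (4 * σ))) := by
  set t : ℝ := ε / (2 * σ) with ht
  have ht0 : 0 < t := div_pos hε (by linarith)
  set M : ℝ := ∫ ω', f ω' ∂P with hM
  set g : Ω → ℝ := fun ω => exp (t * (f ω - M - ε)) with hg
  have hgint : Integrable g P :=
    bounded_integrable _ _ (Real.continuous_exp.comp_aestronglyMeasurable
      (((hf.aestronglyMeasurable.sub aestronglyMeasurable_const).sub
        aestronglyMeasurable_const).const_mul t))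
      (exp (|t| * (B + |M| + ε)))
      (fun ω => by
        rw [abs_of_pos (exp_pos _), exp_le_exp]
        calc t * (f ω - M - ε) ≤ |t * (f ω - M - ε)| := le_abs_self _
          _ = |t| * |f ω - M - ε| := abs_mul _ _
          _ ≤ |t| * (B + |M| + ε) := by
              apply mul_le_mul_of_nonneg_left ?_ (abs_nonneg t)
              calc |f ω - M - ε| ≤ |f ω| + |M| + |ε| := by
                    calc |f ω - M - ε| ≤ |f ω - M| + |ε| := abs_sub _ _
                      _ ≤ |f ω| + |M| + |ε| := by linarith [abs_sub (f ω) M]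
                _ ≤ B + |M| + ε := by
                    have := hB ω; have : |ε| = ε := abs_of_pos hε; linarith [hB ω, le_abs_self ε])
  have hsub : {ω | M + ε < f ω} ⊆ {ω | 1 ≤ g ω} := by
    intro ω hω
    simp only [Set.mem_setOf_eq] at hω ⊢
    rw [hg]
    simp only
    rw [show (1 : ℝ) = exp 0 by simp, exp_le_exp]
    have : 0 < f ω - M - ε := by linarith
    positivity
  have hmarkov := mul_meas_ge_le_integral_of_nonneg
    (Filter.Eventually.of_forall fun ω => (exp_pos _).le : 0 ≤ᵐ[P] g) hgint 1
  rw [one_mul] at hmarkov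
  have hgval : ∫ ω, g ω ∂P ≤ exp (-(ε ^ 2) / (4 * σ)) := by
    have hsplit : ∀ ω, g ω = exp (t * f ω) * exp (-(t * (M + ε))) := by
      intro ω; rw [hg]; simp only; rw [← exp_add]; ring_nf
    rw [show (fun ω => g ω) = fun ω => exp (t * f ω) * exp (-(t * (M + ε))) from
      funext hsplit, integral_mul_const]
    calc (∫ ω, exp (t * f ω) ∂P) * exp (-(t * (M + ε)))
        ≤ exp (t * M + t ^ 2 * σ) * exp (-(t * (M + ε))) :=
          mul_le_mul_of_nonneg_right (hmgf t) (exp_pos _).le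
      _ = exp (t ^ 2 * σ - t * ε) := by rw [← exp_add]; ring_nf
      _ = exp (-(ε ^ 2) / (4 * σ)) := by
          congr 1
          rw [ht]
          field_simp
          ring
  have hfin : P {ω | 1 ≤ g ω} ≠ ⊤ := measure_ne_top _ _
  calc P {ω | M + ε < f ω} ≤ P {ω | 1 ≤ g ω} := measure_mono hsub
    _ = ENNReal.ofReal ((P {ω | 1 ≤ g ω}).toReal) := (ENNReal.ofReal_toReal hfin).symm
    _ ≤ ENNReal.ofReal (exp (-(ε ^ 2) / (4 * σ))) :=
        ENNReal.ofReal_le_ofReal (hmarkov.trans hgval)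

section helpers
variable {H : Type*} [NormedAddCommGroup H] [InnerProductSpace ℝ H]

lemma sSup_abs_inner (v : H) :
    sSup {r : ℝ | ∃ f : H, ‖f‖ ≤ 1 ∧ r = |⟪f, v⟫|} = ‖v‖ := by
  have hub : ∀ r ∈ {r : ℝ | ∃ f : H, ‖f‖ ≤ 1 ∧ r = |⟪f, v⟫|}, r ≤ ‖v‖ := by
    rintro r ⟨f, hf, rfl⟩
    calc |⟪f, v⟫| ≤ ‖f‖ * ‖v‖ := abs_real_inner_le_norm f v
      _ ≤ 1 * ‖v‖ := mul_le_mul_of_nonneg_right hf (norm_nonneg v)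
      _ = ‖v‖ := one_mul _
  have hmem : ‖v‖ ∈ {r : ℝ | ∃ f : H, ‖f‖ ≤ 1 ∧ r = |⟪f, v⟫|} := by
    rcases eq_or_ne v 0 with rfl | hv
    · exact ⟨0, by simp⟩
    · refine ⟨‖v‖⁻¹ • v, ?_, ?_⟩
      · rw [norm_smul, norm_inv, norm_norm, inv_mul_cancel₀ (norm_ne_zero_iff.mpr hv)]
      · rw [real_inner_smul_left, real_inner_self_eq_norm_sq]
        rw [abs_of_nonneg (by positivity), sq]
        field_simp
  exact le_antisymm (csSup_le ⟨_, hmem⟩ hub) (le_csSup ⟨‖v‖, hub⟩ hmem)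

lemma sum_sub_single {k : ℕ} (v w : Fin k → H) (i : Fin k)
    (hvw : ∀ j, j ≠ i → v j = w j) : (∑ j, v j) - ∑ j, w j = v i - w i := by
  rw [← Finset.sum_sub_distrib]
  rw [Finset.sum_eq_single i]
  · intro j _ hj
    rw [hvw j hj, sub_self]
  · intro h; exact absurd (Finset.mem_univ i) h

lemma smul_sum_norm_le {k : ℕ} (hk : 1 ≤ k) (v : Fin k → H) (s : ℝ)
    (hs : ∀ i, ‖v i‖ ≤ s) : ‖(1 / (k : ℝ)) • ∑ i, v i‖ ≤ s := by
  have hk0 : (0 : ℝ) < k := by exact_mod_cast hk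
  have hs0 : 0 ≤ s := le_trans (norm_nonneg _) (hs ⟨0, hk⟩)
  rw [norm_smul]
  have h1 : ‖∑ i, v i‖ ≤ (k : ℝ) * s := by
    calc ‖∑ i, v i‖ ≤ ∑ i : Fin k, ‖v i‖ := norm_sum_le _ _
      _ ≤ ∑ _i : Fin k, s := Finset.sum_le_sum (fun i _ => hs i)
      _ = (k : ℝ) * s := by simp [mul_comm]
  calc ‖(1 / (k:ℝ))‖ * ‖∑ i, v i‖ ≤ ‖(1 / (k:ℝ))‖ * ((k:ℝ) * s) :=
        mul_le_mul_of_nonneg_left h1 (norm_nonneg _)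
    _ = s := by
        rw [Real.norm_eq_abs, abs_of_pos (by positivity)]
        field_simp

end helpers

set_option maxHeartbeats 2000000 in
/-- Bounded differences of `Δ(p,q,X,Y)` and the resulting McDiarmid
concentration bound for the biased MMD deviation. -/
theorem mmd_mcdiarmid_bound
    {X : Type*} [MeasurableSpace X] {H : Type*} [NormedAddCommGroup H]
    [InnerProductSpace ℝ H] [CompleteSpace H]
    (φ : X → H) (K : ℝ)
    (hk0 : ∀ x y : X, 0 ≤ ⟪φ x, φ y⟫) (hkK : ∀ x y : X, ⟪φ x, φ y⟫ ≤ K)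
    (p q : Measure X) [IsProbabilityMeasure p] [IsProbabilityMeasure q]
    (hp : Integrable φ p) (hq : Integrable φ q)
    (m n : ℕ) (hm : 1 ≤ m) (hn : 1 ≤ n) (hK : 0 < K)
    (Δ : (Fin m → X) → (Fin n → X) → ℝ)
    (hΔ : ∀ Xs Ys, Δ Xs Ys =
      sSup {r : ℝ | ∃ f : H, ‖f‖ ≤ 1 ∧
        r = |(∫ x, ⟪f, φ x⟫ ∂p) - (∫ y, ⟪f, φ y⟫ ∂q)
              - (1 / (m : ℝ)) * ∑ i : Fin m, ⟪f, φ (Xs i)⟫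
              + (1 / (n : ℝ)) * ∑ j : Fin n, ⟪f, φ (Ys j)⟫|}) :
    (∀ (Xs Xs' : Fin m → X) (Ys : Fin n → X) (i : Fin m),
        (∀ j : Fin m, j ≠ i → Xs j = Xs' j) →
        |Δ Xs Ys - Δ Xs' Ys| ≤ 2 * Real.sqrt K / m)
    ∧ (∀ (Xs : Fin m → X) (Ys Ys' : Fin n → X) (j : Fin n),
        (∀ i : Fin n, i ≠ j → Ys i = Ys' i) →
        |Δ Xs Ys - Δ Xs Ys'| ≤ 2 * Real.sqrt K / n)
    ∧ (∀ ε : ℝ, 0 < ε →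
        ((Measure.pi fun _ : Fin m => p).prod (Measure.pi fun _ : Fin n => q))
            {ω | (∫ ω', Δ ω'.1 ω'.2
                    ∂((Measure.pi fun _ : Fin m => p).prod
                      (Measure.pi fun _ : Fin n => q))) + ε < Δ ω.1 ω.2}
          ≤ ENNReal.ofReal
              (Real.exp (-(ε ^ 2) * (m : ℝ) * (n : ℝ) / (2 * K * ((m : ℝ) + (n : ℝ))))))
    := by
  have hm0 : (0 : ℝ) < m := by exact_mod_cast hm
  have hn0 : (0 : ℝ) < n := by exact_mod_cast hn
  have hsK : (0 : ℝ) < Real.sqrt K := Real.sqrt_pos.mpr hK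
  have hφbd : ∀ x, ‖φ x‖ ≤ Real.sqrt K := by
    intro x
    rw [show ‖φ x‖ = |‖φ x‖| from (abs_of_nonneg (norm_nonneg _)).symm] at *
    rw [abs_of_nonneg (norm_nonneg _)]
    rw [Real.le_sqrt (norm_nonneg _) hK.le]
    rw [← real_inner_self_eq_norm_sq]
    exact hkK x x
  -- the Hilbert-space-valued deviation vector
  set C : H := (∫ x, φ x ∂p) - ∫ y, φ y ∂q with hC
  set V : (Fin m → X) → (Fin n → X) → H := fun Xs Ys =>
    C - (1 / (m : ℝ)) • ∑ i, φ (Xs i) + (1 / (n : ℝ)) • ∑ j, φ (Ys j) with hV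
  have hΔV : ∀ Xs Ys, Δ Xs Ys = ‖V Xs Ys‖ := by
    intro Xs Ys
    rw [hΔ, ← sSup_abs_inner (V Xs Ys)]
    congr 1
    ext r
    constructor
    · rintro ⟨f, hf, rfl⟩
      refine ⟨f, hf, ?_⟩
      congr 1
      rw [hV, hC]
      simp only [inner_add_right, inner_sub_right, inner_sum, real_inner_smul_right]
      rw [integral_inner hp f, integral_inner hq f]
    · rintro ⟨f, hf, rfl⟩
      refine ⟨f, hf, ?_⟩
      congr 1
      rw [hV, hC]
      simp only [inner_add_right, inner_sub_right, inner_sum, real_inner_smul_right]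
      rw [integral_inner hp f, integral_inner hq f]
  -- bounded differences for Δ (parts 1 and 2)
  have part1 : ∀ (Xs Xs' : Fin m → X) (Ys : Fin n → X) (i : Fin m),
      (∀ j : Fin m, j ≠ i → Xs j = Xs' j) →
      |Δ Xs Ys - Δ Xs' Ys| ≤ 2 * Real.sqrt K / m := by
    intro Xs Xs' Ys i hij
    rw [hΔV, hΔV]
    have hd : V Xs Ys - V Xs' Ys = (1 / (m : ℝ)) • ((∑ j, φ (Xs' j)) - ∑ j, φ (Xs j)) := by
      rw [hV]; simp only; rw [smul_sub]; abel
    calc |‖V Xs Ys‖ - ‖V Xs' Ys‖| ≤ ‖V Xs Ys - V Xs' Ys‖ := abs_norm_sub_norm_le _ _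
      _ = ‖(1 / (m : ℝ)) • ((∑ j, φ (Xs' j)) - ∑ j, φ (Xs j))‖ := by rw [hd]
      _ ≤ 2 * Real.sqrt K / m := by
          rw [sum_sub_single _ _ i (fun j hj => by rw [hij j hj]), norm_smul,
            Real.norm_eq_abs, abs_of_pos (by positivity)]
          rw [div_mul_eq_mul_div, one_mul, div_le_div_iff₀ hm0 hm0]
          have := norm_sub_le (φ (Xs' i)) (φ (Xs i))
          have h1 := hφbd (Xs' i)
          have h2 := hφbd (Xs i)
          nlinarith [norm_nonneg (φ (Xs' i) - φ (Xs i))]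
  have part2 : ∀ (Xs : Fin m → X) (Ys Ys' : Fin n → X) (j : Fin n),
      (∀ i : Fin n, i ≠ j → Ys i = Ys' i) →
      |Δ Xs Ys - Δ Xs Ys'| ≤ 2 * Real.sqrt K / n := by
    intro Xs Ys Ys' j hij
    rw [hΔV, hΔV]
    have hd : V Xs Ys - V Xs Ys' = (1 / (n : ℝ)) • ((∑ i, φ (Ys i)) - ∑ i, φ (Ys' i)) := by
      rw [hV]; simp only; rw [smul_sub]; abel
    calc |‖V Xs Ys‖ - ‖V Xs Ys'‖| ≤ ‖V Xs Ys - V Xs Ys'‖ := abs_norm_sub_norm_le _ _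
      _ = ‖(1 / (n : ℝ)) • ((∑ i, φ (Ys i)) - ∑ i, φ (Ys' i))‖ := by rw [hd]
      _ ≤ 2 * Real.sqrt K / n := by
          rw [sum_sub_single _ _ j (fun i hi => by rw [hij i hi]), norm_smul,
            Real.norm_eq_abs, abs_of_pos (by positivity)]
          rw [div_mul_eq_mul_div, one_mul, div_le_div_iff₀ hn0 hn0]
          have := norm_sub_le (φ (Ys j)) (φ (Ys' j))
          have h1 := hφbd (Ys j)
          have h2 := hφbd (Ys' j)
          nlinarith [norm_nonneg (φ (Ys j) - φ (Ys' j))]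
  refine ⟨part1, part2, ?_⟩
  intro ε hε
  -- measurable modification of φ
  have hφpq : AEStronglyMeasurable φ (p + q) :=
    aestronglyMeasurable_add_measure_iff.2 ⟨hp.1, hq.1⟩
  set ψ : X → H := hφpq.mk φ with hψ
  have hψsm : StronglyMeasurable ψ := hφpq.stronglyMeasurable_mk
  have hψae : φ =ᵐ[p + q] ψ := hφpq.ae_eq_mk
  have hψp : φ =ᵐ[p] ψ := (ae_add_measure_iff.mp hψae).1
  have hψq : φ =ᵐ[q] ψ := (ae_add_measure_iff.mp hψae).2
  have hsmeas : MeasurableSet {x | ‖ψ x‖ ≤ Real.sqrt K} :=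
    measurableSet_le hψsm.norm.measurable measurable_const
  set φ₀ : X → H := Set.piecewise {x | ‖ψ x‖ ≤ Real.sqrt K} ψ (fun _ => 0) with hφ₀
  have hφ₀sm : StronglyMeasurable φ₀ := hψsm.piecewise hsmeas stronglyMeasurable_const
  have hφ₀bd : ∀ x, ‖φ₀ x‖ ≤ Real.sqrt K := by
    intro x
    rw [hφ₀]
    by_cases hx : x ∈ {x | ‖ψ x‖ ≤ Real.sqrt K}
    · rw [Set.piecewise_eq_of_mem _ _ _ hx]; exact hx
    · rw [Set.piecewise_eq_of_notMem _ _ _ hx]; simpa using hsK.le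
  have hφ₀p : φ =ᵐ[p] φ₀ := by
    filter_upwards [hψp] with x hx
    rw [hφ₀, Set.piecewise_eq_of_mem _ _ _ (by rw [Set.mem_setOf_eq, ← hx]; exact hφbd x), ← hx]
  have hφ₀q : φ =ᵐ[q] φ₀ := by
    filter_upwards [hψq] with x hx
    rw [hφ₀, Set.piecewise_eq_of_mem _ _ _ (by rw [Set.mem_setOf_eq, ← hx]; exact hφbd x), ← hx]
  -- the measurable surrogate g
  set W : (Fin m → X) × (Fin n → X) → H := fun z =>
    C - (1 / (m : ℝ)) • ∑ i, φ₀ (z.1 i) + (1 / (n : ℝ)) • ∑ j, φ₀ (z.2 j) with hW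
  set g : (Fin m → X) × (Fin n → X) → ℝ := fun z => ‖W z‖ with hg
  have hWsm : StronglyMeasurable W := by
    apply StronglyMeasurable.add
    apply StronglyMeasurable.sub stronglyMeasurable_const
    · apply StronglyMeasurable.const_smul
      apply Finset.stronglyMeasurable_fun_sum
      intro i _
      exact hφ₀sm.comp_measurable ((measurable_pi_apply i).comp measurable_fst)
    · apply StronglyMeasurable.const_smul
      apply Finset.stronglyMeasurable_fun_sum
      intro j _
      exact hφ₀sm.comp_measurable ((measurable_pi_apply j).comp measurable_snd)
  have hgsm : StronglyMeasurable g := hWsm.norm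
  have hgB : ∀ z, |g z| ≤ ‖C‖ + (Real.sqrt K + Real.sqrt K) := by
    intro z
    rw [hg, abs_of_nonneg (norm_nonneg _)]
    calc ‖W z‖ ≤ ‖C - (1 / (m : ℝ)) • ∑ i, φ₀ (z.1 i)‖
          + ‖(1 / (n : ℝ)) • ∑ j, φ₀ (z.2 j)‖ := norm_add_le _ _
      _ ≤ (‖C‖ + ‖(1 / (m : ℝ)) • ∑ i, φ₀ (z.1 i)‖)
          + ‖(1 / (n : ℝ)) • ∑ j, φ₀ (z.2 j)‖ := by
            gcongr; exact norm_sub_le _ _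
      _ ≤ ‖C‖ + (Real.sqrt K + Real.sqrt K) := by
          have h1 := smul_sum_norm_le hm (fun i => φ₀ (z.1 i)) _ (fun i => hφ₀bd _)
          have h2 := smul_sum_norm_le hn (fun j => φ₀ (z.2 j)) _ (fun j => hφ₀bd _)
          linarith
  have hgc : ∀ (xs xs' : Fin m → X) (ys : Fin n → X) (i : Fin m),
      (∀ j, j ≠ i → xs j = xs' j) → g (xs, ys) - g (xs', ys) ≤ 2 * Real.sqrt K / m := by
    intro xs xs' ys i hij
    have hd : W (xs, ys) - W (xs', ys)
        = (1 / (m : ℝ)) • ((∑ j, φ₀ (xs' j)) - ∑ j, φ₀ (xs j)) := by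
      rw [hW]; simp only; rw [smul_sub]; abel
    calc g (xs, ys) - g (xs', ys) ≤ ‖W (xs, ys) - W (xs', ys)‖ := norm_sub_norm_le _ _
      _ = ‖(1 / (m : ℝ)) • ((∑ j, φ₀ (xs' j)) - ∑ j, φ₀ (xs j))‖ := by rw [hd]
      _ ≤ 2 * Real.sqrt K / m := by
          rw [sum_sub_single _ _ i (fun j hj => by rw [hij j hj]), norm_smul,
            Real.norm_eq_abs, abs_of_pos (by positivity)]
          rw [div_mul_eq_mul_div, one_mul, div_le_div_iff₀ hm0 hm0]
          have := norm_sub_le (φ₀ (xs' i)) (φ₀ (xs i))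
          have h1 := hφ₀bd (xs' i)
          have h2 := hφ₀bd (xs i)
          nlinarith [norm_nonneg (φ₀ (xs' i) - φ₀ (xs i))]
  have hgd : ∀ (xs : Fin m → X) (ys ys' : Fin n → X) (j : Fin n),
      (∀ i, i ≠ j → ys i = ys' i) → g (xs, ys) - g (xs, ys') ≤ 2 * Real.sqrt K / n := by
    intro xs ys ys' j hij
    have hd : W (xs, ys) - W (xs, ys')
        = (1 / (n : ℝ)) • ((∑ i, φ₀ (ys i)) - ∑ i, φ₀ (ys' i)) := by
      rw [hW]; simp only; rw [smul_sub]; abel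
    calc g (xs, ys) - g (xs, ys') ≤ ‖W (xs, ys) - W (xs, ys')‖ := norm_sub_norm_le _ _
      _ = ‖(1 / (n : ℝ)) • ((∑ i, φ₀ (ys i)) - ∑ i, φ₀ (ys' i))‖ := by rw [hd]
      _ ≤ 2 * Real.sqrt K / n := by
          rw [sum_sub_single _ _ j (fun i hi => by rw [hij i hi]), norm_smul,
            Real.norm_eq_abs, abs_of_pos (by positivity)]
          rw [div_mul_eq_mul_div, one_mul, div_le_div_iff₀ hn0 hn0]
          have := norm_sub_le (φ₀ (ys j)) (φ₀ (ys' j))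
          have h1 := hφ₀bd (ys j)
          have h2 := hφ₀bd (ys' j)
          nlinarith [norm_nonneg (φ₀ (ys j) - φ₀ (ys' j))]
  set P : Measure (Fin m → X) := Measure.pi fun _ : Fin m => p with hP
  set Q : Measure (Fin n → X) := Measure.pi fun _ : Fin n => q with hQ
  -- a.e. equality of Δ and g on the product
  have haeP : ∀ᵐ xs ∂P, ∀ i, φ (xs i) = φ₀ (xs i) :=
    ae_all_iff.2 fun i =>
      (Measure.tendsto_eval_ae_ae (μ := fun _ : Fin m => p) (i := i)).eventually
        ((hφ₀p.mono fun x hx => hx) : ∀ᵐ x ∂p, φ x = φ₀ x)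
  have haeQ : ∀ᵐ ys ∂Q, ∀ j, φ (ys j) = φ₀ (ys j) :=
    ae_all_iff.2 fun j =>
      (Measure.tendsto_eval_ae_ae (μ := fun _ : Fin n => q) (i := j)).eventually
        ((hφ₀q.mono fun x hx => hx) : ∀ᵐ x ∂q, φ x = φ₀ x)
  have haePQ : ∀ᵐ ω ∂(P.prod Q), Δ ω.1 ω.2 = g ω := by
    filter_upwards [Measure.quasiMeasurePreserving_fst.ae haeP,
      Measure.quasiMeasurePreserving_snd.ae haeQ] with ω h1 h2
    have e1 : (∑ i, φ (ω.1 i)) = ∑ i, φ₀ (ω.1 i) := Finset.sum_congr rfl fun i _ => h1 i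
    have e2 : (∑ j, φ (ω.2 j)) = ∑ j, φ₀ (ω.2 j) := Finset.sum_congr rfl fun j _ => h2 j
    rw [hΔV, hg, hW, hV]
    simp only
    rw [e1, e2]
  have hint_eq : ∫ ω', Δ ω'.1 ω'.2 ∂(P.prod Q) = ∫ ω', g ω' ∂(P.prod Q) :=
    integral_congr_ae haePQ
  -- Chernoff with the MGF bound
  set σ : ℝ := ((m : ℝ) * (2 * Real.sqrt K / m) ^ 2 + (n : ℝ) * (2 * Real.sqrt K / n) ^ 2) / 8
    with hσdef
  have hσ : 0 < σ := by
    rw [hσdef]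
    positivity
  have hmgf : ∀ t : ℝ, ∫ ω, exp (t * g ω) ∂(P.prod Q)
      ≤ exp (t * (∫ ω, g ω ∂(P.prod Q)) + t ^ 2 * σ) := by
    intro t
    have := prod_mgf p q m n g hgsm _ hgB (2 * Real.sqrt K / m) (2 * Real.sqrt K / n) hgc hgd t
    refine this.trans (le_of_eq ?_)
    congr 1
    rw [hσdef]
    ring
  have hchern := chernoff_of_mgf (P.prod Q) g hgsm _ hgB σ hσ hmgf ε hε
  -- transfer between Δ-set and g-set
  have hsets : {ω | (∫ ω', Δ ω'.1 ω'.2 ∂(P.prod Q)) + ε < Δ ω.1 ω.2}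
      =ᵐ[P.prod Q] {ω | (∫ ω', g ω' ∂(P.prod Q)) + ε < g ω} := by
    filter_upwards [haePQ] with ω hω
    have : ((∫ ω', Δ ω'.1 ω'.2 ∂(P.prod Q)) + ε < Δ ω.1 ω.2)
        ↔ ((∫ ω', g ω' ∂(P.prod Q)) + ε < g ω) := by rw [hint_eq, hω]
    exact propext this
  rw [measure_congr hsets]
  refine hchern.trans (le_of_eq ?_)
  congr 1
  rw [hσdef]
  have hKsq : Real.sqrt K ^ 2 = K := Real.sq_sqrt hK.le
  rw [div_pow, div_pow, mul_pow, hKsq]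
  congr 1
  field_simp
  ring
end

section
/- (Rademacher average bound for RKHS unit ball) Let H be an RKHS with kernel k satisfying 0 ≤ k(x,x) ≤ K for all x, F its unit ball, x_1,…,x_m points in X, and σ_1,…,σ_m i.i.d. uniform on {−1,+1}. Then E_σ sup_{f∈F} |(1/m) Σ_{i=1}^m σ_i f(x_i)| ≤ √(K/m). -/
open MeasureTheory
open scoped RealInnerProductSpace BigOperators

private lemma eps_sq (b : Bool) :
    (if b then (1:ℝ) else -1) * (if b then (1:ℝ) else -1) = 1 := by
  cases b <;> norm_num

private lemma sum_eps_mul_eps {m : ℕ} (i j : Fin m) (hij : i ≠ j) :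
    ∑ σ : Fin m → Bool, (if σ i then (1:ℝ) else -1) * (if σ j then (1:ℝ) else -1) = 0 := by
  classical
  apply Finset.sum_involution (fun σ _ => Function.update σ i (!σ i))
  · intro σ _
    have hj : Function.update σ i (!σ i) j = σ j := Function.update_of_ne (Ne.symm hij) _ _
    have hi : Function.update σ i (!σ i) i = !σ i := Function.update_self _ _ _
    rw [hj, hi]
    cases h : σ i <;> cases h2 : σ j <;> simp [h, h2]
  · intro σ _ _ hcon
    have := congrFun hcon i
    simp [Function.update_self] at this
  · intro σ _
    simp [Function.update_idem, Function.update_self, Bool.not_not, Function.update_eq_self]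
  · intro σ _; exact Finset.mem_univ _

/-- Rademacher average bound for the RKHS unit ball:
`E_σ sup_{‖f‖≤1} |(1/m) Σ σ_i f(x_i)| ≤ √(K/m)` when `k(x,x) ≤ K`. -/
theorem rademacher_average_rkhs_unit_ball
    {X : Type*} {H : Type*} [NormedAddCommGroup H] [InnerProductSpace ℝ H]
    (φ : X → H) (K : ℝ) (hK : ∀ x : X, ⟪φ x, φ x⟫ ≤ K)
    (m : ℕ) (hm : 1 ≤ m) (x : Fin m → X) :
    (∫ σ : Fin m → Bool,
        sSup {r : ℝ | ∃ f : H, ‖f‖ ≤ 1 ∧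
          r = |(1 / (m : ℝ)) *
                ∑ i : Fin m, (if σ i then (1 : ℝ) else -1) * ⟪f, φ (x i)⟫|}
        ∂(Measure.pi fun _ : Fin m => (PMF.uniformOfFintype Bool).toMeasure))
      ≤ Real.sqrt (K / m) := by
  classical
  set μ := Measure.pi fun _ : Fin m => (PMF.uniformOfFintype Bool).toMeasure with hμ
  set v : (Fin m → Bool) → H :=
    fun σ => ∑ i : Fin m, (if σ i then (1:ℝ) else -1) • φ (x i) with hv
  have hm0 : (0:ℝ) < m := by exact_mod_cast hm
  have hKnn : 0 ≤ K := le_trans real_inner_self_nonneg (hK (x ⟨0, hm⟩))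
  -- pointwise bound on the sSup
  have hpt : ∀ σ : Fin m → Bool,
      sSup {r : ℝ | ∃ f : H, ‖f‖ ≤ 1 ∧
          r = |(1 / (m : ℝ)) *
                ∑ i : Fin m, (if σ i then (1 : ℝ) else -1) * ⟪f, φ (x i)⟫|}
        ≤ (1 / m) * ‖v σ‖ := by
    intro σ
    apply Real.sSup_le
    · rintro r ⟨f, hf, rfl⟩
      have h1 : ∑ i : Fin m, (if σ i then (1 : ℝ) else -1) * ⟪f, φ (x i)⟫ = ⟪f, v σ⟫ := by
        rw [hv, inner_sum]
        exact Finset.sum_congr rfl fun i _ => (real_inner_smul_right _ _ _).symm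
      rw [h1, abs_mul]
      have h2 : |⟪f, v σ⟫| ≤ ‖v σ‖ := by
        calc |⟪f, v σ⟫| ≤ ‖f‖ * ‖v σ‖ := abs_real_inner_le_norm _ _
          _ ≤ 1 * ‖v σ‖ := by gcongr
          _ = ‖v σ‖ := one_mul _
      calc |1 / (m:ℝ)| * |⟪f, v σ⟫| ≤ |1 / (m:ℝ)| * ‖v σ‖ := by gcongr
        _ = (1 / m) * ‖v σ‖ := by rw [abs_of_nonneg (by positivity)]
    · positivity
  -- replace the integrand
  have hmono : (∫ σ : Fin m → Bool,
      sSup {r : ℝ | ∃ f : H, ‖f‖ ≤ 1 ∧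
          r = |(1 / (m : ℝ)) *
                ∑ i : Fin m, (if σ i then (1 : ℝ) else -1) * ⟪f, φ (x i)⟫|} ∂μ)
      ≤ ∫ σ, (1 / m) * ‖v σ‖ ∂μ :=
    integral_mono Integrable.of_finite Integrable.of_finite hpt
  refine le_trans hmono ?_
  -- compute the integral as a finite sum
  have hμs : ∀ σ : Fin m → Bool, (μ {σ}).toReal = ((2:ℝ)^m)⁻¹ := by
    intro σ
    have h1 : ({σ} : Set (Fin m → Bool)) = Set.pi Set.univ (fun i => {σ i}) := by
      ext τ; simp [funext_iff, Set.mem_pi]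
    rw [hμ, h1, Measure.pi_pi]
    simp [PMF.toMeasure_apply_singleton _ _ (measurableSet_singleton _),
      PMF.uniformOfFintype_apply, ← inv_pow, ENNReal.toReal_pow]
  rw [integral_fintype Integrable.of_finite]
  simp only [smul_eq_mul, Measure.real, hμs]
  -- the sum of norms
  set S : ℝ := ∑ σ : Fin m → Bool, ‖v σ‖ with hS
  have hSnn : 0 ≤ S := Finset.sum_nonneg fun _ _ => norm_nonneg _
  set N : ℝ := (2:ℝ)^m with hN
  have hNpos : 0 < N := by positivity
  have hcard : (Fintype.card (Fin m → Bool) : ℝ) = N := by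
    simp [Fintype.card_fun, hN]
  -- second moment computation
  have hsq : ∑ σ : Fin m → Bool, ‖v σ‖^2 ≤ N * (m * K) := by
    have hnorm : ∀ σ : Fin m → Bool, ‖v σ‖^2 =
        ∑ i : Fin m, ∑ j : Fin m,
          (if σ i then (1:ℝ) else -1) * (if σ j then (1:ℝ) else -1) * ⟪φ (x i), φ (x j)⟫ := by
      intro σ
      rw [← real_inner_self_eq_norm_sq, hv, sum_inner]
      refine Finset.sum_congr rfl fun i _ => ?_
      rw [inner_sum]
      refine Finset.sum_congr rfl fun j _ => ?_
      rw [real_inner_smul_left, real_inner_smul_right]; ring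
    have hswap : ∑ σ : Fin m → Bool, ‖v σ‖^2
        = ∑ i : Fin m, ∑ j : Fin m,
            (∑ σ : Fin m → Bool,
              (if σ i then (1:ℝ) else -1) * (if σ j then (1:ℝ) else -1)) * ⟪φ (x i), φ (x j)⟫ := by
      simp only [hnorm]
      rw [Finset.sum_comm]
      refine Finset.sum_congr rfl fun i _ => ?_
      rw [Finset.sum_comm]
      refine Finset.sum_congr rfl fun j _ => ?_
      rw [Finset.sum_mul]
    have hdiag : ∀ i j : Fin m,
        (∑ σ : Fin m → Bool,
          (if σ i then (1:ℝ) else -1) * (if σ j then (1:ℝ) else -1))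
        = if i = j then N else 0 := by
      intro i j
      by_cases hij : i = j
      · subst hij
        rw [if_pos rfl]
        simp only [eps_sq, Finset.sum_const, nsmul_eq_mul, mul_one]
        rw [Finset.card_univ, hcard]
      · rw [if_neg hij]
        exact sum_eps_mul_eps i j hij
    rw [hswap]
    have : ∑ i : Fin m, ∑ j : Fin m,
        (∑ σ : Fin m → Bool,
          (if σ i then (1:ℝ) else -1) * (if σ j then (1:ℝ) else -1)) * ⟪φ (x i), φ (x j)⟫
        = N * ∑ i : Fin m, ⟪φ (x i), φ (x i)⟫ := by
      simp only [hdiag]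
      rw [Finset.mul_sum]
      refine Finset.sum_congr rfl fun i _ => ?_
      rw [Finset.sum_eq_single i]
      · rw [if_pos rfl]
      · intro j _ hji; rw [if_neg (Ne.symm hji), zero_mul]
      · intro h; exact absurd (Finset.mem_univ i) h
    rw [this]
    have hb : ∑ i : Fin m, ⟪φ (x i), φ (x i)⟫ ≤ m * K := by
      calc ∑ i : Fin m, ⟪φ (x i), φ (x i)⟫ ≤ ∑ _i : Fin m, K :=
            Finset.sum_le_sum fun i _ => hK (x i)
        _ = m * K := by simp [Finset.sum_const, nsmul_eq_mul]
    exact mul_le_mul_of_nonneg_left hb hNpos.le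
  -- Cauchy–Schwarz on the sum
  have hCS : S^2 ≤ N * ∑ σ : Fin m → Bool, ‖v σ‖^2 := by
    have := Finset.sum_mul_sq_le_sq_mul_sq (Finset.univ : Finset (Fin m → Bool))
      (fun _ => (1:ℝ)) (fun σ => ‖v σ‖)
    simpa [hS, Finset.card_univ, hcard] using this
  have hSle : S ≤ N * Real.sqrt (m * K) := by
    have h1 : S^2 ≤ (N * Real.sqrt (m * K))^2 := by
      have h2 : (N * Real.sqrt (m * K))^2 = N^2 * (m * K) := by
        rw [mul_pow, Real.sq_sqrt (by positivity)]
      rw [h2]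
      calc S^2 ≤ N * ∑ σ : Fin m → Bool, ‖v σ‖^2 := hCS
        _ ≤ N * (N * (m * K)) := by gcongr
        _ = N^2 * (m * K) := by ring
    have h3 := Real.sqrt_le_sqrt h1
    rwa [Real.sqrt_sq hSnn, Real.sqrt_sq (by positivity)] at h3
  -- finish
  have hsqrt : Real.sqrt (m * K) = m * Real.sqrt (K / m) := by
    have h2 : (m:ℝ) * K = (m:ℝ)^2 * (K / m) := by field_simp
    rw [h2, Real.sqrt_mul (by positivity), Real.sqrt_sq hm0.le]
  calc ∑ σ : Fin m → Bool, ((2:ℝ)^m)⁻¹ * ((1 / m) * ‖v σ‖)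
      = N⁻¹ * (1 / m) * S := by
        rw [hS, Finset.mul_sum]
        exact Finset.sum_congr rfl fun σ _ => by rw [hN]; ring
    _ ≤ N⁻¹ * (1 / m) * (N * Real.sqrt (m * K)) := by
        have : 0 ≤ N⁻¹ * (1 / m) := by positivity
        exact mul_le_mul_of_nonneg_left hSle this
    _ = Real.sqrt (K / m) := by
        rw [hsqrt]
        field_simp
end

section
/- (Bias bound under the null) Let F be the unit ball of an RKHS with kernel k, 0 ≤ k ≤ K, and let X = (x_1,…,x_m) and X' = (x'_1,…,x'_m) be independent i.i.d. m-samples from the same distribution p. Then E_{X,X'} sup_{f∈F} (1/m) Σ_{i=1}^m (f(x_i) − f(x'_i)) ≤ [ (2/m) E_{x,x'∼p}(k(x,x) − k(x,x')) ]^{1/2} ≤ (2K/m)^{1/2}. -/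
open MeasureTheory
open scoped RealInnerProductSpace BigOperators

section helpers

variable {X : Type*} [MeasurableSpace X] {H : Type*} [NormedAddCommGroup H]
  [InnerProductSpace ℝ H]

lemma mmd_csSup_inner_unit_ball (c : ℝ) (hc : 0 ≤ c) (v : H) :
    sSup {r : ℝ | ∃ f : H, ‖f‖ ≤ 1 ∧ r = c * ⟪f, v⟫} = c * ‖v‖ := by
  have hub : ∀ r ∈ {r : ℝ | ∃ f : H, ‖f‖ ≤ 1 ∧ r = c * ⟪f, v⟫}, r ≤ c * ‖v‖ := by
    rintro r ⟨f, hf, rfl⟩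
    have h1 : ⟪f, v⟫ ≤ ‖v‖ := by
      calc ⟪f, v⟫ ≤ ‖f‖ * ‖v‖ := real_inner_le_norm f v
        _ ≤ 1 * ‖v‖ := mul_le_mul_of_nonneg_right hf (norm_nonneg v)
        _ = ‖v‖ := one_mul _
    exact mul_le_mul_of_nonneg_left h1 hc
  have hmem : c * ‖v‖ ∈ {r : ℝ | ∃ f : H, ‖f‖ ≤ 1 ∧ r = c * ⟪f, v⟫} := by
    rcases eq_or_ne v 0 with rfl | hv
    · exact ⟨0, by simp⟩
    · refine ⟨‖v‖⁻¹ • v, ?_, ?_⟩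
      · rw [norm_smul, norm_inv, norm_norm, inv_mul_cancel₀ (norm_ne_zero_iff.2 hv)]
      · rw [real_inner_smul_left, real_inner_self_eq_norm_mul_norm]
        field_simp
  exact le_antisymm (csSup_le ⟨_, hmem⟩ hub) (le_csSup ⟨_, hub⟩ hmem)

lemma mmd_measurePreserving_eval_pi {m : ℕ} (p : Measure X) [IsProbabilityMeasure p] (i : Fin m) :
    MeasurePreserving (Function.eval i) (Measure.pi fun _ : Fin m => p) p := by
  classical
  refine ⟨measurable_pi_apply i, ?_⟩
  ext s hs
  rw [Measure.map_apply (measurable_pi_apply i) hs, Set.eval_preimage, Measure.pi_pi,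
    Finset.prod_eq_single i (fun j _ hj => by simp [Function.update_of_ne hj]) (by simp),
    Function.update_self]

lemma mmd_measurePreserving_evalPair_pi {m : ℕ} (p : Measure X) [IsProbabilityMeasure p]
    {i j : Fin m} (hij : i ≠ j) :
    MeasurePreserving (fun y : Fin m → X => (y i, y j))
      (Measure.pi fun _ : Fin m => p) (p.prod p) := by
  classical
  have hmeas : Measurable fun y : Fin m → X => (y i, y j) :=
    (measurable_pi_apply i).prodMk (measurable_pi_apply j)
  refine ⟨hmeas, ?_⟩
  refine (Measure.prod_eq fun s t hs ht => ?_).symm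
  rw [Measure.map_apply hmeas (hs.prod ht)]
  have hpre : (fun y : Fin m → X => (y i, y j)) ⁻¹' (s ×ˢ t)
      = Set.pi Set.univ (fun l => (Function.update (fun _ => (Set.univ : Set X)) i s l) ∩
          (Function.update (fun _ => (Set.univ : Set X)) j t l)) := by
    ext y
    simp only [Set.mem_preimage, Set.mem_prod, Set.mem_pi, Set.mem_univ, true_implies,
      Set.mem_inter_iff]
    constructor
    · rintro ⟨h1, h2⟩ l
      constructor
      · rcases eq_or_ne l i with rfl | hl
        · simpa using h1
        · simp [Function.update_of_ne hl]
      · rcases eq_or_ne l j with rfl | hl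
        · simpa using h2
        · simp [Function.update_of_ne hl]
    · intro h
      exact ⟨by simpa using (h i).1, by simpa using (h j).2⟩
  rw [hpre, Measure.pi_pi]
  have hout : ∀ l ∈ Finset.univ, l ∉ ({i, j} : Finset (Fin m)) →
      p ((Function.update (fun _ => (Set.univ : Set X)) i s l) ∩
        (Function.update (fun _ => (Set.univ : Set X)) j t l)) = 1 := by
    intro l _ hl
    simp only [Finset.mem_insert, Finset.mem_singleton, not_or] at hl
    simp [Function.update_of_ne hl.1, Function.update_of_ne hl.2]
  rw [← Finset.prod_subset (Finset.subset_univ ({i, j} : Finset (Fin m))) hout,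
    Finset.prod_pair hij]
  simp [Function.update_self, Function.update_of_ne hij, Function.update_of_ne hij.symm]

end helpers

/-- Bias bound under the null: for two independent i.i.d. `m`-samples from
`p`, `E sup_{‖f‖≤1} (1/m) Σ (f(x_i) - f(x'_i)) ≤ √((2/m) E(k(x,x) - k(x,x'))) ≤ √(2K/m)`. -/
theorem mmd_bias_bound_null
    {X : Type*} [MeasurableSpace X] {H : Type*} [NormedAddCommGroup H]
    [InnerProductSpace ℝ H] [CompleteSpace H]
    (φ : X → H) (K : ℝ)
    (hk0 : ∀ x y : X, 0 ≤ ⟪φ x, φ y⟫) (hkK : ∀ x y : X, ⟪φ x, φ y⟫ ≤ K)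
    (p : Measure X) [IsProbabilityMeasure p]
    (hp : Integrable φ p) (hdiag : Integrable (fun x => ⟪φ x, φ x⟫) p)
    (m : ℕ) (hm : 1 ≤ m) :
    (∫ ω : (Fin m → X) × (Fin m → X),
        sSup {r : ℝ | ∃ f : H, ‖f‖ ≤ 1 ∧
          r = (1 / (m : ℝ)) *
                ∑ i : Fin m, (⟪f, φ (ω.1 i)⟫ - ⟪f, φ (ω.2 i)⟫)}
        ∂((Measure.pi fun _ : Fin m => p).prod (Measure.pi fun _ : Fin m => p)))
      ≤ Real.sqrt ((2 / (m : ℝ)) *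
          ((∫ x, ⟪φ x, φ x⟫ ∂p) - ∫ w : X × X, ⟪φ w.1, φ w.2⟫ ∂p.prod p))
    ∧ Real.sqrt ((2 / (m : ℝ)) *
          ((∫ x, ⟪φ x, φ x⟫ ∂p) - ∫ w : X × X, ⟪φ w.1, φ w.2⟫ ∂p.prod p))
        ≤ Real.sqrt (2 * K / m) := by
  classical
  have hφ : AEStronglyMeasurable φ p := hp.1
  have hm0 : (m : ℝ) ≠ 0 := Nat.cast_ne_zero.2 (by omega)
  set μm : Measure (Fin m → X) := Measure.pi fun _ : Fin m => p with hμm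
  set μ : Measure ((Fin m → X) × (Fin m → X)) := μm.prod μm with hμdef
  haveI : IsProbabilityMeasure μm := by rw [hμm]; infer_instance
  haveI : IsProbabilityMeasure μ := by rw [hμdef]; infer_instance
  set D : ℝ := ∫ x, ⟪φ x, φ x⟫ ∂p with hDdef
  set A : ℝ := ∫ w : X × X, ⟪φ w.1, φ w.2⟫ ∂p.prod p with hAdef
  -- measure preserving coordinate maps
  have hev : ∀ i : Fin m, MeasurePreserving (Function.eval i) μm p := fun i => by
    rw [hμm]; exact mmd_measurePreserving_eval_pi p i
  have hfst : MeasurePreserving Prod.fst μ μm := ⟨measurable_fst, by rw [hμdef]; simp⟩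
  have hsnd : MeasurePreserving Prod.snd μ μm := ⟨measurable_snd, by rw [hμdef]; simp⟩
  have hc1 : ∀ i : Fin m,
      MeasurePreserving (fun ω : (Fin m → X) × (Fin m → X) => ω.1 i) μ p := fun i => by
    exact (hev i).comp hfst
  have hc2 : ∀ i : Fin m,
      MeasurePreserving (fun ω : (Fin m → X) × (Fin m → X) => ω.2 i) μ p := fun i => by
    exact (hev i).comp hsnd
  -- kernel functions are a.e. strongly measurable
  have hpfst : MeasurePreserving Prod.fst (p.prod p) p := ⟨measurable_fst, by simp⟩
  have hpsnd : MeasurePreserving Prod.snd (p.prod p) p := ⟨measurable_snd, by simp⟩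
  have hκA : AEStronglyMeasurable (fun w : X × X => ⟪φ w.1, φ w.2⟫) (p.prod p) :=
    (hφ.comp_quasiMeasurePreserving hpfst.quasiMeasurePreserving).inner
      (hφ.comp_quasiMeasurePreserving hpsnd.quasiMeasurePreserving)
  have hκD : AEStronglyMeasurable (fun x : X => ⟪φ x, φ x⟫) p := hφ.inner hφ
  have hbound : ∀ x y : X, ‖⟪φ x, φ y⟫‖ ≤ K := fun x y => by
    rw [Real.norm_eq_abs, abs_of_nonneg (hk0 x y)]; exact hkK x y
  have hIA : Integrable (fun w : X × X => ⟪φ w.1, φ w.2⟫) (p.prod p) :=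
    Integrable.mono' (integrable_const K) hκA (ae_of_all _ fun w => hbound _ _)
  -- transfer of integrals along measure preserving maps
  have htrans : ∀ {T : (Fin m → X) × (Fin m → X) → X × X}, MeasurePreserving T μ (p.prod p) →
      Integrable (fun ω => ⟪φ (T ω).1, φ (T ω).2⟫) μ ∧
      ∫ ω, ⟪φ (T ω).1, φ (T ω).2⟫ ∂μ = A := by
    intro T hT
    have h1 : AEStronglyMeasurable (fun w : X × X => ⟪φ w.1, φ w.2⟫) (μ.map T) := by
      rw [hT.map_eq]; exact hκA
    constructor
    · exact (integrable_map_measure h1 hT.measurable.aemeasurable).1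
        (by rw [hT.map_eq]; exact hIA)
    · rw [hAdef, ← hT.map_eq, integral_map hT.measurable.aemeasurable h1]
  have htransD : ∀ {T : (Fin m → X) × (Fin m → X) → X}, MeasurePreserving T μ p →
      Integrable (fun ω => ⟪φ (T ω), φ (T ω)⟫) μ ∧
      ∫ ω, ⟪φ (T ω), φ (T ω)⟫ ∂μ = D := by
    intro T hT
    have h1 : AEStronglyMeasurable (fun x : X => ⟪φ x, φ x⟫) (μ.map T) := by
      rw [hT.map_eq]; exact hκD
    constructor
    · exact (integrable_map_measure h1 hT.measurable.aemeasurable).1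
        (by rw [hT.map_eq]; exact hdiag)
    · rw [hDdef, ← hT.map_eq, integral_map hT.measurable.aemeasurable h1]
  -- the four basic terms
  have h11 : ∀ i j : Fin m, Integrable (fun ω : (Fin m → X) × (Fin m → X) =>
        ⟪φ (ω.1 i), φ (ω.1 j)⟫) μ ∧
      ∫ ω : (Fin m → X) × (Fin m → X), ⟪φ (ω.1 i), φ (ω.1 j)⟫ ∂μ
        = if i = j then D else A := by
    intro i j
    rcases eq_or_ne i j with rfl | hij
    · simpa using htransD (hc1 i)
    · have hT : MeasurePreserving (fun ω : (Fin m → X) × (Fin m → X) => (ω.1 i, ω.1 j))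
          μ (p.prod p) := by
        exact (mmd_measurePreserving_evalPair_pi p hij).comp hfst
      simpa [hij] using htrans hT
  have h22 : ∀ i j : Fin m, Integrable (fun ω : (Fin m → X) × (Fin m → X) =>
        ⟪φ (ω.2 i), φ (ω.2 j)⟫) μ ∧
      ∫ ω : (Fin m → X) × (Fin m → X), ⟪φ (ω.2 i), φ (ω.2 j)⟫ ∂μ
        = if i = j then D else A := by
    intro i j
    rcases eq_or_ne i j with rfl | hij
    · simpa using htransD (hc2 i)
    · have hT : MeasurePreserving (fun ω : (Fin m → X) × (Fin m → X) => (ω.2 i, ω.2 j))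
          μ (p.prod p) := by
        exact (mmd_measurePreserving_evalPair_pi p hij).comp hsnd
      simpa [hij] using htrans hT
  have h12 : ∀ i j : Fin m, Integrable (fun ω : (Fin m → X) × (Fin m → X) =>
        ⟪φ (ω.1 i), φ (ω.2 j)⟫) μ ∧
      ∫ ω : (Fin m → X) × (Fin m → X), ⟪φ (ω.1 i), φ (ω.2 j)⟫ ∂μ = A := by
    intro i j
    have hT : MeasurePreserving (fun ω : (Fin m → X) × (Fin m → X) => (ω.1 i, ω.2 j))
        μ (p.prod p) := by
      exact (hev i).prod (hev j)
    exact htrans hT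
  have h21 : ∀ i j : Fin m, Integrable (fun ω : (Fin m → X) × (Fin m → X) =>
        ⟪φ (ω.2 i), φ (ω.1 j)⟫) μ ∧
      ∫ ω : (Fin m → X) × (Fin m → X), ⟪φ (ω.2 i), φ (ω.1 j)⟫ ∂μ = A := by
    intro i j
    have hT : MeasurePreserving (fun ω : (Fin m → X) × (Fin m → X) => (ω.2 i, ω.1 j))
        μ (p.prod p) := by
      have h0 : MeasurePreserving (Prod.swap : ((Fin m → X) × (Fin m → X)) → _) μ μ := by
        exact Measure.measurePreserving_swap
      exact ((hev i).prod (hev j)).comp h0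
    exact htrans hT
  -- the (i,j) cross terms
  have hF : ∀ i j : Fin m, Integrable (fun ω : (Fin m → X) × (Fin m → X) =>
        ⟪φ (ω.1 i) - φ (ω.2 i), φ (ω.1 j) - φ (ω.2 j)⟫) μ ∧
      ∫ ω : (Fin m → X) × (Fin m → X),
          ⟪φ (ω.1 i) - φ (ω.2 i), φ (ω.1 j) - φ (ω.2 j)⟫ ∂μ
        = if i = j then 2 * (D - A) else 0 := by
    intro i j
    have e : (fun ω : (Fin m → X) × (Fin m → X) =>
          ⟪φ (ω.1 i) - φ (ω.2 i), φ (ω.1 j) - φ (ω.2 j)⟫)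
        = fun ω => (⟪φ (ω.1 i), φ (ω.1 j)⟫ - ⟪φ (ω.1 i), φ (ω.2 j)⟫) -
            (⟪φ (ω.2 i), φ (ω.1 j)⟫ - ⟪φ (ω.2 i), φ (ω.2 j)⟫) := by
      funext ω
      rw [inner_sub_left, inner_sub_right, inner_sub_right]
    constructor
    · rw [e]; exact ((h11 i j).1.sub (h12 i j).1).sub ((h21 i j).1.sub (h22 i j).1)
    · have hL : Integrable (fun ω : (Fin m → X) × (Fin m → X) =>
          ⟪φ (ω.1 i), φ (ω.1 j)⟫ - ⟪φ (ω.1 i), φ (ω.2 j)⟫) μ := (h11 i j).1.sub (h12 i j).1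
      have hR : Integrable (fun ω : (Fin m → X) × (Fin m → X) =>
          ⟪φ (ω.2 i), φ (ω.1 j)⟫ - ⟪φ (ω.2 i), φ (ω.2 j)⟫) μ := (h21 i j).1.sub (h22 i j).1
      rw [e, integral_sub hL hR,
        integral_sub (h11 i j).1 (h12 i j).1, integral_sub (h21 i j).1 (h22 i j).1,
        (h11 i j).2, (h12 i j).2, (h21 i j).2, (h22 i j).2]
      rcases eq_or_ne i j with rfl | hij
      · simp; ring
      · simp [hij]
  -- the function g and its properties
  set g : (Fin m → X) × (Fin m → X) → ℝ :=
    fun ω => (1 / (m : ℝ)) * ‖∑ i : Fin m, (φ (ω.1 i) - φ (ω.2 i))‖ with hgdef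
  have hSaesm : AEStronglyMeasurable
      (fun ω : (Fin m → X) × (Fin m → X) => ∑ i : Fin m, (φ (ω.1 i) - φ (ω.2 i))) μ :=
    Finset.aestronglyMeasurable_fun_sum _ fun i _ =>
      (hφ.comp_quasiMeasurePreserving (hc1 i).quasiMeasurePreserving).sub
        (hφ.comp_quasiMeasurePreserving (hc2 i).quasiMeasurePreserving)
  have hgaesm : AEStronglyMeasurable g μ := hSaesm.norm.const_mul _
  have hnφ : ∀ x : X, ‖φ x‖ ≤ Real.sqrt K := fun x => by
    rw [← Real.sqrt_sq (norm_nonneg (φ x))]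
    exact Real.sqrt_le_sqrt (by rw [← real_inner_self_eq_norm_sq]; exact hkK x x)
  have hgbound : ∀ ω, ‖g ω‖ ≤ 2 * Real.sqrt K := by
    intro ω
    rw [hgdef]
    simp only
    rw [Real.norm_eq_abs, abs_of_nonneg (by positivity)]
    have hsum : ‖∑ i : Fin m, (φ (ω.1 i) - φ (ω.2 i))‖ ≤ (m : ℝ) * (2 * Real.sqrt K) := by
      calc ‖∑ i : Fin m, (φ (ω.1 i) - φ (ω.2 i))‖
          ≤ ∑ i : Fin m, ‖φ (ω.1 i) - φ (ω.2 i)‖ := norm_sum_le _ _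
        _ ≤ ∑ _i : Fin m, (2 * Real.sqrt K) := by
            refine Finset.sum_le_sum fun i _ => ?_
            calc ‖φ (ω.1 i) - φ (ω.2 i)‖ ≤ ‖φ (ω.1 i)‖ + ‖φ (ω.2 i)‖ := norm_sub_le _ _
              _ ≤ Real.sqrt K + Real.sqrt K := add_le_add (hnφ _) (hnφ _)
              _ = 2 * Real.sqrt K := by ring
        _ = (m : ℝ) * (2 * Real.sqrt K) := by
            simp [Finset.sum_const, Finset.card_univ]
    calc (1 / (m : ℝ)) * ‖∑ i : Fin m, (φ (ω.1 i) - φ (ω.2 i))‖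
        ≤ (1 / (m : ℝ)) * ((m : ℝ) * (2 * Real.sqrt K)) := by
          exact mul_le_mul_of_nonneg_left hsum (by positivity)
      _ = 2 * Real.sqrt K := by field_simp
  have hg2 : MemLp g 2 μ := MemLp.of_bound hgaesm _ (ae_of_all _ hgbound)
  -- the square integral
  have hgsq : ∫ ω, (g ω) ^ 2 ∂μ = (2 / (m : ℝ)) * (D - A) := by
    have h1 : ∀ ω : (Fin m → X) × (Fin m → X), (g ω) ^ 2
        = (1 / (m : ℝ)) ^ 2 * ∑ ij : Fin m × Fin m,
            ⟪φ (ω.1 ij.1) - φ (ω.2 ij.1), φ (ω.1 ij.2) - φ (ω.2 ij.2)⟫ := by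
      intro ω
      rw [hgdef]
      simp only
      rw [mul_pow]
      congr 1
      rw [← real_inner_self_eq_norm_sq, sum_inner, Fintype.sum_prod_type]
      exact Finset.sum_congr rfl fun i _ => by rw [inner_sum]
    simp_rw [h1]
    rw [integral_const_mul, integral_finset_sum _ (fun ij _ => (hF ij.1 ij.2).1)]
    have h2 : ∑ ij : Fin m × Fin m, (∫ ω : (Fin m → X) × (Fin m → X),
          ⟪φ (ω.1 ij.1) - φ (ω.2 ij.1), φ (ω.1 ij.2) - φ (ω.2 ij.2)⟫ ∂μ)
        = (m : ℝ) * (2 * (D - A)) := by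
      rw [Finset.sum_congr rfl fun ij _ => (hF ij.1 ij.2).2, Fintype.sum_prod_type]
      simp [Finset.sum_ite_eq, Finset.card_univ]
    rw [h2]
    field_simp
  -- Jensen via variance
  have hgnonneg : 0 ≤ ∫ ω, g ω ∂μ := integral_nonneg fun ω => by rw [hgdef]; positivity
  have hmain : ∫ ω, g ω ∂μ ≤ Real.sqrt ((2 / (m : ℝ)) * (D - A)) := by
    have hvar := ProbabilityTheory.variance_nonneg g μ
    rw [ProbabilityTheory.variance_eq_sub hg2] at hvar
    have hsq' : ∫ ω, (g ^ 2) ω ∂μ = (2 / (m : ℝ)) * (D - A) := by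
      rw [← hgsq]
      exact integral_congr_ae (ae_of_all _ fun ω => by simp [Pi.pow_apply])
    rw [Real.le_sqrt hgnonneg (by rw [← hgsq]; exact integral_nonneg fun ω => sq_nonneg _)]
    calc (∫ ω, g ω ∂μ) ^ 2 ≤ ∫ ω, (g ^ 2) ω ∂μ := by linarith
      _ = (2 / (m : ℝ)) * (D - A) := hsq'
  constructor
  · -- rewrite the integrand as g
    have hpt : ∀ ω : (Fin m → X) × (Fin m → X),
        sSup {r : ℝ | ∃ f : H, ‖f‖ ≤ 1 ∧
          r = (1 / (m : ℝ)) * ∑ i : Fin m, (⟪f, φ (ω.1 i)⟫ - ⟪f, φ (ω.2 i)⟫)} = g ω := by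
      intro ω
      have key : ∀ f : H, ∑ i : Fin m, (⟪f, φ (ω.1 i)⟫ - ⟪f, φ (ω.2 i)⟫)
          = ⟪f, ∑ i : Fin m, (φ (ω.1 i) - φ (ω.2 i))⟫ := by
        intro f
        rw [inner_sum]
        exact Finset.sum_congr rfl fun i _ => (inner_sub_right _ _ _).symm
      simp_rw [key]
      rw [hgdef]
      exact mmd_csSup_inner_unit_ball _ (by positivity) _
    calc (∫ ω : (Fin m → X) × (Fin m → X),
          sSup {r : ℝ | ∃ f : H, ‖f‖ ≤ 1 ∧
            r = (1 / (m : ℝ)) * ∑ i : Fin m, (⟪f, φ (ω.1 i)⟫ - ⟪f, φ (ω.2 i)⟫)} ∂μ)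
        = ∫ ω, g ω ∂μ := integral_congr_ae (ae_of_all _ hpt)
      _ ≤ Real.sqrt ((2 / (m : ℝ)) * (D - A)) := hmain
  · apply Real.sqrt_le_sqrt
    have hD : D ≤ K := by
      rw [hDdef]
      calc ∫ x, ⟪φ x, φ x⟫ ∂p ≤ ∫ _x, K ∂p :=
            integral_mono hdiag (integrable_const K) fun x => hkK x x
        _ = K := by simp
    have hA0 : 0 ≤ A := by
      rw [hAdef]; exact integral_nonneg fun w => hk0 _ _
    have h2m : (0 : ℝ) ≤ 2 / (m : ℝ) := by positivity
    calc (2 / (m : ℝ)) * (D - A) ≤ (2 / (m : ℝ)) * K :=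
          mul_le_mul_of_nonneg_left (by linarith) h2m
      _ = 2 * K / m := by ring
end

section
/- (Hoeffding bound for the unbiased MMD U-statistic) Assume 0 ≤ k(x,y) ≤ K, so the U-statistic kernel h(z,z') = k(x,x') + k(y,y') − k(x,y') − k(x',y) satisfies −2K ≤ h ≤ 2K. Then for the one-sample U-statistic MMD_u²(X,Y) = (1/(m(m−1))) Σ_{i≠j} h(z_i,z_j) on i.i.d. z_i, Pr{ MMD_u² − MMD² > t } ≤ exp(−t² ⌊m/2⌋ / (8K²)), and the same bound holds for deviations below −t. -/
open MeasureTheory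
open scoped BigOperators

/-- Analytic core of Hoeffding's lemma. -/
lemma hoeffding_core (p : ℝ) (hp0 : 0 ≤ p) (hp1 : p ≤ 1) (u : ℝ) :
    (1 - p) * Real.exp (-p * u) + p * Real.exp ((1 - p) * u) ≤ Real.exp (u ^ 2 / 8) := by
  set D : ℝ → ℝ := fun v => 1 - p + p * Real.exp v with hDdef
  have hD : ∀ v, 0 < D v := by
    intro v
    rcases eq_or_lt_of_le hp1 with rfl | h
    · simp [hDdef, Real.exp_pos]
    · have := mul_nonneg hp0 (Real.exp_pos v).le
      simp only [hDdef]; linarith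
  set G : ℝ → ℝ := fun v => v / 4 + p - p * Real.exp v / D v with hGdef
  set F : ℝ → ℝ := fun v => v ^ 2 / 8 + p * v - Real.log (D v) with hFdef
  have hD' : ∀ v, HasDerivAt D (p * Real.exp v) v := by
    intro v
    exact ((Real.hasDerivAt_exp v).const_mul p).const_add (1 - p)
  have hF' : ∀ v, HasDerivAt F (G v) v := by
    intro v
    have hlog : HasDerivAt (fun w => Real.log (D w)) (p * Real.exp v / D v) v :=
      (hD' v).log (hD v).ne'
    have h1 : HasDerivAt (fun w : ℝ => w ^ 2 / 8 + p * w) (v / 4 + p) v := by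
      have := ((hasDerivAt_pow 2 v).div_const 8).add ((hasDerivAt_id v).const_mul p)
      convert this using 1
      · rfl
      · rfl
      · rfl
      · simp; ring
    exact h1.sub hlog
  have hG' : ∀ v, HasDerivAt G
      (1 / 4 - (p * Real.exp v * D v - p * Real.exp v * (p * Real.exp v)) / D v ^ 2) v := by
    intro v
    have hdiv : HasDerivAt (fun w => p * Real.exp w / D w)
        ((p * Real.exp v * D v - p * Real.exp v * (p * Real.exp v)) / D v ^ 2) v :=
      ((Real.hasDerivAt_exp v).const_mul p).div (hD' v) (hD v).ne'
    have h2 : HasDerivAt (fun w : ℝ => w / 4 + p) (1 / 4) v := by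
      simpa using ((hasDerivAt_id v).div_const 4).add_const p
    exact h2.sub hdiv
  have hG'nonneg : ∀ v,
      0 ≤ 1 / 4 - (p * Real.exp v * D v - p * Real.exp v * (p * Real.exp v)) / D v ^ 2 := by
    intro v
    have hDv := hD v
    have hA : 0 ≤ p * Real.exp v := mul_nonneg hp0 (Real.exp_pos v).le
    have key : (p * Real.exp v * D v - p * Real.exp v * (p * Real.exp v)) / D v ^ 2 ≤ 1 / 4 := by
      rw [div_le_iff₀ (by positivity)]
      have hDv' : D v = 1 - p + p * Real.exp v := rfl
      rw [hDv']
      nlinarith [sq_nonneg (1 - p - p * Real.exp v)]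
    linarith
  have hGmono : Monotone G :=
    monotone_of_hasDerivAt_nonneg hG' (fun v => hG'nonneg v)
  have hG0 : G 0 = 0 := by
    simp [hGdef, hDdef, Real.exp_zero]
  have hF0 : F 0 = 0 := by
    simp [hFdef, hDdef, Real.exp_zero]
  have hFcont : Continuous F := by
    have : Differentiable ℝ F := fun v => (hF' v).differentiableAt
    exact this.continuous
  have key : ∀ v, 0 ≤ F v := by
    intro v
    rcases le_total 0 v with hv | hv
    · have hmono : MonotoneOn F (Set.Icc 0 v) := by
        refine monotoneOn_of_hasDerivWithinAt_nonneg (convex_Icc 0 v) hFcont.continuousOn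
          (fun x _ => (hF' x).hasDerivWithinAt) (fun x hx => ?_)
        have hx0 : (0:ℝ) ≤ x := by
          rcases (interior_subset hx) with ⟨h1, h2⟩; exact h1
        have := hGmono hx0
        rw [hG0] at this; exact this
      have := hmono (Set.left_mem_Icc.2 hv) (Set.right_mem_Icc.2 hv) hv
      rw [hF0] at this; exact this
    · have hanti : AntitoneOn F (Set.Icc v 0) := by
        refine antitoneOn_of_hasDerivWithinAt_nonpos (convex_Icc v 0) hFcont.continuousOn
          (fun x _ => (hF' x).hasDerivWithinAt) (fun x hx => ?_)
        have hx0 : x ≤ (0:ℝ) := by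
          rcases (interior_subset hx) with ⟨h1, h2⟩; exact h2
        have := hGmono hx0
        rw [hG0] at this; exact this
      have := hanti (Set.left_mem_Icc.2 hv) (Set.right_mem_Icc.2 hv) hv
      rw [hF0] at this; exact this
  have hlogD : Real.log (D u) ≤ u ^ 2 / 8 + p * u := by
    have := key u; simp only [hFdef] at this; linarith
  have hDle : D u ≤ Real.exp (u ^ 2 / 8 + p * u) :=
    (Real.log_le_iff_le_exp (hD u)).1 hlogD
  have hexpand : (1 - p) * Real.exp (-p * u) + p * Real.exp ((1 - p) * u)
      = Real.exp (-p * u) * D u := by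
    have : (1 - p) * u = u + (-p * u) := by ring
    rw [this, Real.exp_add]
    simp only [hDdef]; ring
  rw [hexpand]
  calc Real.exp (-p * u) * D u ≤ Real.exp (-p * u) * Real.exp (u ^ 2 / 8 + p * u) := by
        exact mul_le_mul_of_nonneg_left hDle (Real.exp_pos _).le
    _ = Real.exp (u ^ 2 / 8) := by
        rw [← Real.exp_add]; congr 1; ring

lemma integrable_of_abs_le {Ω : Type*} [MeasurableSpace Ω] (ρ : Measure Ω) [IsFiniteMeasure ρ]
    {f : Ω → ℝ} (hf : Measurable f) (C : ℝ) (h : ∀ x, |f x| ≤ C) : Integrable f ρ :=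
  Integrable.mono' (integrable_const C) hf.aestronglyMeasurable
    (ae_of_all _ fun x => by simpa [Real.norm_eq_abs] using h x)

/-- Hoeffding's lemma. -/
lemma hoeffding_mgf {Ω : Type*} [MeasurableSpace Ω] (ρ : Measure Ω) [IsProbabilityMeasure ρ]
    (Y : Ω → ℝ) (hY : Measurable Y) (a b s : ℝ) (hab : ∀ ω, Y ω ∈ Set.Icc a b)
    (hmean : ∫ ω, Y ω ∂ρ = 0) :
    ∫ ω, Real.exp (s * Y ω) ∂ρ ≤ Real.exp (s ^ 2 * (b - a) ^ 2 / 8) := by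
  have hYbd : ∀ ω, |Y ω| ≤ max |a| |b| := by
    intro ω
    obtain ⟨h1, h2⟩ := hab ω
    rw [abs_le]
    constructor
    · calc -(max |a| |b|) ≤ -|a| := by simp [le_max_left]
        _ ≤ a := neg_abs_le a
        _ ≤ Y ω := h1
    · calc Y ω ≤ b := h2
        _ ≤ |b| := le_abs_self b
        _ ≤ max |a| |b| := le_max_right _ _
  have hYint : Integrable Y ρ := integrable_of_abs_le ρ hY _ hYbd
  have ha : a ≤ 0 := by
    have : ∫ _ : Ω, a ∂ρ ≤ ∫ ω, Y ω ∂ρ :=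
      integral_mono (integrable_const a) hYint fun ω => (hab ω).1
    rwa [integral_const, probReal_univ, one_smul, hmean] at this
  have hb : 0 ≤ b := by
    have : ∫ ω, Y ω ∂ρ ≤ ∫ _ : Ω, b ∂ρ :=
      integral_mono hYint (integrable_const b) fun ω => (hab ω).2
    rwa [integral_const, probReal_univ, one_smul, hmean] at this
  rcases eq_or_lt_of_le (ha.trans hb) with heq | hlt
  · -- degenerate: a = b = 0
    have ha0 : a = 0 := le_antisymm ha (heq ▸ hb)
    have hb0 : b = 0 := heq ▸ ha0.symm ▸ rfl
    have hY0 : ∀ ω, Y ω = 0 := by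
      intro ω; obtain ⟨h1, h2⟩ := hab ω
      rw [ha0] at h1; rw [hb0] at h2; linarith
    simp only [hY0, mul_zero, Real.exp_zero]
    rw [integral_const, probReal_univ, one_smul]
    exact Real.one_le_exp (by positivity)
  · have hba : (0:ℝ) < b - a := sub_pos.2 hlt
    set c₁ : ℝ := (b * Real.exp (s * a) - a * Real.exp (s * b)) / (b - a) with hc₁
    set c₂ : ℝ := (Real.exp (s * b) - Real.exp (s * a)) / (b - a) with hc₂
    have pointwise : ∀ ω, Real.exp (s * Y ω) ≤ c₁ + c₂ * Y ω := by
      intro ω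
      obtain ⟨h1, h2⟩ := hab ω
      have w1 : (0:ℝ) ≤ (b - Y ω) / (b - a) := div_nonneg (by linarith) hba.le
      have w2 : (0:ℝ) ≤ (Y ω - a) / (b - a) := div_nonneg (by linarith) hba.le
      have wsum : (b - Y ω) / (b - a) + (Y ω - a) / (b - a) = 1 := by
        field_simp
        ring
      have hcomb := convexOn_exp.2 (Set.mem_univ (s * a)) (Set.mem_univ (s * b)) w1 w2 wsum
      have harg : ((b - Y ω) / (b - a)) • (s * a) + ((Y ω - a) / (b - a)) • (s * b) = s * Y ω := by
        simp only [smul_eq_mul]; field_simp; ring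
      rw [harg] at hcomb
      calc Real.exp (s * Y ω) ≤ (b - Y ω) / (b - a) * Real.exp (s * a)
            + (Y ω - a) / (b - a) * Real.exp (s * b) := by simpa using hcomb
        _ = c₁ + c₂ * Y ω := by rw [hc₁, hc₂]; field_simp; ring
    have hexpint : Integrable (fun ω => Real.exp (s * Y ω)) ρ := by
      refine integrable_of_abs_le ρ (Real.measurable_exp.comp (hY.const_mul s))
        (Real.exp (|s| * max |a| |b|)) (fun ω => ?_)
      rw [abs_of_pos (Real.exp_pos _)]
      apply Real.exp_le_exp.2
      calc s * Y ω ≤ |s * Y ω| := le_abs_self _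
        _ = |s| * |Y ω| := abs_mul s (Y ω)
        _ ≤ |s| * max |a| |b| := mul_le_mul_of_nonneg_left (hYbd ω) (abs_nonneg s)
    have hlin : ∫ ω, (c₁ + c₂ * Y ω) ∂ρ = c₁ := by
      rw [integral_add (integrable_const c₁) (hYint.const_mul c₂), integral_const,
        integral_const_mul, hmean, probReal_univ]
      simp
    have hint : ∫ ω, Real.exp (s * Y ω) ∂ρ ≤ c₁ := by
      rw [← hlin]
      exact integral_mono hexpint ((integrable_const c₁).add (hYint.const_mul c₂)) pointwise
    -- now bound c₁ via hoeffding_core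
    set p : ℝ := -a / (b - a) with hp
    set u : ℝ := s * (b - a) with hu
    have hp0 : 0 ≤ p := div_nonneg (neg_nonneg.2 ha) hba.le
    have hp1 : p ≤ 1 := by
      rw [hp, div_le_one hba]; linarith
    have hcore := hoeffding_core p hp0 hp1 u
    have h1 : -p * u = s * a := by rw [hp, hu]; field_simp
    have h2 : (1 - p) * u = s * b := by rw [hp, hu]; field_simp; ring
    have hc1eq : c₁ = (1 - p) * Real.exp (-p * u) + p * Real.exp ((1 - p) * u) := by
      rw [h1, h2, hc₁, hp]
      field_simp
      ring
    have huu : u ^ 2 / 8 = s ^ 2 * (b - a) ^ 2 / 8 := by rw [hu]; ring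
    calc ∫ ω, Real.exp (s * Y ω) ∂ρ ≤ c₁ := hint
      _ ≤ Real.exp (u ^ 2 / 8) := by rw [hc1eq]; exact hcore
      _ = Real.exp (s ^ 2 * (b - a) ^ 2 / 8) := by rw [huu]

lemma perm_pair_sum_eq {m : ℕ} (f : Fin m → Fin m → ℝ) {a b i j : Fin m}
    (hab : a ≠ b) (hij : i ≠ j) :
    ∑ σ : Equiv.Perm (Fin m), f (σ a) (σ b) = ∑ σ : Equiv.Perm (Fin m), f (σ i) (σ j) := by
  obtain ⟨τ, hτa, hτb⟩ : ∃ τ : Equiv.Perm (Fin m), τ a = i ∧ τ b = j := by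
    refine ⟨(Equiv.swap (Equiv.swap a i b) j) * Equiv.swap a i, ?_, ?_⟩
    · simp only [Equiv.Perm.mul_apply]
      rw [Equiv.swap_apply_left]
      refine Equiv.swap_apply_of_ne_of_ne (fun hc => ?_) hij
      have : Equiv.swap a i a = Equiv.swap a i b := by
        rw [Equiv.swap_apply_left]; exact hc
      exact hab ((Equiv.swap a i).injective this)
    · simp only [Equiv.Perm.mul_apply]
      rw [Equiv.swap_apply_left]
  exact (Fintype.sum_equiv (Equiv.mulRight τ) (fun σ => f (σ i) (σ j))
    (fun σ => f (σ a) (σ b))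
    (fun σ => by simp [Equiv.Perm.mul_apply, hτa, hτb])).symm

/-- One-sided Hoeffding tail bound for the U-statistic. -/
lemma ustat_tail {Z : Type*} [MeasurableSpace Z] (h : Z → Z → ℝ)
    (hmeas : Measurable fun w : Z × Z => h w.1 w.2)
    (c : ℝ) (hc : 0 < c) (hb : ∀ z z', |h z z'| ≤ c)
    (μ : Measure Z) [IsProbabilityMeasure μ]
    (m : ℕ) (hm : 2 ≤ m) (t : ℝ) (ht : 0 < t) :
    (Measure.pi fun _ : Fin m => μ)
      {z | (∫ w : Z × Z, h w.1 w.2 ∂μ.prod μ) + t <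
        (1 / ((m : ℝ) * ((m : ℝ) - 1))) *
          ∑ i : Fin m, ∑ j : Fin m, if i ≠ j then h (z i) (z j) else 0}
      ≤ ENNReal.ofReal (Real.exp (-(t ^ 2) * ((m / 2 : ℕ) : ℝ) / (2 * c ^ 2))) := by
  classical
  set n : ℕ := m / 2 with hn
  have hn1 : 1 ≤ n := by omega
  have h2n : 2 * n ≤ m := by omega
  have hnR : (0 : ℝ) < (n : ℝ) := by exact_mod_cast Nat.pos_of_ne_zero (by omega)
  have hmR : (2 : ℝ) ≤ (m : ℝ) := by exact_mod_cast hm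
  have hmm : (0 : ℝ) < (m : ℝ) * ((m : ℝ) - 1) := by nlinarith
  have hfac0 : ((m.factorial : ℝ)) ≠ 0 := by
    exact_mod_cast Nat.factorial_ne_zero m
  set θ : ℝ := ∫ w : Z × Z, h w.1 w.2 ∂μ.prod μ with hθ
  set ν : Measure (Fin m → Z) := Measure.pi fun _ : Fin m => μ with hν
  haveI : IsProbabilityMeasure ν := by rw [hν]; infer_instance
  set er : Fin n → Fin m := fun r => ⟨2 * r.1, by have := r.2; omega⟩ with her
  set od : Fin n → Fin m := fun r => ⟨2 * r.1 + 1, by have := r.2; omega⟩ with hod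
  set T : (Fin m → Z) → ℝ :=
    fun z => ∑ i : Fin m, ∑ j : Fin m, if i ≠ j then h (z i) (z j) else 0 with hT
  set U : (Fin m → Z) → ℝ := fun z => (1 / ((m : ℝ) * ((m : ℝ) - 1))) * T z with hU
  set V : Equiv.Perm (Fin m) → (Fin m → Z) → ℝ :=
    fun σ z => ((n : ℝ))⁻¹ * ∑ r : Fin n, h (z (σ (er r))) (z (σ (od r))) with hV
  have hmeas2 : ∀ i j : Fin m, Measurable fun z : Fin m → Z => h (z i) (z j) := by
    intro i j
    have heq : (fun z : Fin m → Z => h (z i) (z j))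
        = (fun w : Z × Z => h w.1 w.2) ∘ (fun z => (z i, z j)) := rfl
    rw [heq]
    exact hmeas.comp ((measurable_pi_apply i).prodMk (measurable_pi_apply j))
  have hTmeas : Measurable T := by
    rw [hT]
    refine Finset.measurable_sum _ (fun i _ => Finset.measurable_sum _ (fun j _ => ?_))
    by_cases hij : i ≠ j
    · simpa [hij] using hmeas2 i j
    · simp [hij]
  have hUmeas : Measurable U := hTmeas.const_mul _
  have hVmeas : ∀ σ, Measurable (V σ) :=
    fun σ => (Finset.measurable_sum _ (fun r _ => hmeas2 _ _)).const_mul _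
  -- bounds
  have hite_bd : ∀ (i j : Fin m) (z : Fin m → Z),
      |if i ≠ j then h (z i) (z j) else 0| ≤ c := by
    intro i j z
    split
    · exact hb _ _
    · simpa using hc.le
  have hTbd : ∀ z, |T z| ≤ (m : ℝ) ^ 2 * c := by
    intro z
    calc |T z| ≤ ∑ i : Fin m, |∑ j : Fin m, if i ≠ j then h (z i) (z j) else 0| :=
          Finset.abs_sum_le_sum_abs _ _
      _ ≤ ∑ i : Fin m, ∑ j : Fin m, |if i ≠ j then h (z i) (z j) else 0| :=
          Finset.sum_le_sum (fun i _ => Finset.abs_sum_le_sum_abs _ _)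
      _ ≤ ∑ _i : Fin m, ∑ _j : Fin m, c :=
          Finset.sum_le_sum (fun i _ => Finset.sum_le_sum (fun j _ => hite_bd i j z))
      _ = (m : ℝ) ^ 2 * c := by
          simp [Finset.sum_const, Finset.card_univ, mul_assoc]
          ring
  have hUbd : ∀ z, |U z| ≤ (1 / ((m : ℝ) * ((m : ℝ) - 1))) * ((m : ℝ) ^ 2 * c) := by
    intro z
    rw [hU]
    simp only []
    rw [abs_mul, abs_of_pos (by positivity : (0:ℝ) < 1 / ((m : ℝ) * ((m : ℝ) - 1)))]
    exact mul_le_mul_of_nonneg_left (hTbd z) (by positivity)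
  have hVbd : ∀ σ z, |V σ z| ≤ c := by
    intro σ z
    rw [hV]
    simp only []
    rw [abs_mul, abs_of_pos (inv_pos.2 hnR)]
    have habs : |∑ r : Fin n, h (z (σ (er r))) (z (σ (od r)))| ≤ (n : ℝ) * c := by
      calc |∑ r : Fin n, h (z (σ (er r))) (z (σ (od r)))|
          ≤ ∑ r : Fin n, |h (z (σ (er r))) (z (σ (od r)))| := Finset.abs_sum_le_sum_abs _ _
        _ ≤ ∑ _r : Fin n, c := Finset.sum_le_sum (fun r _ => hb _ _)
        _ = (n : ℝ) * c := by simp [Finset.sum_const, Finset.card_univ, nsmul_eq_mul]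
    calc ((n : ℝ))⁻¹ * |∑ r : Fin n, h (z (σ (er r))) (z (σ (od r)))|
        ≤ ((n : ℝ))⁻¹ * ((n : ℝ) * c) :=
          mul_le_mul_of_nonneg_left habs (by positivity)
      _ = c := by field_simp
  -- combinatorial identity
  have hpair : ∀ r : Fin n, er r ≠ od r := by
    intro r
    rw [her, hod]
    simp only [ne_eq, Fin.mk.injEq]
    omega
  have hfirst : (0 : ℕ) < n := hn1
  have key : ∀ z, ((m : ℝ) * ((m : ℝ) - 1)) * (∑ σ : Equiv.Perm (Fin m), V σ z)
      = (m.factorial : ℝ) * T z := by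
    intro z
    set S : ℝ := ∑ σ : Equiv.Perm (Fin m),
      h (z (σ (er ⟨0, hfirst⟩))) (z (σ (od ⟨0, hfirst⟩))) with hS
    have e1 : ∀ r : Fin n, (∑ σ : Equiv.Perm (Fin m), h (z (σ (er r))) (z (σ (od r)))) = S := by
      intro r
      exact perm_pair_sum_eq (fun i j => h (z i) (z j)) (hpair r) (hpair ⟨0, hfirst⟩)
    have e2 : (∑ σ : Equiv.Perm (Fin m), V σ z) = S := by
      rw [hV]
      simp only []
      rw [← Finset.mul_sum, Finset.sum_comm]
      rw [Finset.sum_congr rfl (fun r _ => e1 r)]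
      rw [Finset.sum_const, Finset.card_univ, Fintype.card_fin, nsmul_eq_mul]
      field_simp
    have swap1 : ∀ i j : Fin m, i ≠ j →
        S = ∑ σ : Equiv.Perm (Fin m), h (z (σ i)) (z (σ j)) := by
      intro i j hij
      exact perm_pair_sum_eq (fun i j => h (z i) (z j)) (hpair ⟨0, hfirst⟩) hij
    have e3 : ((m : ℝ) * ((m : ℝ) - 1)) * S = (m.factorial : ℝ) * T z := by
      have lhs1 : (∑ i : Fin m, ∑ j : Fin m, if i ≠ j then S else 0)
          = ((m : ℝ) * ((m : ℝ) - 1)) * S := by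
        have inner : ∀ i : Fin m, (∑ j : Fin m, if i ≠ j then S else 0)
            = ((m : ℝ) - 1) * S := by
          intro i
          rw [Finset.sum_congr rfl (fun j _ => show (if i ≠ j then S else 0)
            = S - (if i = j then S else 0) by by_cases hij : i = j <;> simp [hij])]
          rw [Finset.sum_sub_distrib, Finset.sum_ite_eq, Finset.sum_const, Finset.card_univ,
            Fintype.card_fin, nsmul_eq_mul]
          simp; ring
        rw [Finset.sum_congr rfl (fun i _ => inner i), Finset.sum_const, Finset.card_univ,
          Fintype.card_fin, nsmul_eq_mul]
        ring
      have lhs2 : (∑ i : Fin m, ∑ j : Fin m, if i ≠ j then S else 0)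
          = (m.factorial : ℝ) * T z := by
        have step1 : ∀ i j : Fin m, (if i ≠ j then S else 0)
            = ∑ σ : Equiv.Perm (Fin m), (if i ≠ j then h (z (σ i)) (z (σ j)) else 0) := by
          intro i j
          by_cases hij : i ≠ j
          · simp only [if_pos hij]
            exact swap1 i j hij
          · simp [hij]
        rw [Finset.sum_congr rfl (fun i _ => Finset.sum_congr rfl (fun j _ => step1 i j))]
        rw [Finset.sum_congr rfl (fun i _ => Finset.sum_comm), Finset.sum_comm]
        have perσ : ∀ σ : Equiv.Perm (Fin m),
            (∑ i : Fin m, ∑ j : Fin m, if i ≠ j then h (z (σ i)) (z (σ j)) else 0) = T z := by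
          intro σ
          have hF : ∀ i j : Fin m, (if i ≠ j then h (z (σ i)) (z (σ j)) else 0)
              = (fun x y => if x ≠ y then h (z x) (z y) else 0) (σ i) (σ j) := by
            intro i j
            by_cases hij : i = j
            · simp [hij]
            · have hσ : σ i ≠ σ j := fun hc => hij (σ.injective hc)
              simp [hij, hσ]
          calc (∑ i : Fin m, ∑ j : Fin m, if i ≠ j then h (z (σ i)) (z (σ j)) else 0)
              = ∑ i : Fin m, ∑ j : Fin m,
                  (fun x y => if x ≠ y then h (z x) (z y) else 0) (σ i) (σ j) :=
                Finset.sum_congr rfl (fun i _ => Finset.sum_congr rfl (fun j _ => hF i j))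
            _ = ∑ i : Fin m, ∑ j : Fin m,
                  (fun x y => if x ≠ y then h (z x) (z y) else 0) (σ i) j :=
                Finset.sum_congr rfl (fun i _ =>
                  Equiv.sum_comp σ (fun j => (fun x y => if x ≠ y then h (z x) (z y) else 0) (σ i) j))
            _ = ∑ i : Fin m, ∑ j : Fin m,
                  (fun x y => if x ≠ y then h (z x) (z y) else 0) i j :=
                Equiv.sum_comp σ (fun i => ∑ j : Fin m,
                  (fun x y => if x ≠ y then h (z x) (z y) else 0) i j)
            _ = T z := rfl
        rw [Finset.sum_congr rfl (fun σ _ => perσ σ), Finset.sum_const, Finset.card_univ,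
          Fintype.card_perm, Fintype.card_fin, nsmul_eq_mul]
      rw [← lhs1, lhs2]
    rw [e2, e3]
  -- Chernoff parameter
  set lam : ℝ := t * (n : ℝ) / c ^ 2 with hlam
  have hlam0 : 0 ≤ lam := by positivity
  set s : ℝ := lam / (n : ℝ) with hs
  -- Jensen pointwise
  have hjensenEq : ∀ z, lam * U z
      = ∑ σ : Equiv.Perm (Fin m), ((m.factorial : ℝ))⁻¹ • (lam * V σ z) := by
    intro z
    have hsum : (∑ σ : Equiv.Perm (Fin m), ((m.factorial : ℝ))⁻¹ • (lam * V σ z))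
        = ((m.factorial : ℝ))⁻¹ * (lam * ∑ σ : Equiv.Perm (Fin m), V σ z) := by
      simp only [smul_eq_mul]
      rw [← Finset.mul_sum, ← Finset.mul_sum]
    rw [hsum]
    have hVsum : (∑ σ : Equiv.Perm (Fin m), V σ z)
        = (m.factorial : ℝ) * T z / ((m : ℝ) * ((m : ℝ) - 1)) := by
      rw [eq_div_iff hmm.ne']
      linarith [key z]
    rw [hVsum, hU]
    simp only []
    field_simp
  have hjensen : ∀ z, Real.exp (lam * U z)
      ≤ ∑ σ : Equiv.Perm (Fin m), ((m.factorial : ℝ))⁻¹ * Real.exp (lam * V σ z) := by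
    intro z
    have h₀ : ∀ σ ∈ (Finset.univ : Finset (Equiv.Perm (Fin m))),
        (0:ℝ) ≤ ((m.factorial : ℝ))⁻¹ := fun _ _ => by positivity
    have h₁ : (∑ _σ : Equiv.Perm (Fin m), ((m.factorial : ℝ))⁻¹) = 1 := by
      rw [Finset.sum_const, Finset.card_univ, Fintype.card_perm, Fintype.card_fin,
        nsmul_eq_mul]
      field_simp
    have hj := convexOn_exp.map_sum_le h₀ h₁ (fun _ _ => Set.mem_univ _)
      (p := fun σ => lam * V σ z)
    rw [← hjensenEq z] at hj
    simpa [smul_eq_mul] using hj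
  -- integrability
  have hexp_abs : ∀ (f : (Fin m → Z) → ℝ) (C : ℝ), (∀ z, |f z| ≤ C) →
      ∀ z, |Real.exp (lam * f z)| ≤ Real.exp (|lam| * C) := by
    intro f C hC z
    rw [abs_of_pos (Real.exp_pos _)]
    apply Real.exp_le_exp.2
    calc lam * f z ≤ |lam * f z| := le_abs_self _
      _ = |lam| * |f z| := abs_mul _ _
      _ ≤ |lam| * C := mul_le_mul_of_nonneg_left (hC z) (abs_nonneg _)
  have hexpVint : ∀ σ, Integrable (fun z => Real.exp (lam * V σ z)) ν :=
    fun σ => integrable_of_abs_le ν (Real.measurable_exp.comp ((hVmeas σ).const_mul lam)) _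
      (hexp_abs (V σ) c (hVbd σ))
  have hexpUint : Integrable (fun z => Real.exp (lam * U z)) ν :=
    integrable_of_abs_le ν (Real.measurable_exp.comp (hUmeas.const_mul lam)) _
      (hexp_abs U _ hUbd)
  have hmgf_le : ∫ z, Real.exp (lam * U z) ∂ν
      ≤ ∑ σ : Equiv.Perm (Fin m),
          ((m.factorial : ℝ))⁻¹ * ∫ z, Real.exp (lam * V σ z) ∂ν := by
    calc ∫ z, Real.exp (lam * U z) ∂ν
        ≤ ∫ z, (∑ σ : Equiv.Perm (Fin m), ((m.factorial : ℝ))⁻¹ * Real.exp (lam * V σ z)) ∂ν :=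
          integral_mono hexpUint
            (integrable_finset_sum _ (fun σ _ => (hexpVint σ).const_mul _)) hjensen
      _ = ∑ σ : Equiv.Perm (Fin m), ((m.factorial : ℝ))⁻¹ * ∫ z, Real.exp (lam * V σ z) ∂ν := by
          rw [integral_finset_sum _ (fun σ _ => (hexpVint σ).const_mul _)]
          exact Finset.sum_congr rfl (fun σ _ => integral_const_mul _ _)
  -- product structure per permutation
  have hgmeas : Measurable (fun w : Z × Z => Real.exp (s * h w.1 w.2)) :=
    Real.measurable_exp.comp (hmeas.const_mul s)
  have hprod : ∀ σ : Equiv.Perm (Fin m), ∫ z, Real.exp (lam * V σ z) ∂ν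
      = (∫ w : Z × Z, Real.exp (s * h w.1 w.2) ∂μ.prod μ) ^ n := by
    intro σ
    -- the coordinate-pair map
    set Cmap : (Fin m → Z) → (Fin n → Z × Z) :=
      fun z r => (z (σ (er r)), z (σ (od r))) with hCmap
    have hCmeas : Measurable Cmap := by
      rw [hCmap]
      exact measurable_pi_lambda _ (fun r =>
        ((measurable_pi_apply _).prodMk (measurable_pi_apply _)))
    have hrw : ∀ z, Real.exp (lam * V σ z)
        = ∏ r : Fin n, Real.exp (s * h (Cmap z r).1 (Cmap z r).2) := by
      intro z
      rw [← Real.exp_sum]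
      congr 1
      rw [hV]
      simp only [hCmap]
      rw [hs, ← Finset.mul_sum]
      ring
    -- measure map equality
    have hmap : ν.map Cmap = Measure.pi (fun _ : Fin n => μ.prod μ) := by
      set J : Fin n ⊕ Fin n → Fin m :=
        Sum.elim (fun r => σ (er r)) (fun r => σ (od r)) with hJdef
      have hJ : Function.Injective J := by
        rintro (r | r) (q | q) hrq <;>
          simp only [hJdef, Sum.elim_inl, Sum.elim_inr] at hrq <;>
          have h2 := σ.injective hrq <;>
          have h3 := congrArg Fin.val h2 <;>
          simp only [her, hod] at h3
        · have : r = q := Fin.ext (by omega)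
          rw [this]
        · omega
        · omega
        · have : r = q := Fin.ext (by omega)
          rw [this]
      letI : DecidablePred (· ∈ Set.range J) := Classical.decPred _
      set W := {x : Fin m // x ∉ Set.range J} with hW
      set E : ((Fin n ⊕ Fin n) ⊕ W) ≃ Fin m :=
        (Equiv.sumCongr (Equiv.ofInjective J hJ) (Equiv.refl W)).trans
          (Equiv.sumCompl (· ∈ Set.range J)) with hE
      have hEinl : ∀ x, E (Sum.inl x) = J x := by
        intro x
        rw [hE]
        simp
        rfl
      have M1 : MeasurePreserving
          (fun (z : Fin m → Z) (x : (Fin n ⊕ Fin n) ⊕ W) => z (E x))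
          ν (Measure.pi fun _ : (Fin n ⊕ Fin n) ⊕ W => μ) := by
        have h1 := (measurePreserving_piCongrLeft (fun _ : Fin m => μ) E).symm
          (MeasurableEquiv.piCongrLeft (fun _ : Fin m => Z) E)
        have heq : ⇑(MeasurableEquiv.piCongrLeft (fun _ : Fin m => Z) E).symm
            = fun (z : Fin m → Z) x => z (E x) := by
          ext z x
          exact Equiv.piCongrLeft_symm_apply (fun _ => Z) E z x
        rwa [heq, ← hν] at h1
      have M2 := measurePreserving_sumPiEquivProdPi
        (fun _ : (Fin n ⊕ Fin n) ⊕ W => μ)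
      have M3 : MeasurePreserving (Prod.fst :
          ((Fin n ⊕ Fin n) → Z) × (W → Z) → ((Fin n ⊕ Fin n) → Z))
          ((Measure.pi fun _ : Fin n ⊕ Fin n => μ).prod (Measure.pi fun _ : W => μ))
          (Measure.pi fun _ : Fin n ⊕ Fin n => μ) := by
        refine ⟨measurable_fst, ?_⟩
        rw [Measure.map_fst_prod]
        simp
      have M4 := measurePreserving_sumPiEquivProdPi (fun _ : Fin n ⊕ Fin n => μ)
      have M5 := (measurePreserving_arrowProdEquivProdArrow Z Z (Fin n)
        (fun _ => μ) (fun _ => μ)).symm (MeasurableEquiv.arrowProdEquivProdArrow Z Z (Fin n))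
      have comp := (M5.comp (M4.comp (M3.comp (M2.comp M1))))
      have hfun : (⇑(MeasurableEquiv.arrowProdEquivProdArrow Z Z (Fin n)).symm ∘
          (⇑(MeasurableEquiv.sumPiEquivProdPi (fun _ : Fin n ⊕ Fin n => Z)) ∘
            (Prod.fst ∘ (⇑(MeasurableEquiv.sumPiEquivProdPi
              (fun _ : (Fin n ⊕ Fin n) ⊕ W => Z)) ∘
              (fun (z : Fin m → Z) (x : (Fin n ⊕ Fin n) ⊕ W) => z (E x))))))
          = Cmap := by
        funext z
        funext r
        show ((MeasurableEquiv.arrowProdEquivProdArrow Z Z (Fin n)).symm _) r = _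
        simp only [MeasurableEquiv.coe_sumPiEquivProdPi, Function.comp_apply]
        rw [hCmap]
        have : ∀ x, E (Sum.inl x) = J x := hEinl
        simp [MeasurableEquiv.arrowProdEquivProdArrow, Equiv.arrowProdEquivProdArrow,
          Equiv.sumPiEquivProdPi, this, hJdef]
      rw [← hfun]
      exact comp.map_eq
    -- change of variables and factorization
    have hfprodmeas : Measurable (fun w : Fin n → Z × Z =>
        ∏ r : Fin n, Real.exp (s * h (w r).1 (w r).2)) :=
      Finset.measurable_prod _ (fun r _ => hgmeas.comp (measurable_pi_apply r))
    calc ∫ z, Real.exp (lam * V σ z) ∂ν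
        = ∫ z, (∏ r : Fin n, Real.exp (s * h ((Cmap z) r).1 ((Cmap z) r).2)) ∂ν := by
          exact integral_congr_ae (ae_of_all _ hrw)
      _ = ∫ w : Fin n → Z × Z, (∏ r : Fin n, Real.exp (s * h (w r).1 (w r).2)) ∂(ν.map Cmap) := by
          rw [integral_map hCmeas.aemeasurable hfprodmeas.aestronglyMeasurable]
      _ = (∫ w : Z × Z, Real.exp (s * h w.1 w.2) ∂μ.prod μ) ^ n := by
          rw [hmap]
          letI : MeasureSpace (Z × Z) := ⟨μ.prod μ⟩
          haveI : SigmaFinite (volume : Measure (Z × Z)) := by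
            change SigmaFinite (μ.prod μ); infer_instance
          have hvol : Measure.pi (fun _ : Fin n => μ.prod μ)
              = (volume : Measure (Fin n → Z × Z)) := by
            rw [volume_pi]
            rfl
          rw [hvol]
          have hint := MeasureTheory.integral_fintype_prod_eq_pow (ι := Fin n)
            (fun w : Z × Z => Real.exp (s * h w.1 w.2)) (μ := volume)
          rw [volume_pi, hint, Fintype.card_fin]
          rfl
  -- single-factor Hoeffding bound
  have hInth : Integrable (fun w : Z × Z => h w.1 w.2) (μ.prod μ) :=
    integrable_of_abs_le _ hmeas c (fun w => hb _ _)
  have hfactor : ∫ w : Z × Z, Real.exp (s * h w.1 w.2) ∂μ.prod μ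
      ≤ Real.exp (s * θ + s ^ 2 * c ^ 2 / 2) := by
    have hYmeas : Measurable (fun w : Z × Z => h w.1 w.2 - θ) := hmeas.sub measurable_const
    have hmean : ∫ w : Z × Z, (h w.1 w.2 - θ) ∂μ.prod μ = 0 := by
      rw [integral_sub hInth (integrable_const θ), integral_const, probReal_univ]
      simp [hθ]
    have hIcc : ∀ w : Z × Z, h w.1 w.2 - θ ∈ Set.Icc (-c - θ) (c - θ) := by
      intro w
      have := abs_le.1 (hb w.1 w.2)
      constructor <;> [linarith [this.1]; linarith [this.2]]
    have hHo := hoeffding_mgf (μ.prod μ) _ hYmeas (-c - θ) (c - θ) s hIcc hmean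
    have hsplit : (fun w : Z × Z => Real.exp (s * h w.1 w.2))
        = fun w : Z × Z => Real.exp (s * (h w.1 w.2 - θ)) * Real.exp (s * θ) := by
      funext w
      rw [← Real.exp_add]
      congr 1
      ring
    rw [hsplit, integral_mul_const]
    calc (∫ w : Z × Z, Real.exp (s * (h w.1 w.2 - θ)) ∂μ.prod μ) * Real.exp (s * θ)
        ≤ Real.exp (s ^ 2 * ((c - θ) - (-c - θ)) ^ 2 / 8) * Real.exp (s * θ) :=
          mul_le_mul_of_nonneg_right hHo (Real.exp_pos _).le
      _ = Real.exp (s * θ + s ^ 2 * c ^ 2 / 2) := by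
          rw [← Real.exp_add]
          congr 1
          ring
  -- assemble mgf bound
  have hmgf_final : ∫ z, Real.exp (lam * U z) ∂ν
      ≤ Real.exp (lam * θ + lam ^ 2 * c ^ 2 / (2 * (n : ℝ))) := by
    have hB : (∑ σ : Equiv.Perm (Fin m),
        ((m.factorial : ℝ))⁻¹ * ∫ z, Real.exp (lam * V σ z) ∂ν)
        = (∫ w : Z × Z, Real.exp (s * h w.1 w.2) ∂μ.prod μ) ^ n := by
      rw [Finset.sum_congr rfl (fun σ _ => by rw [hprod σ])]
      rw [Finset.sum_const, Finset.card_univ, Fintype.card_perm, Fintype.card_fin,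
        nsmul_eq_mul]
      rw [← mul_assoc, mul_inv_cancel₀ hfac0, one_mul]
    calc ∫ z, Real.exp (lam * U z) ∂ν
        ≤ ∑ σ : Equiv.Perm (Fin m),
            ((m.factorial : ℝ))⁻¹ * ∫ z, Real.exp (lam * V σ z) ∂ν := hmgf_le
      _ = (∫ w : Z × Z, Real.exp (s * h w.1 w.2) ∂μ.prod μ) ^ n := hB
      _ ≤ (Real.exp (s * θ + s ^ 2 * c ^ 2 / 2)) ^ n := by
          apply pow_le_pow_left₀ (integral_nonneg (fun w => (Real.exp_pos _).le)) hfactor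
      _ = Real.exp (lam * θ + lam ^ 2 * c ^ 2 / (2 * (n : ℝ))) := by
          rw [← Real.exp_nat_mul]
          congr 1
          rw [hs]
          field_simp
  -- Chernoff
  have hcher := ProbabilityTheory.measure_ge_le_exp_mul_mgf (X := U) (μ := ν) (t := lam)
    (θ + t) hlam0 hexpUint
  have hmgf_eq : ProbabilityTheory.mgf U ν lam = ∫ z, Real.exp (lam * U z) ∂ν := rfl
  have hexpo : -lam * (θ + t) + (lam * θ + lam ^ 2 * c ^ 2 / (2 * (n : ℝ)))
      = -(t ^ 2) * (n : ℝ) / (2 * c ^ 2) := by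
    rw [hlam]
    field_simp
    ring
  have hreal : Real.exp (-lam * (θ + t)) * ProbabilityTheory.mgf U ν lam
      ≤ Real.exp (-(t ^ 2) * (n : ℝ) / (2 * c ^ 2)) := by
    rw [hmgf_eq]
    calc Real.exp (-lam * (θ + t)) * ∫ z, Real.exp (lam * U z) ∂ν
        ≤ Real.exp (-lam * (θ + t)) * Real.exp (lam * θ + lam ^ 2 * c ^ 2 / (2 * (n : ℝ))) :=
          mul_le_mul_of_nonneg_left hmgf_final (Real.exp_pos _).le
      _ = Real.exp (-(t ^ 2) * (n : ℝ) / (2 * c ^ 2)) := by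
          rw [← Real.exp_add, hexpo]
  show ν {z | θ + t < U z} ≤ _
  calc ν {z | θ + t < U z} ≤ ν {z | θ + t ≤ U z} :=
        measure_mono (fun z hz => show θ + t ≤ U z from le_of_lt hz)
    _ = ENNReal.ofReal ((ν {z | θ + t ≤ U z}).toReal) :=
        (ENNReal.ofReal_toReal (measure_ne_top _ _)).symm
    _ ≤ ENNReal.ofReal (Real.exp (-lam * (θ + t)) * ProbabilityTheory.mgf U ν lam) :=
        ENNReal.ofReal_le_ofReal hcher
    _ ≤ ENNReal.ofReal (Real.exp (-(t ^ 2) * (n : ℝ) / (2 * c ^ 2))) :=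
        ENNReal.ofReal_le_ofReal hreal


/-- Hoeffding bound for the unbiased MMD U-statistic: with kernel values
in `[0, K]` (so the U-statistic kernel `h` takes values in `[-2K, 2K]`), the deviations
of `MMD_u²` from its mean `MMD² = E h(z,z')` satisfy a two-sided exponential bound with
effective sample size `⌊m/2⌋`. -/
theorem mmd_u_sq_hoeffding
    {X : Type*} [MeasurableSpace X] (k : X → X → ℝ)
    (hk : Measurable fun w : X × X => k w.1 w.2)
    (K : ℝ) (hK : 0 < K) (hk0 : ∀ x y, 0 ≤ k x y) (hkK : ∀ x y, k x y ≤ K)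
    (μ : Measure (X × X)) [IsProbabilityMeasure μ]
    (m : ℕ) (hm : 2 ≤ m) (t : ℝ) (ht : 0 < t) :
    ((Measure.pi fun _ : Fin m => μ)
        {z | ((∫ w : (X × X) × (X × X),
                (k w.1.1 w.2.1 + k w.1.2 w.2.2 - k w.1.1 w.2.2 - k w.2.1 w.1.2)
              ∂μ.prod μ) + t) <
            ((1 / ((m : ℝ) * ((m : ℝ) - 1))) *
              ∑ i : Fin m, ∑ j : Fin m,
                if i ≠ j then
                  k (z i).1 (z j).1 + k (z i).2 (z j).2
                    - k (z i).1 (z j).2 - k (z j).1 (z i).2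
                else 0)}
        ≤ ENNReal.ofReal (Real.exp (-(t ^ 2) * ((m / 2 : ℕ) : ℝ) / (8 * K ^ 2))))
    ∧ ((Measure.pi fun _ : Fin m => μ)
        {z | ((1 / ((m : ℝ) * ((m : ℝ) - 1))) *
              ∑ i : Fin m, ∑ j : Fin m,
                (if i ≠ j then
                  k (z i).1 (z j).1 + k (z i).2 (z j).2
                    - k (z i).1 (z j).2 - k (z j).1 (z i).2
                else 0)) <
            ((∫ w : (X × X) × (X × X),
                (k w.1.1 w.2.1 + k w.1.2 w.2.2 - k w.1.1 w.2.2 - k w.2.1 w.1.2)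
              ∂μ.prod μ) - t)}
        ≤ ENNReal.ofReal (Real.exp (-(t ^ 2) * ((m / 2 : ℕ) : ℝ) / (8 * K ^ 2)))) := by

  have hK2 : (0 : ℝ) < 2 * K := by linarith
  set h : (X × X) → (X × X) → ℝ :=
    fun z z' => k z.1 z'.1 + k z.2 z'.2 - k z.1 z'.2 - k z'.1 z.2 with hh
  have hmeas : Measurable fun w : (X × X) × (X × X) => h w.1 w.2 := by
    rw [hh]
    refine Measurable.sub (Measurable.sub (Measurable.add ?_ ?_) ?_) ?_
    · exact hk.comp ((measurable_fst.fst).prodMk (measurable_snd.fst))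
    · exact hk.comp ((measurable_fst.snd).prodMk (measurable_snd.snd))
    · exact hk.comp ((measurable_fst.fst).prodMk (measurable_snd.snd))
    · exact hk.comp ((measurable_snd.fst).prodMk (measurable_fst.snd))
  have hbound : ∀ z z', |h z z'| ≤ 2 * K := by
    intro z z'
    rw [hh, abs_le]
    constructor
    · have := hk0 z.1 z'.1; have := hk0 z.2 z'.2
      have := hkK z.1 z'.2; have := hkK z'.1 z.2
      simp only []
      linarith
    · have := hkK z.1 z'.1; have := hkK z.2 z'.2
      have := hk0 z.1 z'.2; have := hk0 z'.1 z.2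
      simp only []
      linarith
  have hexp : (2 * (2 * K) ^ 2 : ℝ) = 8 * K ^ 2 := by ring
  constructor
  · have h1 := ustat_tail h hmeas (2 * K) hK2 hbound μ m hm t ht
    rw [hexp] at h1
    exact h1
  · have h2 := ustat_tail (fun z z' => -h z z') hmeas.neg (2 * K) hK2
      (fun z z' => by rw [abs_neg]; exact hbound z z') μ m hm t ht
    rw [hexp] at h2
    refine le_trans (le_of_eq ?_) h2
    congr 1
    ext z
    simp only [Set.mem_setOf_eq]
    have hIneg : (∫ w : (X × X) × (X × X), -h w.1 w.2 ∂μ.prod μ)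
        = - ∫ w : (X × X) × (X × X), h w.1 w.2 ∂μ.prod μ := integral_neg _
    have hSneg : (∑ i : Fin m, ∑ j : Fin m, if i ≠ j then -h (z i) (z j) else 0)
        = - ∑ i : Fin m, ∑ j : Fin m, if i ≠ j then h (z i) (z j) else 0 := by
      rw [← Finset.sum_neg_distrib]
      refine Finset.sum_congr rfl (fun i _ => ?_)
      rw [← Finset.sum_neg_distrib]
      refine Finset.sum_congr rfl (fun j _ => ?_)
      split <;> simp
    rw [hIneg, hSneg, mul_neg]
    constructor <;> intro hx <;> linarith
end

section
/- (Third moment of the degenerate U-statistic, leading term) Under the same degeneracy assumptions and E|h|³ < ∞, E[(MMD_u²)³] = (8(n−2)/(n²(n−1)²)) E_{z,z'}[ h(z,z') E_{z''}( h(z,z'') h(z',z'') ) ] + (2/(n(n−1)))² E_{z,z'}[h³(z,z')]. -/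
open MeasureTheory
open scoped BigOperators

namespace U17

variable {Z : Type*} [MeasurableSpace Z] (μ : Measure Z) [IsProbabilityMeasure μ]
variable (h : Z → Z → ℝ)

theorem comp_mp {ι ι' : Type*} [Fintype ι] [Fintype ι'] (g : ι' → ι)
    (hg : Function.Injective g) :
    MeasurePreserving (fun z : ι → Z => z ∘ g)
      (Measure.pi fun _ => μ) (Measure.pi fun _ => μ) := by
  classical
  have hmeas : Measurable (fun z : ι → Z => z ∘ g) :=
    measurable_pi_lambda _ fun i => measurable_pi_apply _
  refine ⟨hmeas, ?_⟩
  refine (Measure.pi_eq fun s hs => ?_).symm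
  have hpre : (fun z : ι → Z => z ∘ g) ⁻¹' (Set.pi Set.univ s)
      = Set.pi Set.univ (fun j => ⋂ (i : ι') (_ : g i = j), s i) := by
    ext z
    simp only [Set.mem_preimage, Set.mem_pi, Set.mem_univ, true_implies, Function.comp_apply,
      Set.mem_iInter]
    constructor
    · intro hz j i hij; subst hij; exact hz i
    · intro hz i; exact hz (g i) i rfl
  rw [Measure.map_apply hmeas (MeasurableSet.univ_pi hs), hpre, Measure.pi_pi]
  have h1 : ∀ j ∈ Finset.univ, j ∉ Finset.univ.image g →
      μ (⋂ (i : ι') (_ : g i = j), s i) = 1 := by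
    intro j _ hj
    simp only [Finset.mem_image, Finset.mem_univ, true_and, not_exists] at hj
    have : (⋂ (i : ι') (_ : g i = j), s i) = Set.univ := by
      ext x; simp only [Set.mem_iInter, Set.mem_univ, iff_true]
      intro i hij; exact absurd hij (hj i)
    rw [this]; exact measure_univ
  rw [← Finset.prod_subset (Finset.subset_univ (Finset.univ.image g)) h1,
    Finset.prod_image (fun i _ i' _ hii' => hg hii')]
  refine Finset.prod_congr rfl fun i _ => ?_
  congr 1
  ext x
  simp only [Set.mem_iInter]
  constructor
  · intro H; exact H i rfl
  · intro hx i' hi'; rwa [hg hi']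

theorem pair_mp {ι : Type*} [Fintype ι] {a b : ι} (hab : a ≠ b) :
    MeasurePreserving (fun z : ι → Z => (z a, z b))
      (Measure.pi fun _ => μ) (μ.prod μ) := by
  have hinj : Function.Injective (![a, b] : Fin 2 → ι) := by
    intro i j hij
    fin_cases i <;> fin_cases j <;> simp_all <;> exact absurd hij (Ne.symm hab)
  have h1 := (measurePreserving_finTwoArrow (α := Z) μ).comp (comp_mp μ ![a, b] hinj)
  have : (MeasurableEquiv.finTwoArrow ∘ fun z : ι → Z => z ∘ ![a, b])
      = fun z : ι → Z => (z a, z b) := by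
    ext z <;> simp [MeasurableEquiv.finTwoArrow]
  rwa [this] at h1

theorem eval_mp {ι : Type*} [Fintype ι] (i : ι) :
    MeasurePreserving (fun z : ι → Z => z i) (Measure.pi fun _ => μ) μ := by
  have h1 := (measurePreserving_funUnique (α := Unit) μ).comp
    (comp_mp μ (fun _ : Unit => i) fun _ _ _ => rfl)
  have : (MeasurableEquiv.funUnique Unit Z ∘ fun z : ι → Z => z ∘ fun _ : Unit => i)
      = fun z : ι → Z => z i := by
    ext z; rfl
  rwa [this] at h1

theorem abs_mul_le3 (x y w : ℝ) : |x * y * w| ≤ |x| ^ 3 + |y| ^ 3 + |w| ^ 3 := by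
  have hx : (0:ℝ) ≤ |x| := abs_nonneg x
  have hy : (0:ℝ) ≤ |y| := abs_nonneg y
  have hw : (0:ℝ) ≤ |w| := abs_nonneg w
  rw [abs_mul, abs_mul]
  nlinarith [sq_nonneg (|x| - |y|), sq_nonneg (|y| - |w|), sq_nonneg (|x| - |w|),
    mul_nonneg (add_nonneg (add_nonneg hx hy) hw)
      (add_nonneg (add_nonneg (sq_nonneg (|x| - |y|)) (sq_nonneg (|y| - |w|)))
        (sq_nonneg (|x| - |w|))), mul_nonneg hx hy, mul_nonneg hy hw, mul_nonneg hx hw]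

theorem meas_hz (hmeas : Measurable fun w : Z × Z => h w.1 w.2)
    {ι : Type*} [Fintype ι] (a b : ι) :
    Measurable fun z : ι → Z => h (z a) (z b) :=
  by
  have hp : Measurable fun z : ι → Z => (z a, z b) :=
    (measurable_pi_apply a).prodMk (measurable_pi_apply b)
  exact hmeas.comp hp

theorem integrable_cube_pull {ι : Type*} [Fintype ι]
    (hmeas : Measurable fun w : Z × Z => h w.1 w.2)
    (hcube : Integrable (fun w : Z × Z => |h w.1 w.2| ^ 3) (μ.prod μ))
    {a b : ι} (hab : a ≠ b) :
    Integrable (fun z : ι → Z => |h (z a) (z b)| ^ 3) (Measure.pi fun _ => μ) :=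
  ((pair_mp μ hab).integrable_comp hcube.aestronglyMeasurable).mpr hcube

theorem integrable_term {ι : Type*} [Fintype ι]
    (hmeas : Measurable fun w : Z × Z => h w.1 w.2)
    (hcube : Integrable (fun w : Z × Z => |h w.1 w.2| ^ 3) (μ.prod μ))
    {a b c d e f : ι} (hab : a ≠ b) (hcd : c ≠ d) (hef : e ≠ f) :
    Integrable (fun z : ι → Z => h (z a) (z b) * h (z c) (z d) * h (z e) (z f))
      (Measure.pi fun _ => μ) := by
  have hg : Integrable (fun z : ι → Z =>
      |h (z a) (z b)| ^ 3 + |h (z c) (z d)| ^ 3 + |h (z e) (z f)| ^ 3)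
      (Measure.pi fun _ => μ) :=
    ((integrable_cube_pull μ h hmeas hcube hab).add
      (integrable_cube_pull μ h hmeas hcube hcd)).add
      (integrable_cube_pull μ h hmeas hcube hef)
  refine hg.mono' ?_ ?_
  · exact (((meas_hz h hmeas a b).mul (meas_hz h hmeas c d)).mul
      (meas_hz h hmeas e f)).aestronglyMeasurable
  · filter_upwards with z
    rw [Real.norm_eq_abs]
    exact abs_mul_le3 _ _ _

theorem cube_term {ι : Type*} [Fintype ι]
    (hmeas : Measurable fun w : Z × Z => h w.1 w.2) {a b : ι} (hab : a ≠ b) :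
    ∫ z : ι → Z, h (z a) (z b) * h (z a) (z b) * h (z a) (z b) ∂(Measure.pi fun _ => μ)
      = ∫ w : Z × Z, h w.1 w.2 ^ 3 ∂(μ.prod μ) := by
  have mp := pair_mp (Z := Z) μ hab
  have hg : Measurable fun w : Z × Z => h w.1 w.2 ^ 3 := hmeas.pow_const 3
  have key : ∫ w : Z × Z, h w.1 w.2 ^ 3 ∂(μ.prod μ)
      = ∫ z : ι → Z, h (z a) (z b) ^ 3 ∂(Measure.pi fun _ => μ) := by
    rw [← mp.map_eq, integral_map mp.measurable.aemeasurable
      (by rw [mp.map_eq]; exact hg.aestronglyMeasurable)]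
  rw [key]
  congr 1 with z
  ring

/-- Split off the coordinate `v` from a `Measure.pi` integral. -/
theorem split {ι : Type*} [Fintype ι] [DecidableEq ι] (v : ι) (f : (ι → Z) → ℝ)
    (hfm : Measurable f) (hf : Integrable f (Measure.pi fun _ : ι => μ)) :
    ∫ z, f z ∂(Measure.pi fun _ : ι => μ)
      = ∫ y : {j : ι // ¬ j = v} → Z, ∫ u : Z,
          f (fun j => if hj : j = v then u else y ⟨j, hj⟩) ∂μ
          ∂(Measure.pi fun _ => μ) := by
  letI FI : Fintype {j : ι // j = v} := Subtype.fintype fun j => j = v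
  set E := MeasurableEquiv.piEquivPiSubtypeProd (fun _ : ι => Z) (fun j => j = v) with hE
  have mpE := measurePreserving_piEquivPiSubtypeProd (fun _ : ι => μ) (fun j : ι => j = v)
  have mpEs := mpE.symm E
  rw [← mpEs.integral_comp' f]
  have hfint := (mpEs.integrable_comp_emb E.symm.measurableEmbedding (g := f)).mpr hf
  rw [MeasureTheory.integral_prod_symm (fun x => f (E.symm x)) hfint]
  refine integral_congr_ae (Filter.Eventually.of_forall fun y => ?_)
  dsimp only
  set i₀ : {j : ι // j = v} := ⟨v, rfl⟩ with hi₀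
  have hjall : ∀ j : {j : ι // j = v}, j = i₀ := by rintro ⟨j, rfl⟩; rfl
  set g : Z → ℝ := fun u => f (E.symm ((fun _ => u), y)) with hg
  have hEsymm : ∀ (x : {j : ι // j = v} → Z) (y' : {j : ι // ¬ j = v} → Z) (j : ι),
      E.symm (x, y') j = if hj : j = v then x ⟨j, hj⟩ else y' ⟨j, hj⟩ := by
    intro x y' j
    by_cases hj : j = v
    · simp [hE, MeasurableEquiv.piEquivPiSubtypeProd, Equiv.piEquivPiSubtypeProd, hj]
    · simp [hE, MeasurableEquiv.piEquivPiSubtypeProd, Equiv.piEquivPiSubtypeProd, hj]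
  have step : ∫ x : {j : ι // j = v} → Z, f (E.symm (x, y)) ∂(Measure.pi fun _ => μ)
      = ∫ x : {j : ι // j = v} → Z, g (x i₀) ∂(Measure.pi fun _ => μ) := by
    refine integral_congr_ae (Filter.Eventually.of_forall fun x => ?_)
    have : x = fun _ => x i₀ := funext fun j => congrArg x (hjall j)
    rw [hg]
    dsimp only
    rw [← this]
  have hgm : Measurable g := by
    apply hfm.comp
    apply E.symm.measurable.comp
    exact (measurable_pi_lambda _ fun _ => measurable_id).prodMk measurable_const
  have mpEval := eval_mp (Z := Z) μ i₀
  have step2 : ∫ x : {j : ι // j = v} → Z, g (x i₀) ∂(Measure.pi fun _ => μ)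
      = ∫ u : Z, g u ∂μ := by
    conv_rhs => rw [← mpEval.map_eq]
    exact (integral_map mpEval.measurable.aemeasurable
      (by rw [mpEval.map_eq]; exact hgm.aestronglyMeasurable)).symm
  refine (step.trans step2).trans ?_
  refine integral_congr_ae (Filter.Eventually.of_forall fun u => ?_)
  show f (E.symm ((fun _ => u), y)) = _
  congr 1

theorem zero_term {ι : Type*} [Fintype ι] [DecidableEq ι]
    (hmeas : Measurable fun w : Z × Z => h w.1 w.2)
    (hdeg : ∀ᵐ z ∂μ, (∫ z', h z z' ∂μ) = 0)
    (hcube : Integrable (fun w : Z × Z => |h w.1 w.2| ^ 3) (μ.prod μ))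
    {a b c d w v : ι} (hab : a ≠ b) (hcd : c ≠ d) (hwv : ¬ w = v)
    (hva : ¬ a = v) (hvb : ¬ b = v) (hvc : ¬ c = v) (hvd : ¬ d = v) :
    ∫ z : ι → Z, h (z a) (z b) * h (z c) (z d) * h (z w) (z v)
      ∂(Measure.pi fun _ => μ) = 0 := by
  have hint := integrable_term μ h hmeas hcube hab hcd
    (show w ≠ v from hwv)
  have hfm : Measurable fun z : ι → Z => h (z a) (z b) * h (z c) (z d) * h (z w) (z v) :=
    ((meas_hz h hmeas a b).mul (meas_hz h hmeas c d)).mul (meas_hz h hmeas w v)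
  rw [split μ v _ hfm hint]
  have hev : ∀ᵐ y : {j : ι // ¬ j = v} → Z ∂(Measure.pi fun _ => μ),
      (∫ z', h (y ⟨w, hwv⟩) z' ∂μ) = 0 := by
    have mpe := eval_mp (Z := Z) μ (⟨w, hwv⟩ : {j : ι // ¬ j = v})
    exact ae_of_ae_map mpe.measurable.aemeasurable (by rw [mpe.map_eq]; exact hdeg)
  refine integral_eq_zero_of_ae ?_
  filter_upwards [hev] with y hy
  have key : (∫ u : Z, h (if hj : a = v then u else y ⟨a, hj⟩)
          (if hj : b = v then u else y ⟨b, hj⟩) *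
        h (if hj : c = v then u else y ⟨c, hj⟩) (if hj : d = v then u else y ⟨d, hj⟩) *
        h (if hj : w = v then u else y ⟨w, hj⟩) (if hj : v = v then u else y ⟨v, hj⟩) ∂μ)
      = (h (y ⟨a, hva⟩) (y ⟨b, hvb⟩) * h (y ⟨c, hvc⟩) (y ⟨d, hvd⟩)) *
          ∫ u : Z, h (y ⟨w, hwv⟩) u ∂μ := by
    rw [← integral_const_mul]
    refine integral_congr_ae (Filter.Eventually.of_forall fun u => ?_)
    dsimp only
    rw [dif_neg hva, dif_neg hvb, dif_neg hvc, dif_neg hvd, dif_neg hwv, dif_pos rfl]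
  rw [key, hy, mul_zero]
  rfl

theorem tri3
    (hmeas : Measurable fun w : Z × Z => h w.1 w.2)
    (hcube : Integrable (fun w : Z × Z => |h w.1 w.2| ^ 3) (μ.prod μ))
    (htri : Integrable
      (fun w : Z × Z => h w.1 w.2 * ∫ z'', h w.1 z'' * h w.2 z'' ∂μ) (μ.prod μ)) :
    ∫ x : Fin 3 → Z, h (x 0) (x 1) * h (x 1) (x 2) * h (x 0) (x 2)
        ∂(Measure.pi fun _ => μ)
      = ∫ w : Z × Z, h w.1 w.2 * ∫ z'', h w.1 z'' * h w.2 z'' ∂μ ∂(μ.prod μ) := by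
  have hfm : Measurable fun x : Fin 3 → Z => h (x 0) (x 1) * h (x 1) (x 2) * h (x 0) (x 2) :=
    ((meas_hz h hmeas 0 1).mul (meas_hz h hmeas 1 2)).mul (meas_hz h hmeas 0 2)
  have hint := integrable_term μ h hmeas hcube (show (0 : Fin 3) ≠ 1 by decide)
    (show (1 : Fin 3) ≠ 2 by decide) (show (0 : Fin 3) ≠ 2 by decide)
  rw [split μ (2 : Fin 3) _ hfm hint]
  set j0 : {j : Fin 3 // ¬ j = 2} := ⟨0, by decide⟩ with hj0
  set j1 : {j : Fin 3 // ¬ j = 2} := ⟨1, by decide⟩ with hj1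
  have step1 : ∀ y : {j : Fin 3 // ¬ j = 2} → Z,
      (∫ u : Z, h (if hj : (0 : Fin 3) = 2 then u else y ⟨0, hj⟩)
          (if hj : (1 : Fin 3) = 2 then u else y ⟨1, hj⟩) *
        h (if hj : (1 : Fin 3) = 2 then u else y ⟨1, hj⟩)
          (if hj : (2 : Fin 3) = 2 then u else y ⟨2, hj⟩) *
        h (if hj : (0 : Fin 3) = 2 then u else y ⟨0, hj⟩)
          (if hj : (2 : Fin 3) = 2 then u else y ⟨2, hj⟩) ∂μ)
      = h (y j0) (y j1) * ∫ u : Z, h (y j0) u * h (y j1) u ∂μ := by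
    intro y
    rw [← integral_const_mul]
    refine integral_congr_ae (Filter.Eventually.of_forall fun u => ?_)
    dsimp only
    rw [dif_neg (show ¬ (0 : Fin 3) = 2 by decide), dif_neg (show ¬ (1 : Fin 3) = 2 by decide),
      dif_pos rfl]
    ring
  calc (∫ y : {j : Fin 3 // ¬ j = 2} → Z, ∫ u : Z,
          h (if hj : (0 : Fin 3) = 2 then u else y ⟨0, hj⟩)
            (if hj : (1 : Fin 3) = 2 then u else y ⟨1, hj⟩) *
          h (if hj : (1 : Fin 3) = 2 then u else y ⟨1, hj⟩)
            (if hj : (2 : Fin 3) = 2 then u else y ⟨2, hj⟩) *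
          h (if hj : (0 : Fin 3) = 2 then u else y ⟨0, hj⟩)
            (if hj : (2 : Fin 3) = 2 then u else y ⟨2, hj⟩) ∂μ ∂(Measure.pi fun _ => μ))
      = ∫ y : {j : Fin 3 // ¬ j = 2} → Z,
          (fun w : Z × Z => h w.1 w.2 * ∫ z'', h w.1 z'' * h w.2 z'' ∂μ) ((y j0, y j1))
          ∂(Measure.pi fun _ => μ) := by
        refine integral_congr_ae (Filter.Eventually.of_forall fun y => ?_)
        exact step1 y
    _ = ∫ w : Z × Z, h w.1 w.2 * ∫ z'', h w.1 z'' * h w.2 z'' ∂μ ∂(μ.prod μ) := by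
        have mp := pair_mp (Z := Z) μ (show j0 ≠ j1 by simp [hj0, hj1, Subtype.ext_iff])
        rw [← mp.map_eq]
        exact (integral_map mp.measurable.aemeasurable
          (by rw [mp.map_eq]; exact htri.aestronglyMeasurable)).symm

theorem tri_term {ι : Type*} [Fintype ι] [DecidableEq ι]
    (hmeas : Measurable fun w : Z × Z => h w.1 w.2)
    (hcube : Integrable (fun w : Z × Z => |h w.1 w.2| ^ 3) (μ.prod μ))
    (htri : Integrable
      (fun w : Z × Z => h w.1 w.2 * ∫ z'', h w.1 z'' * h w.2 z'' ∂μ) (μ.prod μ))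
    {a b c : ι} (hab : a ≠ b) (hac : a ≠ c) (hbc : b ≠ c) :
    ∫ z : ι → Z, h (z a) (z b) * h (z b) (z c) * h (z a) (z c)
        ∂(Measure.pi fun _ => μ)
      = ∫ w : Z × Z, h w.1 w.2 * ∫ z'', h w.1 z'' * h w.2 z'' ∂μ ∂(μ.prod μ) := by
  have hinj : Function.Injective (![a, b, c] : Fin 3 → ι) := by
    intro i j hij
    fin_cases i <;> fin_cases j <;> simp_all
  have mp := comp_mp μ ![a, b, c] hinj
  have hfm : Measurable fun x : Fin 3 → Z => h (x 0) (x 1) * h (x 1) (x 2) * h (x 0) (x 2) :=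
    ((meas_hz h hmeas 0 1).mul (meas_hz h hmeas 1 2)).mul (meas_hz h hmeas 0 2)
  have key : ∫ x : Fin 3 → Z, h (x 0) (x 1) * h (x 1) (x 2) * h (x 0) (x 2)
      ∂(Measure.pi fun _ => μ)
      = ∫ z : ι → Z, h (z a) (z b) * h (z b) (z c) * h (z a) (z c)
        ∂(Measure.pi fun _ => μ) := by
    rw [← mp.map_eq]
    rw [integral_map mp.measurable.aemeasurable
      (by rw [mp.map_eq]; exact hfm.aestronglyMeasurable)]
    rfl
  rw [← key]
  exact tri3 μ h hmeas hcube htri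

section Comb
variable {α : Type*} [LinearOrder α]

def sortPair (a b : α) : α × α := if a < b then (a, b) else (b, a)

theorem sp_lt {a b : α} (hab : a ≠ b) : (sortPair a b).1 < (sortPair a b).2 := by
  unfold sortPair
  split_ifs with hlt
  · exact hlt
  · exact (hab.lt_or_gt).resolve_left hlt

theorem sp_eq_left {p : α × α} (hp : p.1 < p.2) : sortPair p.1 p.2 = p := by
  unfold sortPair
  rw [if_pos hp]

theorem sp_comm {a b : α} (hab : a ≠ b) : sortPair a b = sortPair b a := by
  unfold sortPair
  rcases hab.lt_or_gt with hl | hl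
  · rw [if_pos hl, if_neg (not_lt_of_gt hl)]
  · rw [if_neg (not_lt_of_gt hl), if_pos hl]

theorem sp_cases (a b : α) : sortPair a b = (a, b) ∨ sortPair a b = (b, a) := by
  unfold sortPair
  split_ifs <;> [left; right] <;> rfl

theorem sp_set {a b a' b' : α} (h : sortPair a b = sortPair a' b') :
    (a = a' ∧ b = b') ∨ (a = b' ∧ b = a') := by
  rcases sp_cases a b with h1 | h1 <;> rcases sp_cases a' b' with h2 | h2 <;>
    rw [h1, h2] at h <;> obtain ⟨hx, hy⟩ := Prod.mk.inj h
  · exact Or.inl ⟨hx, hy⟩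
  · exact Or.inr ⟨hx, hy⟩
  · exact Or.inr ⟨hy, hx⟩
  · exact Or.inl ⟨hy, hx⟩

theorem pair_eq {p q : α × α} (hp : p.1 < p.2) (hq : q.1 < q.2)
    (h1 : p.1 = q.1 ∨ p.1 = q.2) (h2 : p.2 = q.1 ∨ p.2 = q.2) : p = q := by
  rcases h1 with h1 | h1 <;> rcases h2 with h2 | h2
  · exact absurd (h1 ▸ h2 ▸ hp) (lt_irrefl _)
  · exact Prod.ext h1 h2
  · exact absurd (hq.trans (h2 ▸ h1 ▸ hp)) (lt_irrefl _)
  · exact absurd (h1 ▸ h2 ▸ hp) (lt_irrefl _)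

theorem pair_mk {r : α × α} {x y : α} (hr : r.1 < r.2) (hxy : x ≠ y)
    (hx : x = r.1 ∨ x = r.2) (hy : y = r.1 ∨ y = r.2) : r = sortPair x y := by
  rcases hx with hx | hx <;> rcases hy with hy | hy
  · exact absurd (hx.trans hy.symm) hxy
  · rw [hx, hy, sp_eq_left hr]
  · rw [hx, hy, sp_comm (ne_of_gt hr), sp_eq_left hr]
  · exact absurd (hx.trans hy.symm) hxy

def Tri (p q r : α × α) : Prop :=
  ∃ a b c : α, a ≠ b ∧ a ≠ c ∧ b ≠ c ∧
    p = sortPair a b ∧ q = sortPair b c ∧ r = sortPair a c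

theorem tri_sorted {p q r : α × α} (ht : Tri p q r) :
    p.1 < p.2 ∧ q.1 < q.2 ∧ r.1 < r.2 := by
  obtain ⟨a, b, c, hab, hac, hbc, hp, hq, hr⟩ := ht
  exact ⟨hp ▸ sp_lt hab, hq ▸ sp_lt hbc, hr ▸ sp_lt hac⟩

theorem tri_ne {p q r : α × α} (ht : Tri p q r) : p ≠ q := by
  obtain ⟨a, b, c, hab, hac, hbc, hp, hq, hr⟩ := ht
  intro hpq
  rcases sp_set (hp ▸ hq ▸ hpq) with ⟨h1, h2⟩ | ⟨h1, h2⟩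
  · exact hab h1
  · exact hac h1

theorem tri_unique {a b c a' b' c' : α} (h1 : a ≠ b) (h2 : a ≠ c) (h3 : b ≠ c)
    (h1' : a' ≠ b') (h2' : a' ≠ c') (h3' : b' ≠ c')
    (e1 : sortPair a b = sortPair a' b') (e2 : sortPair b c = sortPair b' c')
    (e3 : sortPair a c = sortPair a' c') : a = a' ∧ b = b' ∧ c = c' := by
  rcases sp_set e1 with ⟨ha, hb⟩ | ⟨ha, hb⟩ <;>
    rcases sp_set e2 with ⟨hb2, hc⟩ | ⟨hb2, hc⟩ <;>
      rcases sp_set e3 with ⟨ha2, hc2⟩ | ⟨ha2, hc2⟩ <;>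
        simp_all

theorem classify {p q r : α × α} (hp : p.1 < p.2) (hq : q.1 < q.2) (hr : r.1 < r.2)
    (hne : ¬(p = q ∧ q = r)) (hnt : ¬ Tri p q r) :
    ∃ v, ((v = p.1 ∨ v = p.2) ∧ ¬(v = q.1 ∨ v = q.2) ∧ ¬(v = r.1 ∨ v = r.2)) ∨
      ((v = q.1 ∨ v = q.2) ∧ ¬(v = p.1 ∨ v = p.2) ∧ ¬(v = r.1 ∨ v = r.2)) ∨
      ((v = r.1 ∨ v = r.2) ∧ ¬(v = p.1 ∨ v = p.2) ∧ ¬(v = q.1 ∨ v = q.2)) := by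
  by_contra hcon
  push_neg at hcon
  have Hp : ∀ v, (v = p.1 ∨ v = p.2) → (v = q.1 ∨ v = q.2) ∨ (v = r.1 ∨ v = r.2) := by
    intro v hv
    have := (hcon v).1
    tauto
  have Hq : ∀ v, (v = q.1 ∨ v = q.2) → (v = p.1 ∨ v = p.2) ∨ (v = r.1 ∨ v = r.2) := by
    intro v hv
    have := (hcon v).2.1
    tauto
  have Hr : ∀ v, (v = r.1 ∨ v = r.2) → (v = p.1 ∨ v = p.2) ∨ (v = q.1 ∨ v = q.2) := by
    intro v hv
    have := (hcon v).2.2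
    tauto
  by_cases hpq : p = q
  · have h1 : r.1 = p.1 ∨ r.1 = p.2 := by
      have := Hr r.1 (Or.inl rfl); subst hpq; tauto
    have h2 : r.2 = p.1 ∨ r.2 = p.2 := by
      have := Hr r.2 (Or.inr rfl); subst hpq; tauto
    have : r = p := pair_eq hr hp h1 h2
    exact hne ⟨hpq, hpq ▸ this.symm⟩
  by_cases hqr : q = r
  · have h1 : p.1 = q.1 ∨ p.1 = q.2 := by
      have := Hp p.1 (Or.inl rfl); subst hqr; tauto
    have h2 : p.2 = q.1 ∨ p.2 = q.2 := by
      have := Hp p.2 (Or.inr rfl); subst hqr; tauto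
    exact hne ⟨pair_eq hp hq h1 h2, hqr⟩
  by_cases hpr : p = r
  · have h1 : q.1 = p.1 ∨ q.1 = p.2 := by
      have := Hq q.1 (Or.inl rfl); subst hpr; tauto
    have h2 : q.2 = p.1 ∨ q.2 = p.2 := by
      have := Hq q.2 (Or.inr rfl); subst hpr; tauto
    exact hne ⟨(pair_eq hq hp h1 h2).symm, (pair_eq hq hp h1 h2).symm ▸ hpr⟩
  rcases Hp p.1 (Or.inl rfl) with hp1 | hp1 <;> rcases Hp p.2 (Or.inr rfl) with hp2 | hp2
  · exact hpq (pair_eq hp hq hp1 hp2)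
  · -- p.1 shares with q, p.2 shares with r
    obtain ⟨q', hq'mem, hq'ne, hqpair⟩ :
        ∃ q', (q' = q.1 ∨ q' = q.2) ∧ q' ≠ p.1 ∧ q = sortPair p.1 q' := by
      rcases hp1 with hh | hh
      · exact ⟨q.2, Or.inr rfl, fun hc => (ne_of_gt hq) (hc.trans hh),
          pair_mk hq (hh ▸ ne_of_lt hq) (Or.inl hh) (Or.inr rfl)⟩
      · exact ⟨q.1, Or.inl rfl, fun hc => (ne_of_lt hq) (hc.trans hh),
          pair_mk hq (hh ▸ ne_of_gt hq) (Or.inr hh) (Or.inl rfl)⟩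
    have hq'r : q' = r.1 ∨ q' = r.2 := by
      rcases Hq q' hq'mem with hmp | hmr
      · exfalso
        rcases hmp with hh | hh
        · exact hq'ne hh
        · exact hpq (by rw [hqpair, hh, sp_eq_left hp])
      · exact hmr
    have hq'p2 : p.2 ≠ q' := by
      intro hc
      exact hpq (by rw [hqpair, ← hc, sp_eq_left hp])
    have hrpair : r = sortPair p.2 q' := pair_mk hr hq'p2 hp2 hq'r
    refine hnt ⟨p.2, p.1, q', ne_of_gt hp, hq'p2, Ne.symm hq'ne, ?_, hqpair, hrpair⟩
    rw [← sp_comm (ne_of_lt hp), sp_eq_left hp]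
  · -- p.1 shares with r, p.2 shares with q
    obtain ⟨q', hq'mem, hq'ne, hqpair⟩ :
        ∃ q', (q' = q.1 ∨ q' = q.2) ∧ q' ≠ p.2 ∧ q = sortPair p.2 q' := by
      rcases hp2 with hh | hh
      · exact ⟨q.2, Or.inr rfl, fun hc => (ne_of_gt hq) (hc.trans hh),
          pair_mk hq (hh ▸ ne_of_lt hq) (Or.inl hh) (Or.inr rfl)⟩
      · exact ⟨q.1, Or.inl rfl, fun hc => (ne_of_lt hq) (hc.trans hh),
          pair_mk hq (hh ▸ ne_of_gt hq) (Or.inr hh) (Or.inl rfl)⟩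
    have hq'r : q' = r.1 ∨ q' = r.2 := by
      rcases Hq q' hq'mem with hmp | hmr
      · exfalso
        rcases hmp with hh | hh
        · exact hpq (by rw [hqpair, hh, ← sp_comm (ne_of_lt hp), sp_eq_left hp])
        · exact hq'ne hh
      · exact hmr
    have hq'p1 : p.1 ≠ q' := by
      intro hc
      exact hpq (by rw [hqpair, ← hc, ← sp_comm (ne_of_lt hp), sp_eq_left hp])
    have hrpair : r = sortPair p.1 q' := pair_mk hr hq'p1 hp1 hq'r
    refine hnt ⟨p.1, p.2, q', ne_of_lt hp, hq'p1, Ne.symm hq'ne, ?_, hqpair, hrpair⟩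
    exact (sp_eq_left hp).symm
  · exact hpr (pair_eq hp hr hp1 hp2)

end Comb

theorem count_pairs (n : ℕ) (C : ℝ) :
    (∑ p : Fin n × Fin n, if p.1 < p.2 then C else 0) = ((n : ℝ) ^ 2 - n) / 2 * C := by
  have hsplit : ∀ p : Fin n × Fin n, (if p.1 < p.2 then (C:ℝ) else 0)
      = (if p.1 < p.2 then (1:ℝ) else 0) * C := by
    intro p; split_ifs <;> ring
  rw [Finset.sum_congr rfl fun p _ => hsplit p, ← Finset.sum_mul]
  congr 1
  have hswap : (∑ p : Fin n × Fin n, if p.1 < p.2 then (1:ℝ) else 0)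
      = ∑ p : Fin n × Fin n, if p.2 < p.1 then (1:ℝ) else 0 := by
    apply Fintype.sum_equiv (Equiv.prodComm (Fin n) (Fin n))
    intro p
    rfl
  have htri : (∑ p : Fin n × Fin n, ((if p.1 < p.2 then (1:ℝ) else 0)
      + (if p.2 < p.1 then (1:ℝ) else 0) + (if p.1 = p.2 then (1:ℝ) else 0)))
      = ∑ _p : Fin n × Fin n, (1:ℝ) := by
    refine Finset.sum_congr rfl fun p _ => ?_
    rcases lt_trichotomy p.1 p.2 with hc | hc | hc
    · rw [if_pos hc, if_neg (not_lt_of_gt hc), if_neg (ne_of_lt hc)]; ring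
    · rw [if_neg (by rw [hc]; exact lt_irrefl _), if_neg (by rw [hc]; exact lt_irrefl _),
        if_pos hc]; ring
    · rw [if_neg (not_lt_of_gt hc), if_pos hc, if_neg (Ne.symm (ne_of_lt hc))]; ring
  have hdiag : (∑ p : Fin n × Fin n, if p.1 = p.2 then (1:ℝ) else 0) = n := by
    rw [Fintype.sum_prod_type]
    have : ∀ i : Fin n, (∑ j : Fin n, if i = j then (1:ℝ) else 0) = 1 := by
      intro i
      rw [Finset.sum_ite_eq]
      simp
    rw [Finset.sum_congr rfl fun i _ => this i]
    simp
  have hone : (∑ _p : Fin n × Fin n, (1:ℝ)) = (n : ℝ) ^ 2 := by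
    rw [Finset.sum_const, Finset.card_univ]
    simp [sq]
  rw [Finset.sum_add_distrib, Finset.sum_add_distrib, hdiag, hone] at htri
  rw [← hswap] at htri
  linarith

theorem count_triples (n : ℕ) (D : ℝ) :
    (∑ t : Fin n × Fin n × Fin n,
        if t.1 ≠ t.2.1 ∧ t.1 ≠ t.2.2 ∧ t.2.1 ≠ t.2.2 then D else 0)
      = (n : ℝ) * ((n : ℝ) - 1) * ((n : ℝ) - 2) * D := by
  simp only [Fintype.sum_prod_type]
  have hinner : ∀ a b : Fin n,
      (∑ c : Fin n, if a ≠ b ∧ a ≠ c ∧ b ≠ c then D else 0)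
      = if a ≠ b then ((n : ℝ) * D - D - D) else 0 := by
    intro a b
    by_cases hab : a = b
    · rw [if_neg (by simp [hab])]
      refine Finset.sum_eq_zero fun c _ => ?_
      rw [if_neg (by tauto)]
    · rw [if_pos hab]
      have hpt : ∀ c : Fin n, (if a ≠ b ∧ a ≠ c ∧ b ≠ c then D else 0)
          = D - (if c = a then D else 0) - (if c = b then D else 0) := by
        intro c
        by_cases h1 : c = a
        · rw [if_neg (by tauto), if_pos h1, if_neg (by rw [h1]; exact hab)]
          ring
        · by_cases h2 : c = b
          · rw [if_neg (by tauto), if_neg h1, if_pos h2]; ring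
          · rw [if_pos ⟨hab, fun hc => h1 hc.symm, fun hc => h2 hc.symm⟩, if_neg h1, if_neg h2]
            ring
      rw [Finset.sum_congr rfl fun c _ => hpt c, Finset.sum_sub_distrib,
        Finset.sum_sub_distrib]
      have e1 : (∑ c : Fin n, if c = a then D else 0) = D := by
        rw [Finset.sum_ite_eq']; simp
      have e2 : (∑ c : Fin n, if c = b then D else 0) = D := by
        rw [Finset.sum_ite_eq']; simp
      rw [e1, e2, Finset.sum_const, Finset.card_univ]
      simp [nsmul_eq_mul]
  rw [Finset.sum_congr rfl fun a _ => Finset.sum_congr rfl fun b _ => hinner a b]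
  have hmid : ∀ a : Fin n,
      (∑ b : Fin n, if a ≠ b then ((n : ℝ) * D - D - D) else 0)
      = (n : ℝ) * ((n : ℝ) * D - D - D) - ((n : ℝ) * D - D - D) := by
    intro a
    have hpt : ∀ b : Fin n, (if a ≠ b then ((n : ℝ) * D - D - D) else 0)
        = ((n : ℝ) * D - D - D) - (if b = a then ((n : ℝ) * D - D - D) else 0) := by
      intro b
      by_cases h1 : b = a
      · rw [if_neg (by rw [h1]; exact fun hc => hc rfl), if_pos h1]; ring
      · rw [if_pos (fun hc => h1 hc.symm), if_neg h1]; ring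
    rw [Finset.sum_congr rfl fun b _ => hpt b, Finset.sum_sub_distrib]
    have e1 : (∑ b : Fin n, if b = a then ((n : ℝ) * D - D - D) else 0)
        = ((n : ℝ) * D - D - D) := by
      rw [Finset.sum_ite_eq']; simp
    rw [e1, Finset.sum_const, Finset.card_univ]
    simp [nsmul_eq_mul]
  rw [Finset.sum_congr rfl fun a _ => hmid a, Finset.sum_const, Finset.card_univ]
  simp only [Fintype.card_fin, nsmul_eq_mul]
  ring


end U17

open MeasureTheory
open scoped BigOperators


/-- Third moment of the degenerate U-statistic:
`E[(MMD_u²)³] = (8(n-2)/(n²(n-1)²)) E[h(z,z') E_{z''}(h(z,z'')h(z',z''))]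
  + (2/(n(n-1)))² E[h³(z,z')]`. -/
theorem degenerate_u_statistic_third_moment
    {Z : Type*} [MeasurableSpace Z] (μ : Measure Z) [IsProbabilityMeasure μ]
    (h : Z → Z → ℝ) (hmeas : Measurable fun w : Z × Z => h w.1 w.2)
    (hsymm : ∀ z z', h z z' = h z' z)
    (hdeg : ∀ᵐ z ∂μ, (∫ z', h z z' ∂μ) = 0)
    (hint : Integrable (fun w : Z × Z => h w.1 w.2) (μ.prod μ))
    (hcube : Integrable (fun w : Z × Z => |h w.1 w.2| ^ 3) (μ.prod μ))
    (htri : Integrable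
      (fun w : Z × Z => h w.1 w.2 * ∫ z'', h w.1 z'' * h w.2 z'' ∂μ) (μ.prod μ))
    (n : ℕ) (hn : 2 ≤ n) :
    (∫ z : Fin n → Z,
        ((2 / ((n : ℝ) * ((n : ℝ) - 1))) *
          ∑ i : Fin n, ∑ j : Fin n, if i < j then h (z i) (z j) else 0) ^ 3
        ∂(Measure.pi fun _ => μ))
      = (8 * ((n : ℝ) - 2) / ((n : ℝ) ^ 2 * ((n : ℝ) - 1) ^ 2)) *
          (∫ w : Z × Z, h w.1 w.2 * ∫ z'', h w.1 z'' * h w.2 z'' ∂μ ∂μ.prod μ)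
        + (2 / ((n : ℝ) * ((n : ℝ) - 1))) ^ 2 *
          ∫ w : Z × Z, (h w.1 w.2) ^ 3 ∂μ.prod μ := by
  classical
  set C : ℝ := ∫ w : Z × Z, (h w.1 w.2) ^ 3 ∂μ.prod μ with hC
  set D : ℝ := ∫ w : Z × Z, h w.1 w.2 * ∫ z'', h w.1 z'' * h w.2 z'' ∂μ ∂μ.prod μ with hD
  set c : ℝ := 2 / ((n : ℝ) * ((n : ℝ) - 1)) with hc
  set F : Fin n × Fin n → (Fin n → Z) → ℝ :=
    fun p z => if p.1 < p.2 then h (z p.1) (z p.2) else 0 with hFdef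
  have hFint : ∀ p q r : Fin n × Fin n,
      Integrable (fun z => F p z * F q z * F r z) (Measure.pi fun _ : Fin n => μ) := by
    intro p q r
    by_cases h1 : p.1 < p.2
    · by_cases h2 : q.1 < q.2
      · by_cases h3 : r.1 < r.2
        · exact (U17.integrable_term μ h hmeas hcube (ne_of_lt h1) (ne_of_lt h2)
            (ne_of_lt h3)).congr
            (Filter.Eventually.of_forall fun z => by
              simp [hFdef, if_pos h1, if_pos h2, if_pos h3])
        · exact (integrable_zero _ _ _).congr
            (Filter.Eventually.of_forall fun z => by simp [hFdef, if_neg h3])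
      · exact (integrable_zero _ _ _).congr
          (Filter.Eventually.of_forall fun z => by simp [hFdef, if_neg h2])
    · exact (integrable_zero _ _ _).congr
        (Filter.Eventually.of_forall fun z => by simp [hFdef, if_neg h1])
  have hval : ∀ p q r : Fin n × Fin n,
      (∫ z, F p z * F q z * F r z ∂(Measure.pi fun _ : Fin n => μ))
        = (if p.1 < p.2 ∧ p = q ∧ q = r then C else 0)
          + (if U17.Tri p q r then D else 0) := by
    intro p q r
    by_cases hs : p.1 < p.2 ∧ q.1 < q.2 ∧ r.1 < r.2
    · obtain ⟨hsp, hsq, hsr⟩ := hs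
      have hred : ∀ z : Fin n → Z, F p z * F q z * F r z
          = h (z p.1) (z p.2) * h (z q.1) (z q.2) * h (z r.1) (z r.2) := by
        intro z; simp [hFdef, if_pos hsp, if_pos hsq, if_pos hsr]
      rw [integral_congr_ae (Filter.Eventually.of_forall hred)]
      by_cases heq : p = q ∧ q = r
      · obtain ⟨h1, h2⟩ := heq
        have hnt : ¬ U17.Tri p q r := fun ht => U17.tri_ne ht h1
        rw [if_pos ⟨hsp, h1, h2⟩, if_neg hnt, add_zero]
        subst h2; subst h1
        exact (U17.cube_term μ h hmeas (ne_of_lt hsp)).trans hC.symm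
      · by_cases htr : U17.Tri p q r
        · rw [if_neg (fun hcond => heq ⟨hcond.2.1, hcond.2.2⟩), if_pos htr, zero_add]
          obtain ⟨a, b, c', hab, hac, hbc, hpe, hqe, hre⟩ := htr
          have spa : ∀ (x y : Fin n) (z : Fin n → Z),
              h (z (U17.sortPair x y).1) (z (U17.sortPair x y).2) = h (z x) (z y) := by
            intro x y z
            unfold U17.sortPair
            split_ifs
            · rfl
            · exact hsymm (z y) (z x)
          have hred2 : ∀ z : Fin n → Z,
              h (z p.1) (z p.2) * h (z q.1) (z q.2) * h (z r.1) (z r.2)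
              = h (z a) (z b) * h (z b) (z c') * h (z a) (z c') := by
            intro z
            rw [hpe, hqe, hre, spa, spa, spa]
          rw [integral_congr_ae (Filter.Eventually.of_forall hred2)]
          exact (U17.tri_term μ h hmeas hcube htri hab hac hbc).trans hD.symm
        · rw [if_neg (fun hcond => heq ⟨hcond.2.1, hcond.2.2⟩), if_neg htr, add_zero]
          obtain ⟨v, hcase⟩ := U17.classify hsp hsq hsr heq htr
          have base : ∀ P Q R : Fin n × Fin n, P.1 < P.2 → Q.1 < Q.2 → R.1 < R.2 →
              (v = R.1 ∨ v = R.2) → ¬(v = P.1 ∨ v = P.2) → ¬(v = Q.1 ∨ v = Q.2) →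
              (∫ z : Fin n → Z, h (z P.1) (z P.2) * h (z Q.1) (z Q.2) * h (z R.1) (z R.2)
                ∂(Measure.pi fun _ : Fin n => μ)) = 0 := by
            intro P Q R hP hQ hR hvR hvP hvQ
            have hvP1 : ¬ P.1 = v := fun hh => hvP (Or.inl hh.symm)
            have hvP2 : ¬ P.2 = v := fun hh => hvP (Or.inr hh.symm)
            have hvQ1 : ¬ Q.1 = v := fun hh => hvQ (Or.inl hh.symm)
            have hvQ2 : ¬ Q.2 = v := fun hh => hvQ (Or.inr hh.symm)
            rcases hvR with hv | hv
            · have hflip : ∀ z : Fin n → Z,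
                  h (z P.1) (z P.2) * h (z Q.1) (z Q.2) * h (z R.1) (z R.2)
                  = h (z P.1) (z P.2) * h (z Q.1) (z Q.2) * h (z R.2) (z R.1) := by
                intro z; rw [hsymm (z R.1) (z R.2)]
              rw [integral_congr_ae (Filter.Eventually.of_forall hflip)]
              subst hv
              exact U17.zero_term μ h hmeas hdeg hcube (ne_of_lt hP) (ne_of_lt hQ)
                (Ne.symm (ne_of_lt hR)) hvP1 hvP2 hvQ1 hvQ2
            · subst hv
              exact U17.zero_term μ h hmeas hdeg hcube (ne_of_lt hP) (ne_of_lt hQ)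
                (ne_of_lt hR) hvP1 hvP2 hvQ1 hvQ2
          rcases hcase with hc1 | hc2 | hc3
          · have hro : ∀ z : Fin n → Z,
                h (z p.1) (z p.2) * h (z q.1) (z q.2) * h (z r.1) (z r.2)
                = h (z q.1) (z q.2) * h (z r.1) (z r.2) * h (z p.1) (z p.2) := fun z => by ring
            rw [integral_congr_ae (Filter.Eventually.of_forall hro)]
            exact base q r p hsq hsr hsp hc1.1 hc1.2.1 hc1.2.2
          · have hro : ∀ z : Fin n → Z,
                h (z p.1) (z p.2) * h (z q.1) (z q.2) * h (z r.1) (z r.2)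
                = h (z p.1) (z p.2) * h (z r.1) (z r.2) * h (z q.1) (z q.2) := fun z => by ring
            rw [integral_congr_ae (Filter.Eventually.of_forall hro)]
            exact base p r q hsp hsr hsq hc2.1 hc2.2.1 hc2.2.2
          · exact base p q r hsp hsq hsr hc3.1 hc3.2.1 hc3.2.2
    · have hzero : ∀ z : Fin n → Z, F p z * F q z * F r z = 0 := by
        intro z
        by_cases h1 : p.1 < p.2
        · by_cases h2 : q.1 < q.2
          · by_cases h3 : r.1 < r.2
            · exact absurd ⟨h1, h2, h3⟩ hs
            · simp [hFdef, if_neg h3]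
          · simp [hFdef, if_neg h2]
        · simp [hFdef, if_neg h1]
      rw [integral_congr_ae (Filter.Eventually.of_forall hzero), integral_zero]
      rw [if_neg (fun hcond => hs (by
        obtain ⟨hc1, hc2, hc3⟩ := hcond
        subst hc2; subst hc3; exact ⟨hc1, hc1, hc1⟩)),
        if_neg (fun ht => hs (U17.tri_sorted ht)), add_zero]
  have hsum : (∫ z : Fin n → Z,
        (c * ∑ i : Fin n, ∑ j : Fin n, if i < j then h (z i) (z j) else 0) ^ 3
        ∂(Measure.pi fun _ => μ))
      = c ^ 3 * ∑ p : Fin n × Fin n, ∑ q : Fin n × Fin n, ∑ r : Fin n × Fin n,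
          ∫ z, F p z * F q z * F r z ∂(Measure.pi fun _ : Fin n => μ) := by
    have hS : ∀ z : Fin n → Z,
        (∑ i : Fin n, ∑ j : Fin n, if i < j then h (z i) (z j) else 0)
        = ∑ p : Fin n × Fin n, F p z := by
      intro z
      rw [Fintype.sum_prod_type]
    have hcube3 : ∀ z : Fin n → Z,
        (c * ∑ i : Fin n, ∑ j : Fin n, if i < j then h (z i) (z j) else 0) ^ 3
        = c ^ 3 * ∑ p : Fin n × Fin n, ∑ q : Fin n × Fin n, ∑ r : Fin n × Fin n,
            F p z * F q z * F r z := by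
      intro z
      rw [mul_pow, hS]
      congr 1
      rw [show (3:ℕ) = 2 + 1 from rfl, pow_succ, sq, Finset.sum_mul_sum]
      rw [Finset.sum_mul]
      refine Finset.sum_congr rfl fun p _ => ?_
      rw [Finset.sum_mul]
      refine Finset.sum_congr rfl fun q _ => ?_
      rw [Finset.mul_sum]
    rw [integral_congr_ae (Filter.Eventually.of_forall hcube3), integral_const_mul]
    congr 1
    rw [integral_finset_sum _ fun p _ => integrable_finset_sum _ fun q _ =>
      integrable_finset_sum _ fun r _ => hFint p q r]
    refine Finset.sum_congr rfl fun p _ => ?_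
    rw [integral_finset_sum _ fun q _ => integrable_finset_sum _ fun r _ => hFint p q r]
    refine Finset.sum_congr rfl fun q _ => ?_
    rw [integral_finset_sum _ fun r _ => hFint p q r]
  have hsum2 : (∑ p : Fin n × Fin n, ∑ q : Fin n × Fin n, ∑ r : Fin n × Fin n,
        ∫ z, F p z * F q z * F r z ∂(Measure.pi fun _ : Fin n => μ))
      = (((n:ℝ)^2 - n)/2) * C + ((n:ℝ) * ((n:ℝ)-1) * ((n:ℝ)-2)) * D := by
    rw [Finset.sum_congr rfl fun p _ => Finset.sum_congr rfl fun q _ =>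
      Finset.sum_congr rfl fun r _ => hval p q r]
    simp only [Finset.sum_add_distrib]
    congr 1
    · -- all-equal sum
      have e1 : ∀ p q : Fin n × Fin n,
          (∑ r : Fin n × Fin n, if p.1 < p.2 ∧ p = q ∧ q = r then C else 0)
          = if p.1 < p.2 ∧ p = q then C else 0 := by
        intro p q
        by_cases hA : p.1 < p.2 ∧ p = q
        · rw [if_pos hA]
          have hpt : ∀ r : Fin n × Fin n,
              (if p.1 < p.2 ∧ p = q ∧ q = r then C else 0) = if q = r then C else 0 := by
            intro r
            by_cases hqr : q = r
            · rw [if_pos ⟨hA.1, hA.2, hqr⟩, if_pos hqr]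
            · rw [if_neg (fun hc => hqr hc.2.2), if_neg hqr]
          rw [Finset.sum_congr rfl fun r _ => hpt r, Finset.sum_ite_eq]
          simp
        · rw [if_neg hA, Finset.sum_eq_zero]
          intro r _
          rw [if_neg (fun hc => hA ⟨hc.1, hc.2.1⟩)]
      have e2 : ∀ p : Fin n × Fin n,
          (∑ q : Fin n × Fin n, if p.1 < p.2 ∧ p = q then C else 0)
          = if p.1 < p.2 then C else 0 := by
        intro p
        by_cases hA : p.1 < p.2
        · rw [if_pos hA]
          have hpt : ∀ q : Fin n × Fin n,
              (if p.1 < p.2 ∧ p = q then C else 0) = if p = q then C else 0 := by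
            intro q
            by_cases hpq : p = q
            · rw [if_pos ⟨hA, hpq⟩, if_pos hpq]
            · rw [if_neg (fun hc => hpq hc.2), if_neg hpq]
          rw [Finset.sum_congr rfl fun q _ => hpt q, Finset.sum_ite_eq]
          simp
        · rw [if_neg hA, Finset.sum_eq_zero]
          intro q _
          rw [if_neg (fun hc => hA hc.1)]
      rw [Finset.sum_congr rfl fun p _ => (Finset.sum_congr rfl fun q _ => e1 p q).trans (e2 p)]
      exact U17.count_pairs n C
    · -- triangle sum
      have eA : ∀ p q r : Fin n × Fin n, (if U17.Tri p q r then D else 0)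
          = ∑ t : Fin n × Fin n × Fin n,
              if (t.1 ≠ t.2.1 ∧ t.1 ≠ t.2.2 ∧ t.2.1 ≠ t.2.2) ∧
                p = U17.sortPair t.1 t.2.1 ∧ q = U17.sortPair t.2.1 t.2.2 ∧
                  r = U17.sortPair t.1 t.2.2 then D else 0 := by
        intro p q r
        by_cases hT : U17.Tri p q r
        · have hT' := hT
          obtain ⟨a, b, c', hab, hac, hbc, hpe, hqe, hre⟩ := hT'
          rw [if_pos hT, Finset.sum_eq_single ((a, b, c') : Fin n × Fin n × Fin n)]
          · rw [if_pos ⟨⟨hab, hac, hbc⟩, hpe, hqe, hre⟩]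
          · intro t _ htne
            rw [if_neg]
            rintro ⟨⟨h1, h2, h3⟩, h4, h5, h6⟩
            obtain ⟨ea, eb, ec⟩ := U17.tri_unique h1 h2 h3 hab hac hbc
              (h4.symm.trans hpe) (h5.symm.trans hqe) (h6.symm.trans hre)
            exact htne (Prod.ext ea (Prod.ext eb ec))
          · intro habs
            exact absurd (Finset.mem_univ _) habs
        · rw [if_neg hT, Finset.sum_eq_zero]
          intro t _
          rw [if_neg]
          rintro ⟨⟨h1, h2, h3⟩, h4, h5, h6⟩
          exact hT ⟨t.1, t.2.1, t.2.2, h1, h2, h3, h4, h5, h6⟩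
      rw [Finset.sum_congr rfl fun p _ => Finset.sum_congr rfl fun q _ =>
        Finset.sum_congr rfl fun r _ => eA p q r]
      rw [Finset.sum_congr rfl fun p _ => Finset.sum_congr rfl fun q _ =>
        (Finset.sum_comm : (∑ r : Fin n × Fin n, ∑ t : Fin n × Fin n × Fin n, _) = _)]
      rw [Finset.sum_congr rfl fun p _ =>
        (Finset.sum_comm : (∑ q : Fin n × Fin n, ∑ t : Fin n × Fin n × Fin n, _) = _)]
      rw [(Finset.sum_comm : (∑ p : Fin n × Fin n, ∑ t : Fin n × Fin n × Fin n, _) = _)]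
      have eB : ∀ t : Fin n × Fin n × Fin n,
          (∑ p : Fin n × Fin n, ∑ q : Fin n × Fin n, ∑ r : Fin n × Fin n,
            if (t.1 ≠ t.2.1 ∧ t.1 ≠ t.2.2 ∧ t.2.1 ≠ t.2.2) ∧
              p = U17.sortPair t.1 t.2.1 ∧ q = U17.sortPair t.2.1 t.2.2 ∧
                r = U17.sortPair t.1 t.2.2 then D else 0)
          = if t.1 ≠ t.2.1 ∧ t.1 ≠ t.2.2 ∧ t.2.1 ≠ t.2.2 then D else 0 := by
        intro t
        by_cases hd : t.1 ≠ t.2.1 ∧ t.1 ≠ t.2.2 ∧ t.2.1 ≠ t.2.2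
        · rw [if_pos hd]
          have hpt : ∀ p q r : Fin n × Fin n,
              (if (t.1 ≠ t.2.1 ∧ t.1 ≠ t.2.2 ∧ t.2.1 ≠ t.2.2) ∧
                p = U17.sortPair t.1 t.2.1 ∧ q = U17.sortPair t.2.1 t.2.2 ∧
                  r = U17.sortPair t.1 t.2.2 then D else 0)
              = if r = U17.sortPair t.1 t.2.2 then
                  (if q = U17.sortPair t.2.1 t.2.2 then
                    (if p = U17.sortPair t.1 t.2.1 then D else 0) else 0) else 0 := by
            intro p q r
            by_cases u1 : p = U17.sortPair t.1 t.2.1 <;>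
              by_cases u2 : q = U17.sortPair t.2.1 t.2.2 <;>
                by_cases u3 : r = U17.sortPair t.1 t.2.2 <;>
                  simp [u1, u2, u3, hd]
          have s1 : ∀ p q : Fin n × Fin n,
              (∑ r : Fin n × Fin n,
                if (t.1 ≠ t.2.1 ∧ t.1 ≠ t.2.2 ∧ t.2.1 ≠ t.2.2) ∧
                  p = U17.sortPair t.1 t.2.1 ∧ q = U17.sortPair t.2.1 t.2.2 ∧
                    r = U17.sortPair t.1 t.2.2 then D else 0)
              = if q = U17.sortPair t.2.1 t.2.2 then
                  (if p = U17.sortPair t.1 t.2.1 then D else 0) else 0 := by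
            intro p q
            rw [Finset.sum_congr rfl fun r _ => hpt p q r, Finset.sum_ite_eq']
            simp
          have s2 : ∀ p : Fin n × Fin n,
              (∑ q : Fin n × Fin n,
                if q = U17.sortPair t.2.1 t.2.2 then
                  (if p = U17.sortPair t.1 t.2.1 then D else 0) else 0)
              = if p = U17.sortPair t.1 t.2.1 then D else 0 := by
            intro p
            rw [Finset.sum_ite_eq']
            simp
          rw [Finset.sum_congr rfl fun p _ =>
            ((Finset.sum_congr rfl fun q _ => s1 p q).trans (s2 p))]
          rw [Finset.sum_ite_eq']
          simp
        · rw [if_neg hd]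
          refine Finset.sum_eq_zero fun p _ => ?_
          refine Finset.sum_eq_zero fun q _ => ?_
          refine Finset.sum_eq_zero fun r _ => ?_
          rw [if_neg (fun hcond => hd hcond.1)]
      rw [Finset.sum_congr rfl fun t _ => eB t]
      exact U17.count_triples n D
  rw [hsum, hsum2]
  have hn2 : (2:ℝ) ≤ (n:ℝ) := by exact_mod_cast hn
  have h0 : (n:ℝ) ≠ 0 := by intro hz; rw [hz] at hn2; linarith
  have h1 : (n:ℝ) - 1 ≠ 0 := ne_of_gt (by linarith)
  rw [hc]
  field_simp
  ring
end
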